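/- arXiv:1411.1749 — 6 statements merged into one kernel-verified Lean document; each statement's English description precedes it below -/
import Mathlib

section
/- Let n ≥ 3 and let G be a simple graph on n vertices. For t ∈ ℕ set a_t = t·(n−t−1) and b_t = t·(n−2), and let t_max be the largest natural number t with t·(t+1) < n−2 (which exists since n ≥ 3). If f(G) < a_{t_max+1} = (t_max+1)·(n−t_max−2), then there exists a unique natural number t ≤ t_max such that a_t ≤ f(G) ≤ b_t. -/
open Finset

open Classical in
/-- A triple of distinct vertices is *frustrated* if it induces an odd number of edges. -/
noncomputable def frustrated {V : Type*} (G : SimpleGraph V) (u v w : V) : Prop :=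
  Odd ((if G.Adj u v then 1 else 0) + (if G.Adj u w then 1 else 0) +
       (if G.Adj v w then 1 else 0) : ℕ)

/-- The number of frustrated triangles of `G`: the number of 3-element vertex subsets
inducing an odd number of edges. -/
noncomputable def fCount {V : Type*} [Fintype V] [DecidableEq V] (G : SimpleGraph V) : ℕ := by
  classical
  exact ((Finset.univ.powersetCard 3).filter
    (fun s : Finset V => ∃ u v w : V, u ≠ v ∧ u ≠ w ∧ v ≠ w ∧ s = {u, v, w} ∧
      frustrated G u v w)).card

set_option linter.unusedSectionVars false
namespace FT

variable {V : Type*} [Fintype V] [DecidableEq V] [LinearOrder V]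

open Classical in
noncomputable def FS (G : SimpleGraph V) : Finset (Finset V) :=
  ((Finset.univ.powersetCard 3).filter
    (fun s : Finset V => ∃ u v w : V, u ≠ v ∧ u ≠ w ∧ v ≠ w ∧ s = {u, v, w} ∧
      frustrated G u v w))

lemma fCount_eq (G : SimpleGraph V) : fCount G = (FS G).card := rfl

def switch (G : SimpleGraph V) (S : Finset V) : SimpleGraph V where
  Adj a b := G.Adj a b ↔ ((a ∈ S) ↔ (b ∈ S))
  symm := by
    constructor
    intro a b h
    have := G.adj_comm a b
    tauto
  loopless := by
    constructor
    intro a h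
    exact G.loopless.irrefl a (h.mpr Iff.rfl)

lemma switch_adj (G : SimpleGraph V) (S : Finset V) (a b : V) :
    (switch G S).Adj a b ↔ (G.Adj a b ↔ ((a ∈ S) ↔ (b ∈ S))) := Iff.rfl

lemma switch_switch (G : SimpleGraph V) (S T : Finset V) :
    switch (switch G S) T = switch G (symmDiff S T) := by
  ext a b
  simp only [switch_adj, Finset.mem_symmDiff]
  by_cases h1 : a ∈ S <;> by_cases h2 : b ∈ S <;> by_cases h3 : a ∈ T <;> by_cases h4 : b ∈ T <;>
    simp [h1, h2, h3, h4]

lemma frustrated_switch (G : SimpleGraph V) (S : Finset V) (u v w : V) :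
    frustrated (switch G S) u v w ↔ frustrated G u v w := by
  by_cases h1 : G.Adj u v <;> by_cases h2 : G.Adj u w <;> by_cases h3 : G.Adj v w <;>
  by_cases hu : u ∈ S <;> by_cases hv : v ∈ S <;> by_cases hw : w ∈ S <;>
    simp [frustrated, switch_adj, h1, h2, h3, hu, hv, hw, Nat.odd_iff]

lemma FS_switch (G : SimpleGraph V) (S : Finset V) : FS (switch G S) = FS G := by
  classical
  unfold FS
  apply Finset.filter_congr
  intro s _
  constructor
  · rintro ⟨u, v, w, h1, h2, h3, h4, h5⟩
    exact ⟨u, v, w, h1, h2, h3, h4, (frustrated_switch G S u v w).mp h5⟩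
  · rintro ⟨u, v, w, h1, h2, h3, h4, h5⟩
    exact ⟨u, v, w, h1, h2, h3, h4, (frustrated_switch G S u v w).mpr h5⟩

open Classical in
noncomputable def EP (G : SimpleGraph V) : Finset (V × V) :=
  Finset.univ.filter (fun p : V × V => G.Adj p.1 p.2 ∧ p.1 < p.2)

lemma mem_EP {G : SimpleGraph V} {p : V × V} :
    p ∈ EP G ↔ G.Adj p.1 p.2 ∧ p.1 < p.2 := by
  classical
  simp [EP]

/-- ordered pair from an adjacency -/
lemma adj_mem_EP {G : SimpleGraph V} {a b : V} (h : G.Adj a b) :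
    (if a < b then (a, b) else (b, a)) ∈ EP G := by
  rcases lt_or_gt_of_ne (G.ne_of_adj h) with hlt | hgt
  · simp [mem_EP, if_pos hlt, h, hlt]
  · rw [if_neg (not_lt_of_gt hgt)]
    exact mem_EP.mpr ⟨G.adj_symm h, hgt⟩

noncomputable def minE (G : SimpleGraph V) : ℕ :=
  ((Finset.univ : Finset (Finset V)).image (fun S => (EP (switch G S)).card)).min'
    (Finset.Nonempty.image ⟨∅, Finset.mem_univ ∅⟩ _)

lemma exists_minrep (G : SimpleGraph V) :
    ∃ H : SimpleGraph V, FS H = FS G ∧ (EP H).card = minE G ∧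
      ∀ T : Finset V, minE G ≤ (EP (switch H T)).card := by
  classical
  obtain ⟨S₀, -, hS₀⟩ := Finset.mem_image.mp (Finset.min'_mem
    ((Finset.univ : Finset (Finset V)).image (fun S => (EP (switch G S)).card))
    (Finset.Nonempty.image ⟨∅, Finset.mem_univ ∅⟩ _))
  refine ⟨switch G S₀, FS_switch G S₀, hS₀, ?_⟩
  intro T
  rw [switch_switch]
  exact Finset.min'_le _ _ (Finset.mem_image_of_mem _ (Finset.mem_univ _))

lemma mem_FS_intro {G : SimpleGraph V} {u v w : V} (h1 : u ≠ v) (h2 : u ≠ w) (h3 : v ≠ w)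
    (h5 : frustrated G u v w) : ({u, v, w} : Finset V) ∈ FS G := by
  classical
  refine Finset.mem_filter.mpr ⟨Finset.mem_powersetCard_univ.mpr ?_, u, v, w, h1, h2, h3, rfl, h5⟩
  rw [Finset.card_insert_of_notMem (by simp [h1, h2]),
    Finset.card_insert_of_notMem (by simp [h3]), Finset.card_singleton]

lemma mem_FS_elim {G : SimpleGraph V} {s : Finset V} (hs : s ∈ FS G) :
    ∃ u v w : V, u ≠ v ∧ u ≠ w ∧ v ≠ w ∧ s = {u, v, w} ∧ frustrated G u v w := by
  classical
  exact (Finset.mem_filter.mp hs).2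

lemma card_FS_mem {G : SimpleGraph V} {s : Finset V} (hs : s ∈ FS G) : s.card = 3 := by
  classical
  exact Finset.mem_powersetCard_univ.mp (Finset.mem_filter.mp hs).1

lemma frustrated_has_edge {G : SimpleGraph V} {u v w : V} (h : frustrated G u v w) :
    G.Adj u v ∨ G.Adj u w ∨ G.Adj v w := by
  by_contra hc
  push_neg at hc
  obtain ⟨h1, h2, h3⟩ := hc
  simp [frustrated, h1, h2, h3] at h

lemma pc3_pair_card {a b : V} (hab : a ≠ b) :
    ((Finset.univ.powersetCard 3).filter (fun s : Finset V => a ∈ s ∧ b ∈ s)).card ≤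
      Fintype.card V - 2 := by
  classical
  have hsub : ((Finset.univ.powersetCard 3).filter (fun s : Finset V => a ∈ s ∧ b ∈ s)) ⊆
      (Finset.univ \ {a, b}).image (fun w => insert a (insert b ({w} : Finset V))) := by
    intro s hs
    obtain ⟨hs1, ha, hb⟩ := Finset.mem_filter.mp hs
    have hcard : s.card = 3 := Finset.mem_powersetCard_univ.mp hs1
    have h2 : ({a, b} : Finset V) ⊆ s := by
      intro x hx
      rcases Finset.mem_insert.mp hx with rfl | hx
      · exact ha
      · rwa [Finset.mem_singleton.mp hx]
    have hcd : (s \ {a, b}).card = 1 := by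
      rw [Finset.card_sdiff_of_subset h2, hcard, Finset.card_insert_of_notMem (by simp [hab]),
        Finset.card_singleton]
    obtain ⟨w, hw⟩ := Finset.card_eq_one.mp hcd
    have hwmem : w ∈ s \ ({a, b} : Finset V) := hw ▸ Finset.mem_singleton_self w
    have hwne : w ∉ ({a, b} : Finset V) := (Finset.mem_sdiff.mp hwmem).2
    refine Finset.mem_image.mpr ⟨w, Finset.mem_sdiff.mpr ⟨Finset.mem_univ _, hwne⟩, ?_⟩
    apply Finset.eq_of_subset_of_card_le
    · intro x hx
      rcases Finset.mem_insert.mp hx with rfl | hx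
      · exact ha
      rcases Finset.mem_insert.mp hx with rfl | hx
      · exact hb
      · rw [Finset.mem_singleton.mp hx]
        exact (Finset.mem_sdiff.mp hwmem).1
    · have hwa : w ≠ a := fun h => hwne (by simp [h])
      have hwb : w ≠ b := fun h => hwne (by simp [h])
      rw [hcard, Finset.card_insert_of_notMem (by simp [hab, hwa.symm]),
        Finset.card_insert_of_notMem (by simp [hwb.symm]), Finset.card_singleton]
  calc ((Finset.univ.powersetCard 3).filter (fun s : Finset V => a ∈ s ∧ b ∈ s)).card
      ≤ ((Finset.univ \ {a, b}).image (fun w => insert a (insert b ({w} : Finset V)))).card :=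
        Finset.card_le_card hsub
    _ ≤ (Finset.univ \ ({a, b} : Finset V)).card := Finset.card_image_le
    _ = Fintype.card V - 2 := by
        rw [Finset.card_sdiff_of_subset (Finset.subset_univ _), Finset.card_univ,
          Finset.card_insert_of_notMem (by simp [hab]), Finset.card_singleton]

lemma upper_bound (G : SimpleGraph V) :
    (FS G).card ≤ (EP G).card * (Fintype.card V - 2) := by
  classical
  have hsub : FS G ⊆ (EP G).biUnion (fun p =>
      (Finset.univ.powersetCard 3).filter (fun s : Finset V => p.1 ∈ s ∧ p.2 ∈ s)) := by
    intro s hs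
    obtain ⟨u, v, w, h1, h2, h3, rfl, h5⟩ := mem_FS_elim hs
    have hmem : ∀ a b : V, G.Adj a b → a ∈ ({u, v, w} : Finset V) → b ∈ ({u, v, w} : Finset V) →
        ({u, v, w} : Finset V) ∈ (EP G).biUnion (fun p =>
          (Finset.univ.powersetCard 3).filter (fun s : Finset V => p.1 ∈ s ∧ p.2 ∈ s)) := by
      intro a b hab ham hbm
      refine Finset.mem_biUnion.mpr ⟨if a < b then (a, b) else (b, a), adj_mem_EP hab, ?_⟩
      refine Finset.mem_filter.mpr ⟨(Finset.mem_filter.mp hs).1, ?_⟩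
      split_ifs <;> exact ⟨by assumption, by assumption⟩
    rcases frustrated_has_edge h5 with h | h | h
    · exact hmem u v h (by simp) (by simp)
    · exact hmem u w h (by simp) (by simp)
    · exact hmem v w h (by simp) (by simp)
  apply le_trans (Finset.card_le_card hsub)
  apply le_trans (Finset.card_biUnion_le)
  apply le_trans (Finset.sum_le_sum (fun p hp => pc3_pair_card (G.ne_of_adj (mem_EP.mp hp).1)))
  rw [Finset.sum_const, smul_eq_mul]

open Classical in
noncomputable def nbr (G : SimpleGraph V) (u : V) : Finset V :=
  Finset.univ.filter (fun x => G.Adj u x)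

lemma mem_nbr {G : SimpleGraph V} {u x : V} : x ∈ nbr G u ↔ G.Adj u x := by
  classical
  simp [nbr]

noncomputable def opair (a b : V) : V × V := if a < b then (a, b) else (b, a)

lemma opair_mem_EP {G : SimpleGraph V} {a b : V} (h : G.Adj a b) : opair a b ∈ EP G :=
  adj_mem_EP h

lemma opair_eq {a b c d : V} (hab : a ≠ b) (h : opair a b = opair c d) :
    (a = c ∧ b = d) ∨ (a = d ∧ b = c) := by
  unfold opair at h
  split_ifs at h with h1 h2 h2 <;>
    simp only [Prod.mk.injEq] at h <;> tauto

lemma union_nbr_card {G : SimpleGraph V} {u v : V} (huv : G.Adj u v) :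
    (nbr G u ∪ nbr G v).card ≤ (EP G).card + 1 := by
  classical
  have hne : u ≠ v := G.ne_of_adj huv
  have hadjv : ∀ z ∈ (nbr G u ∪ nbr G v).erase v, ¬ G.Adj u z → G.Adj v z := by
    intro z hz hnz
    rcases Finset.mem_union.mp (Finset.mem_of_mem_erase hz) with h | h
    · exact absurd (mem_nbr.mp h) hnz
    · exact mem_nbr.mp h
  have hinj : Set.InjOn (fun x => if G.Adj u x then opair u x else opair v x)
      ((nbr G u ∪ nbr G v).erase v : Finset V) := by
    intro x hx' y hy' hxy
    have hx : x ∈ (nbr G u ∪ nbr G v).erase v := hx'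
    have hy : y ∈ (nbr G u ∪ nbr G v).erase v := hy'
    simp only at hxy
    have hxv : x ≠ v := Finset.ne_of_mem_erase hx
    have hyv : y ≠ v := Finset.ne_of_mem_erase hy
    by_cases h1 : G.Adj u x <;> by_cases h2 : G.Adj u y
    · rw [if_pos h1, if_pos h2] at hxy
      rcases opair_eq (G.ne_of_adj h1) hxy with ⟨-, h⟩ | ⟨h, h'⟩
      · exact h
      · exact h'.trans h
    · rw [if_pos h1, if_neg h2] at hxy
      rcases opair_eq (G.ne_of_adj h1) hxy with ⟨h, h'⟩ | ⟨h, h'⟩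
      · exact absurd h hne
      · exact absurd h' hxv
    · rw [if_neg h1, if_pos h2] at hxy
      rcases opair_eq (G.ne_of_adj (hadjv x hx h1)) hxy with ⟨h, h'⟩ | ⟨h, h'⟩
      · exact absurd h hne.symm
      · exact absurd h.symm hyv
    · rw [if_neg h1, if_neg h2] at hxy
      rcases opair_eq (G.ne_of_adj (hadjv x hx h1)) hxy with ⟨-, h⟩ | ⟨h, h'⟩
      · exact h
      · exact absurd h.symm hyv
  have hmaps : ∀ x ∈ ((nbr G u ∪ nbr G v).erase v : Finset V),
      (if G.Adj u x then opair u x else opair v x) ∈ EP G := by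
    intro x hx
    by_cases h1 : G.Adj u x
    · rw [if_pos h1]; exact opair_mem_EP h1
    · rw [if_neg h1]
      have : G.Adj v x := by
        rcases Finset.mem_union.mp (Finset.mem_of_mem_erase hx) with h | h
        · exact absurd (mem_nbr.mp h) h1
        · exact mem_nbr.mp h
      exact opair_mem_EP this
  have hcard := Finset.card_le_card_of_injOn _ hmaps hinj
  have hv : v ∈ nbr G u ∪ nbr G v := Finset.mem_union_left _ (mem_nbr.mpr huv)
  have := Finset.card_erase_of_mem hv
  omega

lemma lower_bound (G : SimpleGraph V) :
    (EP G).card * (Fintype.card V - (EP G).card - 1) ≤ (FS G).card := by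
  classical
  set t := (EP G).card with ht
  set A : V × V → Finset (Finset V) := fun p =>
    (Finset.univ \ (nbr G p.1 ∪ nbr G p.2)).image
      (fun w => insert p.1 (insert p.2 ({w} : Finset V))) with hA
  have hkey : ∀ p ∈ EP G, ∀ s ∈ A p,
      ∃ w : V, s = {p.1, p.2, w} ∧ w ∉ nbr G p.1 ∪ nbr G p.2 := by
    intro p hp s hs
    obtain ⟨w, hw, rfl⟩ := Finset.mem_image.mp hs
    exact ⟨w, rfl, (Finset.mem_sdiff.mp hw).2⟩
  have hsub : ∀ p ∈ EP G, A p ⊆ FS G := by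
    intro p hp s hs
    obtain ⟨w, rfl, hw⟩ := hkey p hp s hs
    obtain ⟨hadj, hlt⟩ := mem_EP.mp hp
    have h1 : ¬ G.Adj p.1 w := fun h => hw (Finset.mem_union_left _ (mem_nbr.mpr h))
    have h2 : ¬ G.Adj p.2 w := fun h => hw (Finset.mem_union_right _ (mem_nbr.mpr h))
    have hw1 : p.1 ≠ w := fun h => h2 (h ▸ G.adj_symm hadj)
    have hw2 : p.2 ≠ w := fun h => h1 (h ▸ hadj)
    exact mem_FS_intro (G.ne_of_adj hadj) hw1 hw2
      (by simp [frustrated, hadj, h1, h2])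
  have hdisj : ∀ p ∈ EP G, ∀ q ∈ EP G, p ≠ q → Disjoint (A p) (A q) := by
    intro p hp q hq hpq
    rw [Finset.disjoint_left]
    intro s hsp hsq
    obtain ⟨w, hsw, hw⟩ := hkey p hp s hsp
    obtain ⟨w', hsw', hw'⟩ := hkey q hq s hsq
    obtain ⟨hadjp, hltp⟩ := mem_EP.mp hp
    obtain ⟨hadjq, hltq⟩ := mem_EP.mp hq
    have h1 : ¬ G.Adj p.1 w := fun h => hw (Finset.mem_union_left _ (mem_nbr.mpr h))
    have h2 : ¬ G.Adj p.2 w := fun h => hw (Finset.mem_union_right _ (mem_nbr.mpr h))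
    have hq1 : q.1 ∈ ({p.1, p.2, w} : Finset V) := by
      rw [← hsw, hsw']; simp
    have hq2 : q.2 ∈ ({p.1, p.2, w} : Finset V) := by
      rw [← hsw, hsw']; simp
    simp only [Finset.mem_insert, Finset.mem_singleton] at hq1 hq2
    apply hpq
    have hqne : q.1 ≠ q.2 := G.ne_of_adj hadjq
    rcases hq1 with e1 | e1 | e1 <;> rcases hq2 with e2 | e2 | e2
    · exact absurd (e1.trans e2.symm) hqne
    · exact Prod.ext e1.symm e2.symm
    · exact absurd (by rw [← e1, ← e2]; exact hadjq) h1
    · have hlt2 : q.2 < q.1 := by rw [e1, e2]; exact hltp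
      exact absurd (hltq.trans hlt2) (lt_irrefl _)
    · exact absurd (e1.trans e2.symm) hqne
    · exact absurd (by rw [← e1, ← e2]; exact hadjq) h2
    · exact absurd (by rw [← e1, ← e2]; exact G.adj_symm hadjq) h1
    · exact absurd (by rw [← e1, ← e2]; exact G.adj_symm hadjq) h2
    · exact absurd (e1.trans e2.symm) hqne
  have hAcard : ∀ p ∈ EP G, Fintype.card V - t - 1 ≤ (A p).card := by
    intro p hp
    obtain ⟨hadj, hlt⟩ := mem_EP.mp hp
    have hinj : Set.InjOn (fun w => insert p.1 (insert p.2 ({w} : Finset V)))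
        ((Finset.univ \ (nbr G p.1 ∪ nbr G p.2)) : Finset V) := by
      intro x hx' y hy' hxy
      have hx : x ∈ Finset.univ \ (nbr G p.1 ∪ nbr G p.2) := hx'
      have hy : y ∈ Finset.univ \ (nbr G p.1 ∪ nbr G p.2) := hy'
      have hxy' : ({p.1, p.2, x} : Finset V) = {p.1, p.2, y} := hxy
      have hx2 := (Finset.mem_sdiff.mp hx).2
      have hx1 : x ≠ p.1 := by
        intro h
        exact hx2 (by rw [h]; exact Finset.mem_union_right _ (mem_nbr.mpr (G.adj_symm hadj)))
      have hxp2 : x ≠ p.2 := by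
        intro h
        exact hx2 (by rw [h]; exact Finset.mem_union_left _ (mem_nbr.mpr hadj))
      have hmx : x ∈ ({p.1, p.2, y} : Finset V) := by rw [← hxy']; simp
      simp only [Finset.mem_insert, Finset.mem_singleton] at hmx
      rcases hmx with h | h | h
      · exact absurd h hx1
      · exact absurd h hxp2
      · exact h
    have : (Finset.univ \ (nbr G p.1 ∪ nbr G p.2)).card = (A p).card :=
      (Finset.card_image_of_injOn hinj).symm
    rw [← this, Finset.card_sdiff_of_subset (Finset.subset_univ _), Finset.card_univ]
    have := union_nbr_card hadj
    omega
  calc t * (Fintype.card V - t - 1) = ∑ _p ∈ EP G, (Fintype.card V - t - 1) := by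
        rw [Finset.sum_const, smul_eq_mul]
    _ ≤ ∑ p ∈ EP G, (A p).card := Finset.sum_le_sum hAcard
    _ = ((EP G).biUnion A).card := (Finset.card_biUnion hdisj).symm
    _ ≤ (FS G).card := Finset.card_le_card (Finset.biUnion_subset.mpr hsub)

open Classical in
noncomputable def cw (G : SimpleGraph V) (w : V) : ℕ :=
  ((FS G).filter (fun s => w ∈ s)).card

lemma sum_cw (G : SimpleGraph V) : ∑ w : V, cw G w = 3 * (FS G).card := by
  classical
  have h1 : ∀ w : V, cw G w = ∑ s ∈ FS G, (if w ∈ s then 1 else 0) := by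
    intro w
    rw [cw, Finset.card_filter]
  calc ∑ w : V, cw G w = ∑ w : V, ∑ s ∈ FS G, (if w ∈ s then 1 else 0) := by
        exact Finset.sum_congr rfl (fun w _ => h1 w)
    _ = ∑ s ∈ FS G, ∑ w : V, (if w ∈ s then 1 else 0) := Finset.sum_comm
    _ = ∑ s ∈ FS G, s.card := by
        apply Finset.sum_congr rfl
        intro s hs
        rw [← Finset.card_filter]
        congr 1
        ext x
        simp
    _ = ∑ _s ∈ FS G, 3 := Finset.sum_congr rfl (fun s hs => card_FS_mem hs)
    _ = 3 * (FS G).card := by rw [Finset.sum_const, smul_eq_mul, mul_comm]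

lemma switch_nbr_isolated (G : SimpleGraph V) (w x : V) :
    ¬ (switch G (nbr G w)).Adj w x := by
  intro h
  rw [switch_adj] at h
  have h1 : w ∈ nbr G w ↔ False := by simp [mem_nbr]
  have h2 : x ∈ nbr G w ↔ G.Adj w x := mem_nbr
  tauto

lemma cw_ge (G : SimpleGraph V) (w : V) :
    (EP (switch G (nbr G w))).card ≤ cw G w := by
  classical
  set H := switch G (nbr G w) with hH
  have hiso : ∀ x, ¬ H.Adj w x := switch_nbr_isolated G w
  have hmaps : ∀ p ∈ EP H, insert w ({p.1, p.2} : Finset V) ∈ (FS G).filter (fun s => w ∈ s) := by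
    intro p hp
    obtain ⟨hadj, hlt⟩ := mem_EP.mp hp
    have hne : p.1 ≠ p.2 := ne_of_lt hlt
    have hw1 : w ≠ p.1 := by
      intro h
      exact hiso p.2 (h ▸ hadj)
    have hw2 : w ≠ p.2 := by
      intro h
      exact hiso p.1 (h ▸ H.adj_symm hadj)
    have hadj' : G.Adj p.1 p.2 ↔ (G.Adj w p.1 ↔ G.Adj w p.2) := by
      have := (switch_adj G (nbr G w) p.1 p.2).mp hadj
      have e1 : p.1 ∈ nbr G w ↔ G.Adj w p.1 := mem_nbr
      have e2 : p.2 ∈ nbr G w ↔ G.Adj w p.2 := mem_nbr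
      tauto
    have hfr : frustrated G w p.1 p.2 := by
      by_cases a1 : G.Adj w p.1 <;> by_cases a2 : G.Adj w p.2 <;>
        by_cases a3 : G.Adj p.1 p.2 <;>
        simp [frustrated, a1, a2, a3, Nat.odd_iff] at hadj' ⊢ <;> tauto
    refine Finset.mem_filter.mpr ⟨mem_FS_intro hw1 hw2 hne hfr, by simp⟩
  have hinj : Set.InjOn (fun p : V × V => insert w ({p.1, p.2} : Finset V))
      ((EP H : Finset (V × V)) : Set (V × V)) := by
    intro p hp' q hq' hpq
    have hp : p ∈ EP H := hp'
    have hq : q ∈ EP H := hq'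
    obtain ⟨hadjp, hltp⟩ := mem_EP.mp hp
    obtain ⟨hadjq, hltq⟩ := mem_EP.mp hq
    have hpq' : (insert w ({p.1, p.2} : Finset V)) = insert w ({q.1, q.2} : Finset V) := hpq
    have hw1 : w ≠ p.1 := fun h => hiso p.2 (h ▸ hadjp)
    have hw2 : w ≠ p.2 := fun h => hiso p.1 (h ▸ H.adj_symm hadjp)
    have hw1' : w ≠ q.1 := fun h => hiso q.2 (h ▸ hadjq)
    have hw2' : w ≠ q.2 := fun h => hiso q.1 (h ▸ H.adj_symm hadjq)
    have hm1 : p.1 ∈ insert w ({q.1, q.2} : Finset V) := by rw [← hpq']; simp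
    have hm2 : p.2 ∈ insert w ({q.1, q.2} : Finset V) := by rw [← hpq']; simp
    simp only [Finset.mem_insert, Finset.mem_singleton] at hm1 hm2
    rcases hm1 with h1 | h1 | h1
    · exact absurd h1.symm hw1
    · rcases hm2 with h2 | h2 | h2
      · exact absurd h2.symm hw2
      · exact absurd (h1 ▸ h2 ▸ hltp) (lt_irrefl _)
      · exact Prod.ext h1 h2
    · rcases hm2 with h2 | h2 | h2
      · exact absurd h2.symm hw2
      · have : q.1 < q.2 := hltq
        have : p.2 < p.1 := by rw [h1, h2]; exact hltq
        exact absurd (hltp.trans this) (lt_irrefl _)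
      · exact absurd (h1.trans h2.symm) (ne_of_lt hltp)
  calc (EP H).card = ((EP H).image (fun p : V × V => insert w ({p.1, p.2} : Finset V))).card :=
        (Finset.card_image_of_injOn hinj).symm
    _ ≤ ((FS G).filter (fun s => w ∈ s)).card := by
        apply Finset.card_le_card
        intro s hs
        obtain ⟨p, hp, rfl⟩ := Finset.mem_image.mp hs
        exact hmaps p hp

lemma gap {n a b : ℕ} (hab : a < b) (hb : b * (b + 1) < n - 2) :
    a * (n - 2) < b * (n - b - 1) := by
  set x := b * (b + 1) with hx
  have hxb : b + 1 ≤ x := by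
    rw [hx]
    nlinarith
  clear_value x
  have h3 : 3 ≤ n := by omega
  have h4 : x + 2 < n := by omega
  have hbn' : b + 1 ≤ n := by omega
  rw [show n - b - 1 = n - (b+1) from by omega]
  zify [show 2 ≤ n by omega, hbn']
  have ha : (a:ℤ) ≤ (b:ℤ) - 1 := by omega
  have hz : (b:ℤ) * ((b:ℤ) + 1) + 3 ≤ (n:ℤ) := by
    have : x + 3 ≤ n := by omega
    calc (b:ℤ) * ((b:ℤ) + 1) + 3 = ((b * (b+1) : ℕ) : ℤ) + 3 := by push_cast; ring
      _ = ((x:ℕ) : ℤ) + 3 := by rw [← hx]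
      _ ≤ (n:ℤ) := by exact_mod_cast this
  nlinarith [mul_nonneg (show (0:ℤ) ≤ (b:ℤ) - 1 - a by linarith)
    (show (0:ℤ) ≤ (n:ℤ) - 2 by omega)]

lemma caseB {n tmax t : ℕ} (h3 : 3 ≤ n) (hb : tmax < t) (htn : t + tmax + 2 ≤ n) :
    (tmax + 1) * (n - tmax - 2) ≤ t * (n - t - 1) := by
  have h1 : tmax + 2 ≤ n := by omega
  have h2 : t + 1 ≤ n := by omega
  rw [show n - tmax - 2 = n - (tmax+2) from by omega, show n - t - 1 = n - (t+1) from by omega]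
  zify [h1, h2]
  nlinarith [mul_nonneg (show (0:ℤ) ≤ (t:ℤ) - ((tmax:ℤ) + 1) by omega)
    (show (0:ℤ) ≤ (n:ℤ) - 1 - (t:ℤ) - ((tmax:ℤ) + 1) by omega)]

lemma caseC {n k : ℕ} (hk : 1 ≤ k) (hkn : k * k - k + 3 ≤ n) :
    3 * (k * (n - k - 1)) ≤ n * (n - k) := by
  have hy : k ≤ k * k := Nat.le_mul_of_pos_left k (by omega)
  zify [hy] at hkn
  have hkn' : k + 1 ≤ n := by
    zify
    nlinarith [sq_nonneg ((k:ℤ) - 1)]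
  rw [show n - k - 1 = n - (k+1) from by omega]
  zify [show k + 1 ≤ n from hkn', show k ≤ n by omega]
  have hk1 : (1:ℤ) ≤ (k:ℤ) := by omega
  have ha : (0:ℤ) ≤ (n:ℤ) - 2*k - ((k:ℤ)*k - 3*k + 3) := by linarith
  have hq : (0:ℤ) ≤ (k:ℤ)*k - 3*k + 3 := by nlinarith [sq_nonneg ((k:ℤ) - 2)]
  have hb' : (0:ℤ) ≤ (n:ℤ) - 2*k + ((k:ℤ)*k - 3*k + 3) := by linarith
  have hm2 : (0:ℤ) ≤ (k:ℤ)*k - 3*k + 2 := by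
    rcases le_or_gt k 1 with h | h
    · have hk1' : k = 1 := le_antisymm h hk
      subst hk1'; norm_num
    · have h2 : (2:ℤ) ≤ (k:ℤ) := by omega
      nlinarith [mul_nonneg (show (0:ℤ) ≤ (k:ℤ) - 1 by linarith) (show (0:ℤ) ≤ (k:ℤ) - 2 by linarith)]
  nlinarith [mul_nonneg ha hb', mul_nonneg hm2 (show (0:ℤ) ≤ (k:ℤ)*(k:ℤ) - 3*(k:ℤ) + 3 from hq)]

end FT

theorem frustrated_triangles_interval_characterisation
    (n : ℕ) (hn : 3 ≤ n) (G : SimpleGraph (Fin n)) (tmax : ℕ)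
    (htm : tmax * (tmax + 1) < n - 2)
    (htmax : ∀ t : ℕ, t * (t + 1) < n - 2 → t ≤ tmax)
    (hf : fCount G < (tmax + 1) * (n - tmax - 2)) :
    ∃! t : ℕ, t ≤ tmax ∧ t * (n - t - 1) ≤ fCount G ∧ fCount G ≤ t * (n - 2) := by
  classical
  obtain ⟨H, hFS, hcard, hmin⟩ := FT.exists_minrep G
  set t := FT.minE G with htdef
  have hN : Fintype.card (Fin n) = n := Fintype.card_fin n
  have hfc : fCount G = (FT.FS H).card := by rw [FT.fCount_eq, ← hFS]
  have hub : fCount G ≤ t * (n - 2) := by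
    have h := FT.upper_bound H
    rw [hcard, hN] at h
    rw [hfc]; exact le_trans (le_of_eq rfl) (le_trans (le_refl _) h)
  have hlb : t * (n - t - 1) ≤ fCount G := by
    have h := FT.lower_bound H
    rw [hcard, hN] at h
    rw [hfc]; exact h
  have h3f : n * t ≤ 3 * fCount G := by
    have h1 : ∀ w : Fin n, t ≤ FT.cw H w := fun w =>
      le_trans (hmin (FT.nbr H w)) (FT.cw_ge H w)
    calc n * t = ∑ _w : Fin n, t := by
          rw [Finset.sum_const, Finset.card_univ, hN, smul_eq_mul]
      _ ≤ ∑ w : Fin n, FT.cw H w := Finset.sum_le_sum (fun w _ => h1 w)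
      _ = 3 * (FT.FS H).card := FT.sum_cw H
      _ = 3 * fCount G := by rw [hfc]
  rcases le_or_gt t tmax with hcase | hcase
  · refine ⟨t, ⟨hcase, hlb, hub⟩, ?_⟩
    rintro s ⟨hs1, hs2, hs3⟩
    by_contra hne
    rcases lt_or_gt_of_ne hne with h | h
    · have hgap := FT.gap h (lt_of_le_of_lt
        (Nat.mul_le_mul hcase (by omega : t + 1 ≤ tmax + 1)) htm)
      exact absurd (lt_of_le_of_lt hs3 hgap) (not_lt.mpr hlb)
    · have hgap := FT.gap h (lt_of_le_of_lt
        (Nat.mul_le_mul hs1 (by omega : s + 1 ≤ tmax + 1)) htm)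
      exact absurd (lt_of_le_of_lt hub hgap) (not_lt.mpr hs2)
  · exfalso
    set k := tmax + 1 with hk
    have hA : n - tmax - 2 = n - k - 1 := by omega
    rcases le_or_gt (t + tmax + 2) n with hB | hC
    · have hcb := FT.caseB hn hcase hB
      exact absurd (le_trans hcb hlb) (not_le.mpr hf)
    · have hkk : k * k - k + 3 ≤ n := by
        have he : k * k = k + tmax * (tmax + 1) := by rw [hk]; ring
        generalize hM : tmax * (tmax + 1) = M at htm he
        generalize hK : k * k = K at he
        omega
      have ht' : n - k ≤ t := by omega
      have hcc := FT.caseC (show 1 ≤ k by omega) hkk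
      have h5 : n * (n - k) ≤ n * t := Nat.mul_le_mul_left n ht'
      have h6 : 3 * (k * (n - k - 1)) ≤ 3 * fCount G := le_trans hcc (le_trans h5 h3f)
      have h7 : k * (n - k - 1) ≤ fCount G := Nat.le_of_mul_le_mul_left h6 (by norm_num)
      exact absurd h7 (not_le.mpr hf)
end

section
/- Let n ≥ 3, let G be a simple graph on n vertices, and let t ≤ t_max, where t_max is the largest natural number with t_max·(t_max+1) < n−2. Then t·(n−t−1) ≤ f(G) ≤ t·(n−2) if and only if there exists a complete bipartite graph K on the vertex set of G such that the symmetric difference of the edge sets of G and K has exactly t elements (i.e., G can be obtained from a complete bipartite graph by flipping exactly t pairs of vertices). -/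
open Finset

/-- `K` is a complete bipartite graph: the vertex set splits into two (possibly empty)
parts such that the edges are exactly the pairs with one endpoint in each part. -/
def IsCompleteBipartite {V : Type*} (K : SimpleGraph V) : Prop :=
  ∃ X : Set V, ∀ u v : V, K.Adj u v ↔ ((u ∈ X ∧ v ∉ X) ∨ (v ∈ X ∧ u ∉ X))

set_option maxHeartbeats 1000000

open Classical

namespace Frust

variable {V : Type*}

/-! ### basic frustration lemmas -/

lemma sdadj (G K : SimpleGraph V) (a b : V) :
    (symmDiff G K).Adj a b ↔ ((G.Adj a b ∧ ¬K.Adj a b) ∨ (K.Adj a b ∧ ¬G.Adj a b)) := by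
  rw [symmDiff_def]; simp [SimpleGraph.sup_adj, SimpleGraph.sdiff_adj]

lemma odd3_swap1 (a b c : ℕ) : Odd (a+b+c) ↔ Odd (a+c+b) := by rw [add_right_comm]
lemma odd3_swap2 (a b c : ℕ) : Odd (a+b+c) ↔ Odd (b+a+c) := by rw [add_comm a b]

lemma frus_swap12 (G : SimpleGraph V) (u v w : V) :
    frustrated G u v w ↔ frustrated G v u w := by
  unfold frustrated
  rw [G.adj_comm v u]
  exact odd3_swap1 _ _ _

lemma frus_swap23 (G : SimpleGraph V) (u v w : V) :
    frustrated G u v w ↔ frustrated G u w v := by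
  unfold frustrated
  rw [G.adj_comm w v]
  exact odd3_swap2 _ _ _

lemma frus_rot (G : SimpleGraph V) (u v w : V) :
    frustrated G u v w ↔ frustrated G v w u :=
  (frus_swap12 G u v w).trans (frus_swap23 G v u w)

lemma frus_congr [DecidableEq V] {G : SimpleGraph V} {u v w a b c : V}
    (h4 : a ≠ b) (h5 : a ≠ c) (h6 : b ≠ c)
    (hs : ({u,v,w} : Finset V) = {a,b,c}) (hf : frustrated G u v w) :
    frustrated G a b c := by
  have ha : a ∈ ({u,v,w} : Finset V) := by rw [hs]; simp
  have hb : b ∈ ({u,v,w} : Finset V) := by rw [hs]; simp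
  have hc : c ∈ ({u,v,w} : Finset V) := by rw [hs]; simp
  simp only [Finset.mem_insert, Finset.mem_singleton] at ha hb hc
  rcases ha with rfl|rfl|rfl <;> rcases hb with rfl|rfl|rfl <;> rcases hc with rfl|rfl|rfl <;>
    first
      | exact absurd rfl h4
      | exact absurd rfl h5
      | exact absurd rfl h6
      | exact hf
      | exact (frus_swap23 G a b c).mpr hf
      | exact (frus_swap12 G a b c).mpr hf
      | exact (frus_rot G a b c).mpr hf
      | exact (frus_rot G a b c).mpr ((frus_rot G b c a).mpr hf)
      | exact (frus_swap12 G a b c).mpr ((frus_rot G c b a).mp hf)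

lemma frus_transfer {G z K : SimpleGraph V} {X : Set V}
    (hK : ∀ u v, K.Adj u v ↔ ((u ∈ X ∧ v ∉ X) ∨ (v ∈ X ∧ u ∉ X)))
    (hz : ∀ a b, z.Adj a b ↔ ((G.Adj a b ∧ ¬K.Adj a b) ∨ (K.Adj a b ∧ ¬G.Adj a b)))
    (u v w : V) : frustrated G u v w ↔ frustrated z u v w := by
  unfold frustrated
  rw [hz u v, hz u w, hz v w, hK u v, hK u w, hK v w]
  by_cases h1 : u ∈ X <;> by_cases h2 : v ∈ X <;> by_cases h3 : w ∈ X <;>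
  by_cases g1 : G.Adj u v <;> by_cases g2 : G.Adj u w <;> by_cases g3 : G.Adj v w <;>
  simp [h1, h2, h3, g1, g2, g3, Nat.odd_iff]

lemma frus_of_adj {z : SimpleGraph V} {a b w : V} (h1 : z.Adj a b)
    (h2 : ¬ z.Adj a w) (h3 : ¬ z.Adj b w) : frustrated z a b w := by
  unfold frustrated
  simpa [h1, h2, h3] using odd_one

lemma frus_of_adj3 {z : SimpleGraph V} {u a b : V} (h1 : ¬ z.Adj u a)
    (h2 : ¬ z.Adj u b) (h3 : z.Adj a b) : frustrated z u a b := by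
  unfold frustrated
  simpa [h1, h2, h3] using odd_one

lemma frus_exists {z : SimpleGraph V} {u v w : V} (h : frustrated z u v w) :
    z.Adj u v ∨ z.Adj u w ∨ z.Adj v w := by
  by_contra hc
  push_neg at hc
  obtain ⟨c1, c2, c3⟩ := hc
  unfold frustrated at h
  simp [c1, c2, c3] at h

lemma frus_last {z : SimpleGraph V} {u v w : V} (h : frustrated z u v w)
    (h1 : ¬ z.Adj u v) (h2 : ¬ z.Adj u w) : z.Adj v w := by
  by_contra h3
  unfold frustrated at h
  simp [h1, h2, h3] at h

end Frust

namespace Frust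

variable {V : Type*} [Fintype V] [DecidableEq V]

/-! ### edge pair sets -/

noncomputable def E2 (z : SimpleGraph V) : Finset (Finset V) :=
  (univ.powersetCard 2).filter (fun p => ∀ a ∈ p, ∀ b ∈ p, a ≠ b → z.Adj a b)

lemma mem_E2 {z : SimpleGraph V} {p : Finset V} :
    p ∈ E2 z ↔ ∃ a b, a ≠ b ∧ z.Adj a b ∧ p = {a,b} := by
  constructor
  · intro hp
    rw [E2, mem_filter, mem_powersetCard] at hp
    obtain ⟨⟨-, hcard⟩, hadj⟩ := hp
    obtain ⟨a, b, hab, rfl⟩ := Finset.card_eq_two.1 hcard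
    exact ⟨a, b, hab, hadj a (by simp) b (by simp) hab, rfl⟩
  · rintro ⟨a, b, hab, hadj, rfl⟩
    rw [E2, mem_filter, mem_powersetCard]
    refine ⟨⟨subset_univ _, Finset.card_pair hab⟩, ?_⟩
    intro x hx y hy hxy
    simp only [Finset.mem_insert, Finset.mem_singleton] at hx hy
    rcases hx with rfl|rfl <;> rcases hy with rfl|rfl
    · exact absurd rfl hxy
    · exact hadj
    · exact hadj.symm
    · exact absurd rfl hxy

lemma pair_eq {a b c d : V} (hab : a ≠ b) (h : ({a,b} : Finset V) = ({c,d} : Finset V)) :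
    (a = c ∧ b = d) ∨ (a = d ∧ b = c) := by
  have ha : a ∈ ({c,d} : Finset V) := by rw [← h]; simp
  have hb : b ∈ ({c,d} : Finset V) := by rw [← h]; simp
  simp only [Finset.mem_insert, Finset.mem_singleton] at ha hb
  rcases ha with rfl|rfl <;> rcases hb with rfl|rfl
  · exact absurd rfl hab
  · exact Or.inl ⟨rfl, rfl⟩
  · exact Or.inr ⟨rfl, rfl⟩
  · exact absurd rfl hab

/-! ### frustrated triples as a finset -/

noncomputable def FinT (G : SimpleGraph V) : Finset (Finset V) :=
  (univ.powersetCard 3).filter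
    (fun s => ∃ u v w : V, u ≠ v ∧ u ≠ w ∧ v ≠ w ∧ s = {u,v,w} ∧ frustrated G u v w)

lemma fCount_eq (G : SimpleGraph V) : fCount G = (FinT G).card := by
  unfold fCount FinT
  congr!

lemma mem_FinT {G : SimpleGraph V} {s : Finset V} :
    s ∈ FinT G ↔ ∃ u v w : V, u ≠ v ∧ u ≠ w ∧ v ≠ w ∧ s = {u,v,w} ∧ frustrated G u v w := by
  rw [FinT, mem_filter, mem_powersetCard]
  constructor
  · rintro ⟨-, h⟩; exact h
  · rintro ⟨u,v,w,h1,h2,h3,rfl,hf⟩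
    exact ⟨⟨subset_univ _, Finset.card_eq_three.2 ⟨u,v,w,h1,h2,h3,rfl⟩⟩,
      u,v,w,h1,h2,h3,rfl,hf⟩

lemma FinT_frus {G : SimpleGraph V} {s : Finset V} (hs : s ∈ FinT G) {a b c : V}
    (h4 : a ≠ b) (h5 : a ≠ c) (h6 : b ≠ c) (hsa : s = {a,b,c}) :
    frustrated G a b c := by
  obtain ⟨u,v,w,h1,h2,h3,rfl,hf⟩ := mem_FinT.1 hs
  exact frus_congr h4 h5 h6 hsa hf

end Frust

namespace Frust

variable {V : Type*} [Fintype V] [DecidableEq V]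

lemma upper {G z K : SimpleGraph V} {X : Set V}
    (hK : ∀ u v, K.Adj u v ↔ ((u ∈ X ∧ v ∉ X) ∨ (v ∈ X ∧ u ∉ X)))
    (hz : ∀ a b, z.Adj a b ↔ ((G.Adj a b ∧ ¬K.Adj a b) ∨ (K.Adj a b ∧ ¬G.Adj a b))) :
    (FinT G).card ≤ (E2 z).card * (Fintype.card V - 2) := by
  have hsub : FinT G ⊆ (E2 z).biUnion
      (fun p => (univ.powersetCard 3).filter (fun s => p ⊆ s)) := by
    intro s hs
    obtain ⟨u,v,w,h1,h2,h3,rfl,hf⟩ := mem_FinT.1 hs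
    have hs3 : ({u,v,w} : Finset V) ∈ univ.powersetCard 3 :=
      Finset.mem_powersetCard.2 ⟨subset_univ _, Finset.card_eq_three.2 ⟨u,v,w,h1,h2,h3,rfl⟩⟩
    have hfz : frustrated z u v w := (frus_transfer hK hz u v w).1 hf
    rw [mem_biUnion]
    rcases frus_exists hfz with h|h|h
    · exact ⟨{u,v}, mem_E2.2 ⟨u,v,h1,h,rfl⟩, mem_filter.2 ⟨hs3, by
        intro x hx; simp only [Finset.mem_insert, Finset.mem_singleton] at hx ⊢; tauto⟩⟩
    · exact ⟨{u,w}, mem_E2.2 ⟨u,w,h2,h,rfl⟩, mem_filter.2 ⟨hs3, by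
        intro x hx; simp only [Finset.mem_insert, Finset.mem_singleton] at hx ⊢; tauto⟩⟩
    · exact ⟨{v,w}, mem_E2.2 ⟨v,w,h3,h,rfl⟩, mem_filter.2 ⟨hs3, by
        intro x hx; simp only [Finset.mem_insert, Finset.mem_singleton] at hx ⊢; tauto⟩⟩
  have hbnd : ∀ p ∈ E2 z,
      ((univ.powersetCard 3).filter (fun s => p ⊆ s)).card ≤ Fintype.card V - 2 := by
    intro p hp
    obtain ⟨a, b, hab, -, rfl⟩ := mem_E2.1 hp
    have himg : (univ.powersetCard 3).filter (fun s => ({a,b} : Finset V) ⊆ s) ⊆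
        (univ \ ({a,b} : Finset V)).image (fun c => insert c {a,b}) := by
      intro s hs
      rw [mem_filter, mem_powersetCard] at hs
      obtain ⟨⟨-, hcard⟩, hsub'⟩ := hs
      have hpcard : ({a,b} : Finset V).card = 2 := Finset.card_pair hab
      have hne : (s \ ({a,b} : Finset V)).Nonempty := by
        rw [← Finset.card_pos, Finset.card_sdiff_of_subset hsub', hcard, hpcard]; norm_num
      obtain ⟨c, hc⟩ := hne
      rw [Finset.mem_sdiff] at hc
      have hins : insert c ({a,b} : Finset V) ⊆ s :=
        Finset.insert_subset hc.1 hsub'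
      have hinscard : (insert c ({a,b} : Finset V)).card = 3 := by
        rw [Finset.card_insert_of_notMem hc.2, hpcard]
      have := Finset.eq_of_subset_of_card_le hins (by omega)
      rw [Finset.mem_image]
      exact ⟨c, Finset.mem_sdiff.2 ⟨mem_univ c, hc.2⟩, this⟩
    calc ((univ.powersetCard 3).filter (fun s => ({a,b} : Finset V) ⊆ s)).card
        ≤ ((univ \ ({a,b} : Finset V)).image (fun c => insert c {a,b})).card :=
          Finset.card_le_card himg
      _ ≤ (univ \ ({a,b} : Finset V)).card := Finset.card_image_le
      _ = Fintype.card V - 2 := by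
          rw [Finset.card_sdiff_of_subset (subset_univ _), Finset.card_pair hab, Finset.card_univ]
  calc (FinT G).card ≤ ((E2 z).biUnion _).card := Finset.card_le_card hsub
    _ ≤ ∑ p ∈ E2 z, ((univ.powersetCard 3).filter (fun s => p ⊆ s)).card :=
        Finset.card_biUnion_le
    _ ≤ (E2 z).card • (Fintype.card V - 2) := Finset.sum_le_card_nsmul _ _ _ hbnd
    _ = (E2 z).card * (Fintype.card V - 2) := smul_eq_mul ..

end Frust

namespace Frust

variable {V : Type*} [Fintype V] [DecidableEq V]

noncomputable def nbr (z : SimpleGraph V) (a : V) : Finset V :=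
  univ.filter (fun x => z.Adj a x)

lemma nbr_union_card {z : SimpleGraph V} {a b : V} (hab : a ≠ b) :
    (nbr z a ∪ nbr z b).card ≤ (E2 z).card + 1 := by
  set s := nbr z a ∪ nbr z b with hs
  have hmain : (s.erase a).card ≤ (E2 z).card := by
    apply Finset.card_le_card_of_injOn (fun x => if z.Adj a x then {a,x} else {b,x})
    · intro x hx
      rw [Finset.mem_coe, Finset.mem_erase] at hx
      obtain ⟨hxa, hxs⟩ := hx
      by_cases h : z.Adj a x
      · simp only [h, if_true]
        exact mem_E2.2 ⟨a, x, (z.ne_of_adj h), h, rfl⟩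
      · simp only [h, if_false]
        have hbx : z.Adj b x := by
          rw [hs, Finset.mem_union, nbr, nbr, mem_filter, mem_filter] at hxs
          tauto
        exact mem_E2.2 ⟨b, x, z.ne_of_adj hbx, hbx, rfl⟩
    · intro x hx y hy hxy
      simp only [Finset.coe_erase, Set.mem_diff, Finset.mem_coe, Set.mem_singleton_iff] at hx hy
      obtain ⟨hxs, hxa⟩ := hx
      obtain ⟨hys, hya⟩ := hy
      have hbx : ¬ z.Adj a x → z.Adj b x := by
        rw [hs, Finset.mem_union, nbr, nbr, mem_filter, mem_filter] at hxs; tauto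
      have hby : ¬ z.Adj a y → z.Adj b y := by
        rw [hs, Finset.mem_union, nbr, nbr, mem_filter, mem_filter] at hys; tauto
      by_cases h1 : z.Adj a x <;> by_cases h2 : z.Adj a y <;>
        simp only [h1, h2, if_true, if_false] at hxy
      · rcases pair_eq (z.ne_of_adj h1) hxy with ⟨-, h⟩ | ⟨h, -⟩
        · exact h
        · exact absurd h.symm hya
      · rcases pair_eq (z.ne_of_adj h1) hxy with ⟨h, -⟩ | ⟨h, h'⟩
        · exact absurd h hab
        · exact absurd h.symm hya
      · rcases pair_eq (z.ne_of_adj (hbx h1)) hxy with ⟨h, -⟩ | ⟨-, h'⟩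
        · exact absurd h hab.symm
        · exact absurd h' hxa
      · rcases pair_eq (z.ne_of_adj (hbx h1)) hxy with ⟨-, h⟩ | ⟨-, h'⟩
        · exact h
        · exact absurd h' (z.ne_of_adj (hbx h1)).symm
  have hsub : s ⊆ insert a (s.erase a) := by
    intro x hx
    by_cases h : x = a
    · subst h; exact Finset.mem_insert_self _ _
    · exact Finset.mem_insert_of_mem (Finset.mem_erase.2 ⟨h, hx⟩)
  calc s.card ≤ (insert a (s.erase a)).card := Finset.card_le_card hsub
    _ ≤ (s.erase a).card + 1 := Finset.card_insert_le _ _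
    _ ≤ (E2 z).card + 1 := by omega

noncomputable def goodW (z : SimpleGraph V) (p : Finset V) : Finset V :=
  univ.filter (fun w => w ∉ p ∧ ∀ x ∈ p, ¬ z.Adj x w)

noncomputable def Xf (z : SimpleGraph V) (p : Finset V) : Finset (Finset V) :=
  (goodW z p).image (fun c => insert c p)

lemma goodW_card {z : SimpleGraph V} {p : Finset V} (hp : p ∈ E2 z) :
    Fintype.card V - ((E2 z).card + 1) ≤ (goodW z p).card := by
  obtain ⟨a, b, hab, hadj, rfl⟩ := mem_E2.1 hp
  have hcompl : univ \ goodW z {a,b} ⊆ nbr z a ∪ nbr z b := by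
    intro w hw
    rw [Finset.mem_sdiff, goodW, mem_filter] at hw
    obtain ⟨-, hw⟩ := hw
    push_neg at hw
    rw [Finset.mem_union, nbr, nbr, mem_filter, mem_filter]
    by_cases hmem : w ∈ ({a,b} : Finset V)
    · simp only [Finset.mem_insert, Finset.mem_singleton] at hmem
      rcases hmem with rfl|rfl
      · exact Or.inr ⟨mem_univ _, hadj.symm⟩
      · exact Or.inl ⟨mem_univ _, hadj⟩
    · obtain ⟨x, hx, hxw⟩ := hw (mem_univ w) hmem
      simp only [Finset.mem_insert, Finset.mem_singleton] at hx
      rcases hx with rfl|rfl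
      · exact Or.inl ⟨mem_univ _, hxw⟩
      · exact Or.inr ⟨mem_univ _, hxw⟩
  have h1 : (univ \ goodW z {a,b}).card ≤ (E2 z).card + 1 :=
    le_trans (Finset.card_le_card hcompl) (nbr_union_card hab)
  have h2 : (univ \ goodW z {a,b}).card = Fintype.card V - (goodW z {a,b}).card := by
    rw [Finset.card_sdiff_of_subset (subset_univ _), Finset.card_univ]
  have h3 : (goodW z {a,b}).card ≤ Fintype.card V :=
    le_trans (Finset.card_le_card (subset_univ _)) (le_of_eq Finset.card_univ)
  omega

lemma lower {G z K : SimpleGraph V} {X : Set V}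
    (hK : ∀ u v, K.Adj u v ↔ ((u ∈ X ∧ v ∉ X) ∨ (v ∈ X ∧ u ∉ X)))
    (hz : ∀ a b, z.Adj a b ↔ ((G.Adj a b ∧ ¬K.Adj a b) ∨ (K.Adj a b ∧ ¬G.Adj a b))) :
    (E2 z).card * (Fintype.card V - 1 - (E2 z).card) ≤ (FinT G).card := by
  classical
  have hXfc : ∀ p ∈ E2 z, Fintype.card V - 1 - (E2 z).card ≤ (Xf z p).card := by
    intro p hp
    have hinj : Set.InjOn (fun c => insert c p) ↑(goodW z p) := by
      intro x hx y hy hxy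
      simp only [Finset.mem_coe, goodW, mem_filter] at hx hy
      have hxy' : insert x p = insert y p := hxy
      have hxp : x ∈ insert y p := by rw [← hxy']; exact Finset.mem_insert_self _ _
      rcases Finset.mem_insert.1 hxp with h | h
      · exact h
      · exact absurd h hx.2.1
    have : (Xf z p).card = (goodW z p).card := Finset.card_image_of_injOn hinj
    have := goodW_card hp
    omega
  have hsub : (E2 z).biUnion (fun p => Xf z p) ⊆ FinT G := by
    intro s hs
    rw [mem_biUnion] at hs
    obtain ⟨p, hp, hsp⟩ := hs
    obtain ⟨a, b, hab, hadj, rfl⟩ := mem_E2.1 hp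
    rw [Xf, Finset.mem_image] at hsp
    obtain ⟨c, hc, rfl⟩ := hsp
    rw [goodW, mem_filter] at hc
    obtain ⟨-, hcp, hcadj⟩ := hc
    have hac : ¬ z.Adj a c := hcadj a (by simp)
    have hbc : ¬ z.Adj b c := hcadj b (by simp)
    have hfz : frustrated z a b c := frus_of_adj hadj hac hbc
    have hca : a ≠ c := fun h => hcp (by simp [← h])
    have hcb : b ≠ c := fun h => hcp (by simp [← h])
    have hseq : insert c ({a,b} : Finset V) = ({a,b,c} : Finset V) := by
      ext x
      simp only [Finset.mem_insert, Finset.mem_singleton]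
      tauto
    rw [hseq]
    exact mem_FinT.2 ⟨a, b, c, hab, hca, hcb, rfl, (frus_transfer hK hz a b c).2 hfz⟩
  have hdisj : ∀ p ∈ E2 z, ∀ q ∈ E2 z, p ≠ q → Disjoint (Xf z p) (Xf z q) := by
    intro p hp q hq hpq
    rw [Finset.disjoint_left]
    intro s hsp hsq
    obtain ⟨a, b, hab, hadj, rfl⟩ := mem_E2.1 hp
    obtain ⟨a', b', hab', hadj', rfl⟩ := mem_E2.1 hq
    rw [Xf, Finset.mem_image] at hsp hsq
    obtain ⟨c, hc, hceq⟩ := hsp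
    obtain ⟨c', hc', hceq'⟩ := hsq
    rw [goodW, mem_filter] at hc hc'
    obtain ⟨-, hcp, hcadj⟩ := hc
    -- a', b' ∈ s = insert c {a,b}; both endpoints of a z-edge, c not adjacent to a,b
    have ha' : a' ∈ insert c ({a,b} : Finset V) := by
      rw [hceq, ← hceq']; simp
    have hb' : b' ∈ insert c ({a,b} : Finset V) := by
      rw [hceq, ← hceq']; simp
    have hnc : ∀ x ∈ ({a,b} : Finset V), ¬ z.Adj x c := hcadj
    have ha'ne : a' ≠ c ∧ a' ∈ ({a,b} : Finset V) ∨ a' = c := by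
      rcases Finset.mem_insert.1 ha' with h | h
      · exact Or.inr h
      · exact Or.inl ⟨fun hh => hcp (hh ▸ h), h⟩
    have hb'ne : b' ≠ c ∧ b' ∈ ({a,b} : Finset V) ∨ b' = c := by
      rcases Finset.mem_insert.1 hb' with h | h
      · exact Or.inr h
      · exact Or.inl ⟨fun hh => hcp (hh ▸ h), h⟩
    rcases ha'ne with ⟨-, ha'p⟩ | ha'c
    · rcases hb'ne with ⟨-, hb'p⟩ | hb'c
      · -- both in {a,b}: q = p
        apply hpq
        simp only [Finset.mem_insert, Finset.mem_singleton] at ha'p hb'p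
        rcases ha'p with rfl|rfl <;> rcases hb'p with rfl|rfl
        · exact absurd rfl hab'
        · rfl
        · exact Finset.pair_comm _ _
        · exact absurd rfl hab'
      · exact hnc a' ha'p (hb'c ▸ hadj')
    · rcases hb'ne with ⟨-, hb'p⟩ | hb'c
      · exact hnc b' hb'p (ha'c ▸ hadj'.symm)
      · exact hab' (ha'c.trans hb'c.symm)
  calc (E2 z).card * (Fintype.card V - 1 - (E2 z).card)
      = (E2 z).card • (Fintype.card V - 1 - (E2 z).card) := (smul_eq_mul ..).symm
    _ ≤ ∑ p ∈ E2 z, (Xf z p).card := Finset.card_nsmul_le_sum _ _ _ (by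
        intro p hp
        have := hXfc p hp
        omega)
    _ = ((E2 z).biUnion (fun p => Xf z p)).card := (Finset.card_biUnion hdisj).symm
    _ ≤ (FinT G).card := Finset.card_le_card hsub

end Frust

namespace Frust

variable {V : Type*} [Fintype V] [DecidableEq V]

lemma triple_count (G : SimpleGraph V) :
    ∑ v : V, ((FinT G).filter (fun s => v ∈ s)).card = 3 * (FinT G).card := by
  have h1 : ∀ v : V, ((FinT G).filter (fun s => v ∈ s)).card
      = ∑ s ∈ FinT G, if v ∈ s then 1 else 0 := fun v => Finset.card_filter _ _
  calc ∑ v : V, ((FinT G).filter (fun s => v ∈ s)).card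
      = ∑ v : V, ∑ s ∈ FinT G, if v ∈ s then 1 else 0 := by
        exact Finset.sum_congr rfl (fun v _ => h1 v)
    _ = ∑ s ∈ FinT G, ∑ v : V, if v ∈ s then 1 else 0 := Finset.sum_comm
    _ = ∑ s ∈ FinT G, s.card := by
        refine Finset.sum_congr rfl (fun s _ => ?_)
        rw [← Finset.card_filter, Finset.filter_univ_mem]
    _ = ∑ _s ∈ FinT G, 3 := by
        refine Finset.sum_congr rfl (fun s hs => ?_)
        rw [FinT, mem_filter, mem_powersetCard] at hs
        exact hs.1.2
    _ = 3 * (FinT G).card := by rw [Finset.sum_const, smul_eq_mul, mul_comm]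

noncomputable def Kv (G : SimpleGraph V) (v : V) : SimpleGraph V where
  Adj a b := (G.Adj v a ∧ ¬G.Adj v b) ∨ (G.Adj v b ∧ ¬G.Adj v a)
  symm := ⟨by intro a b h; tauto⟩
  loopless := ⟨by intro a h; tauto⟩

lemma Kv_spec (G : SimpleGraph V) (v : V) : ∀ u w, (Kv G v).Adj u w ↔
    ((u ∈ {x | G.Adj v x} ∧ w ∉ {x | G.Adj v x}) ∨ (w ∈ {x | G.Adj v x} ∧ u ∉ {x | G.Adj v x})) :=
  fun _ _ => Iff.rfl

lemma Kv_cb (G : SimpleGraph V) (v : V) : IsCompleteBipartite (Kv G v) :=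
  ⟨{x | G.Adj v x}, Kv_spec G v⟩

lemma zv_not_adj (G : SimpleGraph V) (v a : V) : ¬ (symmDiff G (Kv G v)).Adj v a := by
  rw [sdadj]
  intro h
  have hK : (Kv G v).Adj v a ↔ G.Adj v a := by
    constructor
    · rintro (⟨h1, h2⟩ | ⟨h1, h2⟩)
      · exact absurd h1 (G.loopless.irrefl v)
      · exact h1
    · intro h1
      exact Or.inr ⟨h1, G.loopless.irrefl v⟩
  tauto

lemma Tv_card (G : SimpleGraph V) (v : V) :
    ((FinT G).filter (fun s => v ∈ s)).card = (E2 (symmDiff G (Kv G v))).card := by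
  classical
  set z := symmDiff G (Kv G v) with hzdef
  have hz : ∀ a b, z.Adj a b ↔
      ((G.Adj a b ∧ ¬(Kv G v).Adj a b) ∨ ((Kv G v).Adj a b ∧ ¬G.Adj a b)) :=
    fun a b => sdadj G (Kv G v) a b
  have hKspec := Kv_spec G v
  symm
  apply Finset.card_nbij (fun p => insert v p)
  · -- maps to
    intro p hp
    obtain ⟨a, b, hab, hadj, rfl⟩ := mem_E2.1 hp
    have hva : v ≠ a := by
      rintro rfl
      exact zv_not_adj G v b hadj
    have hvb : v ≠ b := by
      rintro rfl
      exact zv_not_adj G v a hadj.symm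
    have hfz : frustrated z v a b :=
      frus_of_adj3 (zv_not_adj G v a) (zv_not_adj G v b) hadj
    have hfG : frustrated G v a b := (frus_transfer hKspec hz v a b).2 hfz
    rw [Finset.mem_coe, mem_filter]
    constructor
    · exact mem_FinT.2 ⟨v, a, b, hva, hvb, hab, rfl, hfG⟩
    · exact Finset.mem_insert_self _ _
  · -- inj
    intro p hp q hq hpq
    simp only [Finset.mem_coe] at hp hq
    obtain ⟨a, b, hab, hadj, hpe⟩ := mem_E2.1 hp
    obtain ⟨a', b', hab', hadj', hqe⟩ := mem_E2.1 hq
    have hvp : v ∉ p := by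
      rw [hpe]
      simp only [Finset.mem_insert, Finset.mem_singleton]
      rintro (rfl | rfl)
      · exact zv_not_adj G v b hadj
      · exact zv_not_adj G v a hadj.symm
    have hvq : v ∉ q := by
      rw [hqe]
      simp only [Finset.mem_insert, Finset.mem_singleton]
      rintro (rfl | rfl)
      · exact zv_not_adj G v b' hadj'
      · exact zv_not_adj G v a' hadj'.symm
    have : (insert v p).erase v = (insert v q).erase v := by rw [show insert v p = insert v q from hpq]
    rwa [Finset.erase_insert hvp, Finset.erase_insert hvq] at this
  · -- surj
    intro s hs
    simp only [Finset.mem_coe, mem_filter] at hs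
    obtain ⟨hsF, hvs⟩ := hs
    obtain ⟨x, y, w, h1, h2, h3, rfl, hf⟩ := mem_FinT.1 hsF
    simp only [Finset.mem_insert, Finset.mem_singleton] at hvs
    have key : ∀ a b : V, v ≠ a → v ≠ b → a ≠ b → ({x,y,w} : Finset V) = {v,a,b} →
        ∃ p ∈ ↑(E2 z), insert v p = ({x,y,w} : Finset V) := by
      intro a b hva hvb hab hseq
      have hfG : frustrated G v a b := FinT_frus hsF hva hvb hab hseq
      have hfz : frustrated z v a b := (frus_transfer hKspec hz v a b).1 hfG
      have hadj : z.Adj a b := frus_last hfz (zv_not_adj G v a) (zv_not_adj G v b)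
      refine ⟨{a,b}, ?_, hseq.symm⟩
      simpa using mem_E2.2 ⟨a, b, hab, hadj, rfl⟩
    rcases hvs with rfl | rfl | rfl
    · exact key y w h1 h2 h3 rfl
    · refine key x w (Ne.symm h1) h3 h2 ?_
      ext b; simp only [Finset.mem_insert, Finset.mem_singleton]; tauto
    · refine key x y (Ne.symm h2) (Ne.symm h3) h1 ?_
      ext b; simp only [Finset.mem_insert, Finset.mem_singleton]; tauto

end Frust

namespace Frust

variable {V : Type*} [Fintype V] [DecidableEq V]

noncomputable def pairFS : Sym2 V → Finset V :=
  Sym2.lift ⟨fun a b => {a,b}, fun a b => by ext x; simp [or_comm]⟩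

@[simp] lemma pairFS_mk (a b : V) : pairFS s(a,b) = ({a,b} : Finset V) := rfl

lemma ncard_eq_E2 (G K : SimpleGraph V) :
    (symmDiff G.edgeSet K.edgeSet).ncard = (E2 (symmDiff G K)).card := by
  classical
  have hset : symmDiff G.edgeSet K.edgeSet = (symmDiff G K).edgeSet := by
    rw [symmDiff_def, symmDiff_def]
    simp only [SimpleGraph.edgeSet_sup, SimpleGraph.edgeSet_sdiff]
    rfl
  rw [hset, Set.ncard_eq_toFinset_card']
  apply Finset.card_nbij pairFS
  · intro e he
    rw [Finset.mem_coe, Set.mem_toFinset] at he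
    revert he
    refine Sym2.ind (fun a b => ?_) e
    intro he
    rw [SimpleGraph.mem_edgeSet] at he
    simpa using mem_E2.2 ⟨a, b, he.ne, he, rfl⟩
  · have key : ∀ a b : V, s(a,b) ∈ ((symmDiff G K).edgeSet.toFinset : Finset (Sym2 V)) →
        ∀ c d : V, s(c,d) ∈ ((symmDiff G K).edgeSet.toFinset : Finset (Sym2 V)) →
        pairFS s(a,b) = pairFS s(c,d) → s(a,b) = s(c,d) := by
      intro a b ha c d hc heq
      rw [Set.mem_toFinset, SimpleGraph.mem_edgeSet] at ha hc
      simp only [pairFS_mk] at heq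
      rcases pair_eq ha.ne heq with ⟨rfl, rfl⟩ | ⟨rfl, rfl⟩
      · rfl
      · exact Sym2.eq_swap
    intro e he e' he' hee
    simp only [Finset.mem_coe] at he he'
    revert he he' hee
    refine Sym2.ind (fun a b => ?_) e
    refine Sym2.ind (fun c d => ?_) e'
    intro hee he he'
    exact key a b he c d he' hee
  · intro p hp
    simp only [Finset.mem_coe] at hp
    obtain ⟨a, b, hab, hadj, rfl⟩ := mem_E2.1 hp
    refine ⟨s(a,b), ?_, by simp⟩
    simp only [Finset.mem_coe, Set.mem_toFinset, SimpleGraph.mem_edgeSet]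
    exact hadj

end Frust

namespace Frust

lemma arithZ (t d m : ℤ) (ht : 1 ≤ t) (hd : t + 1 ≤ d)
    (hC : t*t + t + 1 ≤ m)
    (hB : (m+2)*d ≤ 3*t*m)
    (hE : d*(m+1-d) ≤ t*m) : False := by
  have hm1 : 1 ≤ m := by nlinarith
  have hd3 : d ≤ 3*t - 1 := by nlinarith
  rcases eq_or_lt_of_le hd with h | h
  · nlinarith
  · have hr : 0 ≤ d - t - 2 := by omega
    have hs : 0 ≤ 3*t - 1 - d := by omega
    have hc : 0 ≤ m - t*t - t - 1 := by omega
    nlinarith [mul_nonneg hr hs, mul_nonneg hr hc, mul_nonneg hs hc,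
      mul_nonneg (mul_nonneg hr hr) hs, mul_nonneg (mul_nonneg hr hs) hs,
      mul_nonneg hr (by omega : (0:ℤ) ≤ t - 1), mul_nonneg hc (by omega : (0:ℤ) ≤ t - 1)]

lemma arith1 {n t d f : ℕ} (hn3 : t*(t+1)+3 ≤ n) (hd : d < t)
    (hf1 : t*(n-t-1) ≤ f) (hf2 : f ≤ d*(n-2)) : False := by
  have ht1 : 1 ≤ t := by omega
  have htn : t + 3 ≤ n := le_trans (by nlinarith) hn3
  set b := n - t - 1 with hb
  set m := n - 2 with hm
  have hb' : n = b + t + 1 := by omega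
  have hm' : n = m + 2 := by omega
  have hdt : d ≤ t - 1 := by omega
  have key : d * m ≤ (t-1) * m := Nat.mul_le_mul_right m hdt
  nlinarith [hf1, hf2, key, hn3, hb', hm']

lemma arith2 {n t d f : ℕ} (hn3 : t*(t+1)+3 ≤ n) (hd : t < d)
    (hf2 : f ≤ t*(n-2)) (hnd : n*d ≤ 3*f) (hlow : d*(n-1-d) ≤ f) : False := by
  rcases Nat.eq_zero_or_pos t with rfl | ht1
  · have h0 : f = 0 := by omega
    have h1 : n * d = 0 := by omega
    have : d = 0 := by
      rcases Nat.mul_eq_zero.1 h1 with h | h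
      · omega
      · exact h
    omega
  have htn : t + 3 ≤ n := le_trans (by nlinarith) hn3
  set m := n - 2 with hm
  have hm' : n = m + 2 := by omega
  have hBn : n*d ≤ 3*(t*m) := le_trans hnd (by omega)
  have h3t : 3*t ≤ n := by nlinarith
  have hdn : d + 1 ≤ n := by
    by_contra h
    push_neg at h
    have h1 : n ≤ d := by omega
    have : n*n ≤ n*d := Nat.mul_le_mul_left n h1
    nlinarith
  set a := n - 1 - d with hadef
  have ha' : n = a + d + 1 := by omega
  apply arithZ (t:ℤ) (d:ℤ) (m:ℤ)
  · exact_mod_cast ht1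
  · exact_mod_cast hd
  · have h1 : (t:ℤ)*(t+1)+3 ≤ n := by exact_mod_cast hn3
    have h2 : (n:ℤ) = m + 2 := by exact_mod_cast hm'
    nlinarith
  · have h1 : (n:ℤ)*d ≤ 3*(t*m) := by exact_mod_cast hBn
    have h2 : (n:ℤ) = m + 2 := by exact_mod_cast hm'
    nlinarith
  · have h1 : (d:ℤ)*a ≤ f := by exact_mod_cast hlow
    have h2 : (f:ℤ) ≤ t*m := by exact_mod_cast hf2
    have h3 : (n:ℤ) = a + d + 1 := by exact_mod_cast ha'
    have h4 : (n:ℤ) = m + 2 := by exact_mod_cast hm'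
    have h5 : (a:ℤ) = m + 1 - d := by omega
    nlinarith

end Frust


open Frust in
theorem frustrated_triangles_interval_iff_flip_complete_bipartite
    (n : ℕ) (hn : 3 ≤ n) (G : SimpleGraph (Fin n)) (tmax : ℕ)
    (htm : tmax * (tmax + 1) < n - 2)
    (htmax : ∀ t : ℕ, t * (t + 1) < n - 2 → t ≤ tmax)
    (t : ℕ) (ht : t ≤ tmax) :
    (t * (n - t - 1) ≤ fCount G ∧ fCount G ≤ t * (n - 2)) ↔
      ∃ K : SimpleGraph (Fin n), IsCompleteBipartite K ∧
        (symmDiff G.edgeSet K.edgeSet).ncard = t := by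
  classical
  have hcV : Fintype.card (Fin n) = n := Fintype.card_fin n
  have htt : t*(t+1) < n - 2 :=
    lt_of_le_of_lt (Nat.mul_le_mul ht (by omega)) htm
  have hn3 : t*(t+1)+3 ≤ n := by omega
  rw [fCount_eq]
  constructor
  · rintro ⟨h1, h2⟩
    set Dset : Set ℕ := {m | ∃ K : SimpleGraph (Fin n), IsCompleteBipartite K ∧
      (symmDiff G.edgeSet K.edgeSet).ncard = m} with hDdef
    have hne : Dset.Nonempty := ⟨_, ⊥, ⟨∅, by simp⟩, rfl⟩
    set d := sInf Dset with hddef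
    obtain ⟨K0, hK0cb, hK0card⟩ : d ∈ Dset := Nat.sInf_mem hne
    obtain ⟨X0, hX0⟩ := hK0cb
    have hz0 : ∀ a b, (symmDiff G K0).Adj a b ↔
        ((G.Adj a b ∧ ¬K0.Adj a b) ∨ (K0.Adj a b ∧ ¬G.Adj a b)) :=
      fun a b => sdadj G K0 a b
    have hd0 : (E2 (symmDiff G K0)).card = d := by
      rw [← ncard_eq_E2]; exact hK0card
    have hup : (FinT G).card ≤ d * (n-2) := by
      have := upper hX0 hz0
      rwa [hcV, hd0] at this
    have hlow : d * (n-1-d) ≤ (FinT G).card := by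
      have := lower hX0 hz0
      rwa [hcV, hd0] at this
    have hnd : n * d ≤ 3 * (FinT G).card := by
      have hv : ∀ v : Fin n, d ≤ ((FinT G).filter (fun s => v ∈ s)).card := by
        intro v
        rw [Tv_card]
        exact Nat.sInf_le ⟨Kv G v, Kv_cb G v, ncard_eq_E2 G (Kv G v)⟩
      calc n*d = ∑ _v : Fin n, d := by
            rw [Finset.sum_const, Finset.card_univ, hcV, smul_eq_mul]
        _ ≤ ∑ v : Fin n, ((FinT G).filter (fun s => v ∈ s)).card :=
            Finset.sum_le_sum (fun v _ => hv v)
        _ = 3 * (FinT G).card := triple_count G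
    have hdt : d = t := by
      by_contra hne'
      rcases lt_or_gt_of_ne hne' with hlt | hgt
      · exact arith1 hn3 hlt h1 hup
      · exact arith2 hn3 hgt h2 hnd hlow
    exact ⟨K0, ⟨X0, hX0⟩, by rw [hK0card, hdt]⟩
  · rintro ⟨K, hKcb, hKcard⟩
    obtain ⟨X, hX⟩ := hKcb
    have hz : ∀ a b, (symmDiff G K).Adj a b ↔
        ((G.Adj a b ∧ ¬K.Adj a b) ∨ (K.Adj a b ∧ ¬G.Adj a b)) :=
      fun a b => sdadj G K a b
    have hd0 : (E2 (symmDiff G K)).card = t := by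
      rw [← ncard_eq_E2]; exact hKcard
    constructor
    · have := lower hX hz
      rw [hcV, hd0] at this
      have heq : n - 1 - t = n - t - 1 := by omega
      rwa [heq] at this
    · have := upper hX hz
      rwa [hcV, hd0] at this
end

section
/- Let n ≥ 3, let G be a simple graph on n vertices, and let t ≥ 0 be a natural number. If f(G) < (t+1)·(n−t−2), then there exists a subset X of the vertex set of G such that the number of odd pairs of G with respect to the bipartition (X, Xᶜ) is at most t. -/
open Finset

/-- `{u, v}` is an odd pair of `G` with respect to the bipartition `(X, Xᶜ)`: either
`uv` is an edge and `u, v` lie in the same part, or `uv` is a nonedge and `u, v` lie in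
different parts. -/
def IsOddPair {V : Type*} (G : SimpleGraph V) (X : Set V) (u v : V) : Prop :=
  u ≠ v ∧ (G.Adj u v ↔ (u ∈ X ↔ v ∈ X))

/-- The number of odd pairs of `G` with respect to the bipartition `(X, Xᶜ)`. -/
noncomputable def oddPairCount {V : Type*} [Fintype V] [DecidableEq V]
    (G : SimpleGraph V) (X : Set V) : ℕ := by
  classical
  exact ((Finset.univ.powersetCard 2).filter
    (fun s : Finset V => ∃ u v : V, u ≠ v ∧ s = {u, v} ∧ IsOddPair G X u v)).card

section Aux
open Classical
set_option linter.unusedSectionVars false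
variable {V : Type} [Fintype V] [DecidableEq V]

noncomputable def F3 (G : SimpleGraph V) : Finset (Finset V) := by
  classical
  exact ((Finset.univ.powersetCard 3).filter
    (fun s : Finset V => ∃ u v w : V, u ≠ v ∧ u ≠ w ∧ v ≠ w ∧ s = {u, v, w} ∧
      frustrated G u v w))

lemma fCount_eq (G : SimpleGraph V) : fCount G = (F3 G).card := rfl

noncomputable def F2 (G : SimpleGraph V) (X : Set V) : Finset (Finset V) := by
  classical
  exact ((Finset.univ.powersetCard 2).filter
    (fun s : Finset V => ∃ u v : V, u ≠ v ∧ s = {u, v} ∧ IsOddPair G X u v))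

lemma oddPairCount_eq (G : SimpleGraph V) (X : Set V) : oddPairCount G X = (F2 G X).card := rfl

lemma oddPair_symm {G : SimpleGraph V} {X : Set V} {u v : V} (h : IsOddPair G X u v) :
    IsOddPair G X v u := by
  obtain ⟨h1, h2⟩ := h
  refine ⟨h1.symm, ?_⟩
  rw [G.adj_comm]
  exact h2.trans iff_comm

lemma pair_eq {u v u' v' : V} (h : ({u, v} : Finset V) = {u', v'}) (hne : u' ≠ v') :
    (u' = u ∧ v' = v) ∨ (u' = v ∧ v' = u) := by
  have h1 : u' ∈ ({u, v} : Finset V) := by rw [h]; simp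
  have h2 : v' ∈ ({u, v} : Finset V) := by rw [h]; simp
  simp only [Finset.mem_insert, Finset.mem_singleton] at h1 h2
  rcases h1 with h1 | h1 <;> rcases h2 with h2 | h2 <;> subst h1 <;> subst h2 <;> tauto

lemma parity_lemma (G : SimpleGraph V) (X : Set V) {u v w : V} (huv : u ≠ v) (huw : u ≠ w)
    (hvw : v ≠ w) :
    frustrated G u v w ↔
      Odd ((if IsOddPair G X u v then 1 else 0) + (if IsOddPair G X u w then 1 else 0) +
        (if IsOddPair G X v w then 1 else 0) : ℕ) := by
  classical
  unfold frustrated IsOddPair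
  by_cases h1 : G.Adj u v <;> by_cases h2 : G.Adj u w <;> by_cases h3 : G.Adj v w <;>
    by_cases x1 : u ∈ X <;> by_cases x2 : v ∈ X <;> by_cases x3 : w ∈ X <;>
      simp [h1, h2, h3, x1, x2, x3, huv, huw, hvw, Nat.odd_iff]

lemma frustrated_one {G : SimpleGraph V} (X : Set V) {u v w : V} (huv : u ≠ v) (huw : u ≠ w)
    (hvw : v ≠ w) (h1 : ¬ IsOddPair G X u v) (h2 : ¬ IsOddPair G X u w)
    (h3 : IsOddPair G X v w) : frustrated G u v w := by
  rw [parity_lemma G X huv huw hvw, if_neg h1, if_neg h2, if_pos h3]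
  exact ⟨0, by norm_num⟩

lemma mem_F3_intro (G : SimpleGraph V) {u v w : V} (h1 : u ≠ v) (h2 : u ≠ w) (h3 : v ≠ w)
    (hf : frustrated G u v w) : ({u, v, w} : Finset V) ∈ F3 G := by
  unfold F3
  rw [Finset.mem_filter, Finset.mem_powersetCard]
  refine ⟨⟨Finset.subset_univ _, ?_⟩, u, v, w, h1, h2, h3, rfl, hf⟩
  rw [Finset.card_insert_of_notMem (by simp [h1, h2]),
    Finset.card_insert_of_notMem (by simp [h3]), Finset.card_singleton]

lemma mem_F3_elim {G : SimpleGraph V} {s : Finset V} (hs : s ∈ F3 G) :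
    ∃ u v w : V, u ≠ v ∧ u ≠ w ∧ v ≠ w ∧ s = {u, v, w} ∧ frustrated G u v w :=
  (Finset.mem_filter.mp hs).2

lemma mem_F2_intro (G : SimpleGraph V) (X : Set V) {u v : V} (h : IsOddPair G X u v) :
    ({u, v} : Finset V) ∈ F2 G X := by
  unfold F2
  rw [Finset.mem_filter, Finset.mem_powersetCard]
  refine ⟨⟨Finset.subset_univ _, ?_⟩, u, v, h.1, rfl, h⟩
  rw [Finset.card_insert_of_notMem (by simp [h.1]), Finset.card_singleton]

lemma mem_F2_elim {G : SimpleGraph V} {X : Set V} {s : Finset V} (hs : s ∈ F2 G X) :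
    ∃ u v : V, u ≠ v ∧ s = {u, v} ∧ IsOddPair G X u v :=
  (Finset.mem_filter.mp hs).2

/-- Every vertex is in at least `t+1` frustrated triples. -/
lemma through_ge (G : SimpleGraph V) (t : ℕ) (hX : ∀ X : Set V, t + 1 ≤ oddPairCount G X)
    (v : V) : t + 1 ≤ ((F3 G).filter (fun s => v ∈ s)).card := by
  classical
  set Xv : Set V := {u | ¬ G.Adj v u} with hXv
  have hveven : ∀ w : V, ¬ IsOddPair G Xv v w := by
    rintro w ⟨hne, hiff⟩
    by_cases ha : G.Adj v w <;> simp [hXv, ha, Set.mem_setOf_eq] at hiff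
  refine le_trans (hX Xv) ?_
  rw [oddPairCount_eq]
  apply Finset.card_le_card_of_injOn (fun s => insert v s)
  · intro s hs
    obtain ⟨u, w, hne, rfl, hodd⟩ := mem_F2_elim hs
    have hu : u ≠ v := fun h => hveven w (h ▸ hodd)
    have hw : w ≠ v := fun h => hveven u (h ▸ oddPair_symm hodd)
    rw [Finset.mem_coe, Finset.mem_filter]
    refine ⟨?_, by simp⟩
    exact mem_F3_intro G hu.symm hw.symm hne
      (frustrated_one Xv hu.symm hw.symm hne (fun h => hveven u h) (fun h => hveven w h) hodd)
  · intro s1 hs1 s2 hs2 heq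
    obtain ⟨u1, w1, -, h1, hodd1⟩ := mem_F2_elim hs1
    obtain ⟨u2, w2, -, h2, hodd2⟩ := mem_F2_elim hs2
    have hv1 : v ∉ s1 := by
      subst h1; simp only [Finset.mem_insert, Finset.mem_singleton]
      rintro (rfl | rfl)
      · exact hveven w1 hodd1
      · exact hveven u1 (oddPair_symm hodd1)
    have hv2 : v ∉ s2 := by
      subst h2; simp only [Finset.mem_insert, Finset.mem_singleton]
      rintro (rfl | rfl)
      · exact hveven w2 hodd2
      · exact hveven u2 (oddPair_symm hodd2)
    have := congrArg (fun s => Finset.erase s v) heq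
    simpa [Finset.erase_insert hv1, Finset.erase_insert hv2] using this

lemma frustrated_comap {W : Type} (f : W → V) (G : SimpleGraph V) {a b c : W} :
    frustrated (SimpleGraph.comap f G) a b c ↔ frustrated G (f a) (f b) (f c) := by
  unfold frustrated
  simp [SimpleGraph.comap]
  congr!

variable (G : SimpleGraph V) (v : V)

/-- The induced graph on vertices other than `v`. -/
noncomputable def Gsub : SimpleGraph {u : V // u ≠ v} :=
  SimpleGraph.comap (Subtype.val : {u : V // u ≠ v} → V) G

lemma fCount_sub_le :
    fCount (Gsub G v) ≤ ((F3 G).filter (fun s => v ∉ s)).card := by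
  classical
  rw [fCount_eq]
  apply Finset.card_le_card_of_injOn (fun s => s.map (Function.Embedding.subtype _))
  · intro s hs
    obtain ⟨a, b, c, h1, h2, h3, rfl, hf⟩ := mem_F3_elim hs
    have hmap : ({a, b, c} : Finset {u : V // u ≠ v}).map (Function.Embedding.subtype _) =
        {(a : V), (b : V), (c : V)} := by
      simp [Finset.map_insert]
    simp only [Finset.mem_coe, Finset.mem_filter]
    rw [hmap]
    refine ⟨mem_F3_intro G (Subtype.coe_ne_coe.mpr h1) (Subtype.coe_ne_coe.mpr h2)
      (Subtype.coe_ne_coe.mpr h3) ?_, ?_⟩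
    · rw [← frustrated_comap Subtype.val G]; exact hf
    · simp only [Finset.mem_insert, Finset.mem_singleton]
      push_neg
      exact ⟨(a.2 ∘ Eq.symm), (b.2 ∘ Eq.symm), (c.2 ∘ Eq.symm)⟩
  · exact fun s1 _ s2 _ h => Finset.map_injective _ h

lemma oddPair_restrict (X : Set V) (X' : Set {u : V // u ≠ v})
    (hmem : ∀ u : {u : V // u ≠ v}, ((u : V) ∈ X ↔ u ∈ X')) {a b : {u : V // u ≠ v}} :
    IsOddPair G X (a : V) (b : V) ↔ IsOddPair (Gsub G v) X' a b := by
  unfold IsOddPair Gsub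
  rw [SimpleGraph.comap_adj]
  constructor
  · rintro ⟨h1, h2⟩
    exact ⟨fun h => h1 (congrArg Subtype.val h), by rw [h2, hmem a, hmem b]⟩
  · rintro ⟨h1, h2⟩
    exact ⟨fun h => h1 (Subtype.ext h), by rw [h2, hmem a, hmem b]⟩

lemma oddPairCount_split (X : Set V) (X' : Set {u : V // u ≠ v})
    (hmem : ∀ u : {u : V // u ≠ v}, ((u : V) ∈ X ↔ u ∈ X')) :
    oddPairCount G X ≤
      (Finset.univ.filter (fun u : {u : V // u ≠ v} => IsOddPair G X v (u : V))).card +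
        oddPairCount (Gsub G v) X' := by
  classical
  rw [oddPairCount_eq, oddPairCount_eq,
    ← Finset.card_filter_add_card_filter_not (s := F2 G X) (p := fun s => v ∈ s)]
  refine Nat.add_le_add ?_ ?_
  · -- pairs containing v
    calc ((F2 G X).filter (fun s => v ∈ s)).card
        ≤ (((Finset.univ.filter (fun u : {u : V // u ≠ v} => IsOddPair G X v (u : V)))).image
            (fun u : {u : V // u ≠ v} => ({v, (u : V)} : Finset V))).card := by
          apply Finset.card_le_card
          intro s hs
          rw [Finset.mem_filter] at hs
          obtain ⟨hs2, hv⟩ := hs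
          obtain ⟨a, b, hne, rfl, hodd⟩ := mem_F2_elim hs2
          simp only [Finset.mem_insert, Finset.mem_singleton] at hv
          rcases hv with rfl | rfl
          · have hb : b ≠ v := fun h => hne (h.symm)
            refine Finset.mem_image.mpr ⟨⟨b, hb⟩, ?_, rfl⟩
            rw [Finset.mem_filter]
            exact ⟨Finset.mem_univ _, hodd⟩
          · have ha : a ≠ v := hne
            refine Finset.mem_image.mpr ⟨⟨a, ha⟩, ?_, ?_⟩
            · rw [Finset.mem_filter]
              exact ⟨Finset.mem_univ _, oddPair_symm hodd⟩
            · exact (Finset.pair_comm a v).symm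
      _ ≤ _ := Finset.card_image_le
  · -- pairs avoiding v
    apply Finset.card_le_card_of_injOn (fun s => s.subtype (· ≠ v))
    · intro s hs
      rw [Finset.mem_coe, Finset.mem_filter] at hs
      obtain ⟨hs2, hv⟩ := hs
      obtain ⟨a, b, hne, rfl, hodd⟩ := mem_F2_elim hs2
      simp only [Finset.mem_insert, Finset.mem_singleton] at hv
      push_neg at hv
      have ha : a ≠ v := fun h => hv.1 h.symm
      have hb : b ≠ v := fun h => hv.2 h.symm
      have hsub : ({a, b} : Finset V).subtype (· ≠ v) =
          ({⟨a, ha⟩, ⟨b, hb⟩} : Finset {u : V // u ≠ v}) := by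
        ext x
        simp [Finset.mem_subtype, Subtype.ext_iff]
      simp only [Finset.mem_coe]
      rw [hsub]
      exact mem_F2_intro _ _ ((oddPair_restrict G v X X' hmem).mp hodd)
    · intro s1 hs1 s2 hs2 heq
      rw [Finset.mem_coe, Finset.mem_filter] at hs1 hs2
      have e1 : s1.filter (· ≠ v) = s1 := by
        apply Finset.filter_eq_self.mpr
        intro x hx
        exact fun h => hs1.2 (h ▸ hx)
      have e2 : s2.filter (· ≠ v) = s2 := by
        apply Finset.filter_eq_self.mpr
        intro x hx
        exact fun h => hs2.2 (h ▸ hx)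
      have := congrArg (fun s => Finset.map (Function.Embedding.subtype _) s) heq
      simpa [Finset.subtype_map, e1, e2] using this

lemma cross_odd_le (X' : Set {u : V // u ≠ v}) (A B : Finset {u : V // u ≠ v})
    (hdisj : ∀ u ∈ A, u ∉ B) :
    ((A ×ˢ B).filter (fun p => IsOddPair (Gsub G v) X' p.1 p.2)).card ≤
      oddPairCount (Gsub G v) X' := by
  classical
  rw [oddPairCount_eq]
  apply Finset.card_le_card_of_injOn (fun p => ({p.1, p.2} : Finset _))
  · intro p hp
    rw [Finset.mem_coe, Finset.mem_filter] at hp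
    exact mem_F2_intro _ _ hp.2
  · intro p hp q hq heq
    rw [Finset.mem_coe, Finset.mem_filter, Finset.mem_product] at hp hq
    have hq12 : q.1 ≠ q.2 := hq.2.1
    rcases pair_eq heq hq12 with ⟨h1, h2⟩ | ⟨h1, h2⟩
    · exact Prod.ext h1.symm h2.symm
    · exact absurd hp.1.2 (by rw [← h1]; exact hdisj q.1 hq.1.1)

lemma through_bound (X : Set V) (X' : Set {u : V // u ≠ v})
    (hmem : ∀ u : {u : V // u ≠ v}, ((u : V) ∈ X ↔ u ∈ X'))
    (A B : Finset {u : V // u ≠ v})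
    (hA : ∀ u ∈ A, IsOddPair G X v (u : V)) (hB : ∀ u ∈ B, ¬ IsOddPair G X v (u : V)) :
    ((A ×ˢ B).filter (fun p => ¬ IsOddPair (Gsub G v) X' p.1 p.2)).card ≤
      ((F3 G).filter (fun s => v ∈ s)).card := by
  classical
  apply Finset.card_le_card_of_injOn (fun p => ({v, (p.1 : V), (p.2 : V)} : Finset V))
  · intro p hp
    rw [Finset.mem_coe, Finset.mem_filter, Finset.mem_product] at hp
    obtain ⟨⟨hp1, hp2⟩, hnodd⟩ := hp
    have hne12 : p.1 ≠ p.2 := fun h => hB p.2 hp2 (h ▸ hA p.1 hp1)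
    have h1 : v ≠ (p.1 : V) := Ne.symm p.1.2
    have h2 : v ≠ (p.2 : V) := Ne.symm p.2.2
    have h3 : (p.1 : V) ≠ (p.2 : V) := Subtype.coe_ne_coe.mpr hne12
    rw [Finset.mem_coe, Finset.mem_filter]
    refine ⟨mem_F3_intro G h1 h2 h3 ?_, by simp⟩
    -- frustrated: exactly one odd pair (v, p.1) wrt X; use parity with pairs ordered (v,p1,p2)
    rw [parity_lemma G X h1 h2 h3, if_pos (hA p.1 hp1), if_neg (hB p.2 hp2),
      if_neg (fun h => hnodd ((oddPair_restrict G v X X' hmem).mp h))]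
    exact ⟨0, by norm_num⟩
  · intro p hp q hq heq
    rw [Finset.mem_coe, Finset.mem_filter, Finset.mem_product] at hp hq
    simp only at heq
    have hvp : v ∉ ({(p.1 : V), (p.2 : V)} : Finset V) := by
      simp only [Finset.mem_insert, Finset.mem_singleton]
      push_neg
      exact ⟨Ne.symm p.1.2, Ne.symm p.2.2⟩
    have hvq : v ∉ ({(q.1 : V), (q.2 : V)} : Finset V) := by
      simp only [Finset.mem_insert, Finset.mem_singleton]
      push_neg
      exact ⟨Ne.symm q.1.2, Ne.symm q.2.2⟩
    have hpair : ({(p.1 : V), (p.2 : V)} : Finset V) = {(q.1 : V), (q.2 : V)} := by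
      have := congrArg (fun s => Finset.erase s v) heq
      simpa [Finset.erase_insert hvp, Finset.erase_insert hvq] using this
    have hq12 : (q.1 : V) ≠ (q.2 : V) := by
      refine Subtype.coe_ne_coe.mpr (fun h => ?_)
      exact hB q.2 hq.1.2 (h ▸ hA q.1 hq.1.1)
    rcases pair_eq hpair hq12 with ⟨e1, e2⟩ | ⟨e1, e2⟩
    · exact Prod.ext (Subtype.coe_injective e1).symm (Subtype.coe_injective e2).symm
    · -- q.1 = p.2 : contradiction, q.1 ∈ A, p.2 ∈ B
      have : q.1 = p.2 := Subtype.coe_injective e1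
      exact absurd hp.1.2 (by rw [← this]; exact fun h => hB q.1 h (hA q.1 hq.1.1))

lemma arith_key (a b d mm tt nn : ℤ) (h1 : a + b = nn - 1) (h2 : tt + 1 ≤ a + mm)
    (h3 : tt + 1 ≤ b + mm) (h4 : a * b ≤ d + mm) (h5 : 0 ≤ mm) (h6 : mm ≤ tt) :
    (tt + 1) * (nn - tt - 2) ≤ d + mm * (nn - mm - 2) := by
  nlinarith [mul_nonneg (by linarith : (0 : ℤ) ≤ a - (tt + 1 - mm))
      (by linarith : (0 : ℤ) ≤ b - (tt + 1 - mm)),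
    mul_nonneg h5 (by linarith : (0 : ℤ) ≤ tt - mm)]

set_option maxHeartbeats 1600000 in
lemma Qaux : ∀ (n : ℕ) (V : Type) [Fintype V] [DecidableEq V] (G : SimpleGraph V) (t : ℕ),
    Fintype.card V = n → t + 3 ≤ n → (∀ X : Set V, t + 1 ≤ oddPairCount G X) →
    (t + 1) * (n - t - 2) ≤ fCount G := by
  intro n
  induction n using Nat.strong_induction_on with
  | _ n IH =>
    intro V _ _ G t hcard htn hX
    have hVpos : 0 < Fintype.card V := by omega
    obtain ⟨v⟩ := Fintype.card_pos_iff.mp hVpos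
    have hsplit : ((F3 G).filter (fun s => v ∈ s)).card +
        ((F3 G).filter (fun s => v ∉ s)).card = fCount G := by
      rw [fCount_eq]
      exact Finset.card_filter_add_card_filter_not (p := fun s => v ∈ s)
    by_cases hc : t + 4 ≤ n
    case neg =>
      have h1 : n - t - 2 = 1 := by omega
      have h2 := through_ge G t hX v
      have h3 : ((F3 G).filter (fun s => v ∈ s)).card ≤ fCount G := by
        rw [fCount_eq]; exact Finset.card_le_card (Finset.filter_subset _ _)
      rw [h1, mul_one]
      omega
    case pos =>
      have hcardW : Fintype.card {u : V // u ≠ v} = n - 1 := by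
        rw [Fintype.card_subtype_compl, Fintype.card_subtype_eq, hcard]
      obtain ⟨S0, -, hS0⟩ := Finset.exists_min_image
        (Finset.univ : Finset (Finset {u : V // u ≠ v}))
        (fun S => oddPairCount (Gsub G v) ↑S) ⟨∅, Finset.mem_univ ∅⟩
      set X' : Set {u : V // u ≠ v} := ↑S0 with hX'
      set m' := oddPairCount (Gsub G v) X' with hm'
      have hmin : ∀ Y : Set {u : V // u ≠ v}, m' ≤ oddPairCount (Gsub G v) Y := by
        intro Y
        have h := hS0 Y.toFinset (Finset.mem_univ _)
        rwa [Set.coe_toFinset] at h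
      have hle := fCount_sub_le G v
      by_cases hm : m' ≤ t
      case pos =>
        set Xf : Set V := Subtype.val '' X' with hXf
        set Xt : Set V := insert v Xf with hXt
        have hmemf : ∀ u : {u : V // u ≠ v}, ((u : V) ∈ Xf ↔ u ∈ X') := by
          intro u
          constructor
          · rintro ⟨y, hy, hval⟩
            rwa [Subtype.coe_injective hval] at hy
          · exact fun h => ⟨u, h, rfl⟩
        have hmemt : ∀ u : {u : V // u ≠ v}, ((u : V) ∈ Xt ↔ u ∈ X') := by
          intro u
          rw [hXt, Set.mem_insert_iff]
          simp [u.2, hmemf u]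
        have hvXt : v ∈ Xt := Set.mem_insert _ _
        have hvXf : v ∉ Xf := by
          rintro ⟨y, -, hval⟩
          exact y.2 hval
        set A := Finset.univ.filter (fun u : {u : V // u ≠ v} => IsOddPair G Xt v (u : V))
          with hA
        set B := Finset.univ.filter (fun u : {u : V // u ≠ v} => ¬ IsOddPair G Xt v (u : V))
          with hB
        have hab : A.card + B.card = n - 1 := by
          rw [hA, hB, Finset.card_filter_add_card_filter_not, Finset.card_univ, hcardW]
        have hflip : ∀ u : {u : V // u ≠ v},
            IsOddPair G Xf v (u : V) ↔ ¬ IsOddPair G Xt v (u : V) := by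
          intro u
          have hne : v ≠ (u : V) := Ne.symm u.2
          have h5 : (v ∈ Xf ↔ (u : V) ∈ Xf) ↔ ¬ (u ∈ X') := by
            simp [hvXf, hmemf u]
          have h6 : (v ∈ Xt ↔ (u : V) ∈ Xt) ↔ (u ∈ X') := by
            simp [hvXt, hmemt u]
          unfold IsOddPair
          rw [h5, h6]
          by_cases hadj : G.Adj v (u : V) <;> by_cases hP : u ∈ X' <;>
            simp [hadj, hP, hne]
        have hA' : t + 1 ≤ A.card + m' :=
          le_trans (hX Xt) (oddPairCount_split G v Xt X' hmemt)
        have hB' : t + 1 ≤ B.card + m' := by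
          have h := le_trans (hX Xf) (oddPairCount_split G v Xf X' hmemf)
          have heq : Finset.univ.filter (fun u : {u : V // u ≠ v} => IsOddPair G Xf v (u : V))
              = B := by
            rw [hB]
            exact Finset.filter_congr (fun u _ => hflip u)
          rwa [heq] at h
        set D := (A ×ˢ B).filter (fun p => ¬ IsOddPair (Gsub G v) X' p.1 p.2) with hD
        have hDsplit : ((A ×ˢ B).filter (fun p => IsOddPair (Gsub G v) X' p.1 p.2)).card
            + D.card = A.card * B.card := by
          rw [hD, Finset.card_filter_add_card_filter_not, Finset.card_product]
        have hDodd : ((A ×ˢ B).filter (fun p => IsOddPair (Gsub G v) X' p.1 p.2)).card ≤ m' :=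
          cross_odd_le G v X' A B
            (fun u hu hu' => (Finset.mem_filter.mp hu').2 (Finset.mem_filter.mp hu).2)
        have hth : D.card ≤ ((F3 G).filter (fun s => v ∈ s)).card :=
          through_bound G v Xt X' hmemt A B (fun u hu => (Finset.mem_filter.mp hu).2)
            (fun u hu => (Finset.mem_filter.mp hu).2)
        have hf'sub : m' * (n - m' - 2) ≤ fCount (Gsub G v) := by
          rcases Nat.eq_zero_or_pos m' with h0 | h1
          · rw [h0]; simp
          · have h := IH (n - 1) (by omega) {u : V // u ≠ v} (Gsub G v) (m' - 1) hcardW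
              (by omega) (fun Y => by have := hmin Y; omega)
            have e1 : m' - 1 + 1 = m' := by omega
            have e2 : (n - 1) - (m' - 1) - 2 = n - m' - 2 := by omega
            rwa [e1, e2] at h
        -- final arithmetic
        have iab : (A.card : ℤ) + (B.card : ℤ) = (n : ℤ) - 1 := by
          clear * - hab hc; omega
        have iA : (t : ℤ) + 1 ≤ (A.card : ℤ) + m' := by exact_mod_cast hA'
        have iB : (t : ℤ) + 1 ≤ (B.card : ℤ) + m' := by exact_mod_cast hB'
        have iab2 : (A.card : ℤ) * (B.card : ℤ) ≤ (D.card : ℤ) + m' := by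
          have hnat : A.card * B.card ≤ D.card + m' := by
            rw [← hDsplit]
            clear * - hDodd; omega
          exact_mod_cast hnat
        have im : (m' : ℤ) ≤ t := by exact_mod_cast hm
        have key := arith_key (A.card : ℤ) (B.card : ℤ) (D.card : ℤ) (m' : ℤ) (t : ℤ) (n : ℤ)
          iab iA iB iab2 (by positivity) im
        have hnm : ((n : ℤ) - m' - 2) = ((n - m' - 2 : ℕ) : ℤ) := by
          clear * - hm hc; omega
        have hnt : ((n : ℤ) - t - 2) = ((n - t - 2 : ℕ) : ℤ) := by
          clear * - hc; omega
        rw [hnm, hnt] at key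
        have key2 : (t + 1) * (n - t - 2) ≤ D.card + m' * (n - m' - 2) := by exact_mod_cast key
        linarith [key2, hf'sub, hth, hle, hsplit]
      case neg =>
        have hth := through_ge G t hX v
        have hf' := IH (n - 1) (by omega) {u : V // u ≠ v} (Gsub G v) t hcardW (by omega)
          (fun Y => by have h1 := hmin Y; omega)
        have e1 : (n - 1) - t - 2 = n - t - 3 := by omega
        have e2 : n - t - 2 = (n - t - 3) + 1 := by omega
        rw [e1] at hf'
        rw [e2, Nat.mul_succ]
        linarith [hf', hle, hth, hsplit]

theorem exists_bipartition_with_few_odd_pairs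
    (n : ℕ) (hn : 3 ≤ n) (G : SimpleGraph (Fin n)) (t : ℕ)
    (hf : fCount G < (t + 1) * (n - t - 2)) :
    ∃ X : Set (Fin n), oddPairCount G X ≤ t := by
  by_contra hcon
  push_neg at hcon
  have hX : ∀ X : Set (Fin n), t + 1 ≤ oddPairCount G X := fun X => hcon X
  by_cases htn : t + 3 ≤ n
  · exact absurd hf (not_lt.mpr (Qaux n (Fin n) G t (Fintype.card_fin n) htn hX))
  · have h0 : n - t - 2 = 0 := by omega
    rw [h0, mul_zero] at hf
    omega

end Aux
end

section
/- Let n ≥ 3, let G be a simple graph on n vertices, and let t ≥ 1 be a natural number. If f(G) > (t−1)·(n−2), then for every subset X of the vertex set of G, the number of odd pairs of G with respect to the bipartition (X, Xᶜ) is at least t. -/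
open Finset

lemma triangle_odd {V : Type*} (G : SimpleGraph V) (X : Set V)
    {u v w : V} (huv : u ≠ v) (huw : u ≠ w) (hvw : v ≠ w)
    (hf : frustrated G u v w) :
    IsOddPair G X u v ∨ IsOddPair G X u w ∨ IsOddPair G X v w := by
  by_contra h
  push_neg at h
  obtain ⟨h1, h2, h3⟩ := h
  unfold IsOddPair at h1 h2 h3
  unfold frustrated at hf
  rw [Nat.odd_iff] at hf
  by_cases hu : u ∈ X <;> by_cases hv : v ∈ X <;> by_cases hw : w ∈ X <;>
    simp only [huv, huw, hvw, hu, hv, hw, ne_eq, not_false_iff, true_and, iff_true,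
      iff_false, not_iff, not_true, not_false_iff, not_not] at h1 h2 h3 <;>
    simp [h1, h2, h3] at hf

theorem every_bipartition_has_many_odd_pairs
    (n : ℕ) (hn : 3 ≤ n) (G : SimpleGraph (Fin n)) (t : ℕ) (ht : 1 ≤ t)
    (hf : (t - 1) * (n - 2) < fCount G) :
    ∀ X : Set (Fin n), t ≤ oddPairCount G X := by
  classical
  intro X
  haveI : Nonempty (Fin n) := ⟨⟨0, by omega⟩⟩
  set T : Finset (Finset (Fin n)) := ((Finset.univ.powersetCard 3).filter
    (fun s : Finset (Fin n) => ∃ u v w : Fin n, u ≠ v ∧ u ≠ w ∧ v ≠ w ∧ s = {u, v, w} ∧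
      frustrated G u v w)) with hT
  set Q : Finset (Finset (Fin n)) := ((Finset.univ.powersetCard 2).filter
    (fun s : Finset (Fin n) => ∃ u v : Fin n, u ≠ v ∧ s = {u, v} ∧ IsOddPair G X u v)) with hQ
  have hfT : fCount G = T.card := by
    unfold fCount; rw [hT]; convert rfl
  have hQc : oddPairCount G X = Q.card := by
    unfold oddPairCount; rw [hQ]; convert rfl
  -- predicate: p is an odd pair inside s
  have hex : ∀ s ∈ T, ∃ p : Finset (Fin n),
      p ⊆ s ∧ ∃ a b : Fin n, a ≠ b ∧ p = {a, b} ∧ IsOddPair G X a b := by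
    intro s hs
    rw [hT, mem_filter] at hs
    obtain ⟨-, u, v, w, huv, huw, hvw, hsv, hfr⟩ := hs
    rcases triangle_odd G X huv huw hvw hfr with h | h | h
    · exact ⟨{u, v}, by subst hsv; intro x hx; simp at hx ⊢; tauto,
        u, v, huv, rfl, h⟩
    · exact ⟨{u, w}, by subst hsv; intro x hx; simp at hx ⊢; tauto,
        u, w, huw, rfl, h⟩
    · exact ⟨{v, w}, by subst hsv; intro x hx; simp at hx ⊢; tauto,
        v, w, hvw, rfl, h⟩
  let f : Finset (Fin n) → Finset (Fin n) := fun s =>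
    if h : ∃ p : Finset (Fin n),
      p ⊆ s ∧ ∃ a b : Fin n, a ≠ b ∧ p = {a, b} ∧ IsOddPair G X a b then h.choose else ∅
  have hfspec : ∀ s ∈ T, f s ⊆ s ∧ ∃ a b : Fin n, a ≠ b ∧ f s = {a, b} ∧ IsOddPair G X a b := by
    intro s hs
    have h := hex s hs
    simp only [f, dif_pos h]
    exact h.choose_spec
  -- image lands in Q
  have himg : T.image f ⊆ Q := by
    intro p hp
    rw [mem_image] at hp
    obtain ⟨s, hs, rfl⟩ := hp
    obtain ⟨_, a, b, hab, hfs, hop⟩ := hfspec s hs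
    rw [hQ, mem_filter, mem_powersetCard]
    exact ⟨⟨subset_univ _, by rw [hfs]; exact card_pair hab⟩, a, b, hab, hfs, hop⟩
  -- fiber bound
  have hfib : ∀ p ∈ T.image f, (T.filter fun s => f s = p).card ≤ n - 2 := by
    intro p hp
    rw [mem_image] at hp
    obtain ⟨s₀, hs₀, rfl⟩ := hp
    obtain ⟨-, a, b, hab, hfs₀, -⟩ := hfspec s₀ hs₀
    have hpcard : (f s₀).card = 2 := by rw [hfs₀]; exact card_pair hab
    -- each fiber element s has s \ p a singleton; map to that element
    have key : ∀ s ∈ T.filter (fun s => f s = f s₀), ∃ x, s \ f s₀ = {x} := by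
      intro s hs
      rw [mem_filter] at hs
      obtain ⟨hsT, hfs⟩ := hs
      have hsub : f s₀ ⊆ s := hfs ▸ (hfspec s hsT).1
      have hs3 : s.card = 3 := by
        have := (mem_filter.mp (hT ▸ hsT)).1
        exact (mem_powersetCard.mp this).2
      have : (s \ f s₀).card = 1 := by rw [card_sdiff_of_subset hsub, hs3, hpcard]
      exact card_eq_one.mp this
    let g : Finset (Fin n) → Fin n := fun s =>
      if h : ∃ x, s \ f s₀ = {x} then h.choose else Classical.arbitrary _
    have hg : ∀ s ∈ T.filter (fun s => f s = f s₀), s \ f s₀ = {g s} := by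
      intro s hs
      have h := key s hs
      simp only [g, dif_pos h]
      exact h.choose_spec
    have hrec : ∀ s ∈ T.filter (fun s => f s = f s₀), s = f s₀ ∪ {g s} := by
      intro s hs
      have hsub : f s₀ ⊆ s := (mem_filter.mp hs).2 ▸ (hfspec s (mem_filter.mp hs).1).1
      rw [← hg s hs, union_sdiff_of_subset hsub]
    have hmaps : ∀ s ∈ T.filter (fun s => f s = f s₀), g s ∈ univ \ f s₀ := by
      intro s hs
      have := hg s hs
      have : g s ∈ s \ f s₀ := by rw [this]; exact mem_singleton_self _
      exact mem_sdiff.mpr ⟨mem_univ _, (mem_sdiff.mp this).2⟩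
    have hinj : Set.InjOn g (T.filter (fun s => f s = f s₀)) := by
      intro s₁ h₁ s₂ h₂ he
      rw [hrec s₁ h₁, hrec s₂ h₂, he]
    calc (T.filter fun s => f s = f s₀).card ≤ (univ \ f s₀).card :=
          card_le_card_of_injOn g hmaps hinj
      _ = n - 2 := by
          rw [card_sdiff_of_subset (subset_univ _), card_univ, Fintype.card_fin, hpcard]
  have hmain : T.card ≤ (n - 2) * (T.image f).card :=
    card_le_mul_card_image_of_maps_to (fun s hs => mem_image_of_mem f hs) _ hfib
  have hQle : (T.image f).card ≤ Q.card := card_le_card himg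
  have h1 : T.card ≤ (n - 2) * Q.card := hmain.trans (Nat.mul_le_mul_left _ hQle)
  rw [hfT] at hf
  rw [hQc]
  have h2 : (t - 1) * (n - 2) < (n - 2) * Q.card := lt_of_lt_of_le hf h1
  rw [Nat.mul_comm (t-1)] at h2
  have hn2 : 0 < n - 2 := by omega
  have := Nat.lt_of_mul_lt_mul_left h2
  omega
end

section
/- Let n ≥ 3, let G be a simple graph on n vertices, and let t ≤ t_max, where t_max is the largest natural number with t_max·(t_max+1) < n−2. Then C(n,3) − t·(n−2) ≤ f(G) ≤ C(n,3) − t·(n−t−1) if and only if there exists a graph K on the vertex set of G that is a vertex-disjoint union of two complete graphs (of orders summing to n, one possibly empty) such that the symmetric difference of the edge sets of G and K has exactly t elements. -/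
open Finset

/-- `K` is a vertex-disjoint union of two complete graphs: the vertex set splits into two
(possibly empty) parts such that the edges are exactly the pairs of distinct vertices
lying in the same part. -/
def IsTwoCliques {V : Type*} (K : SimpleGraph V) : Prop :=
  ∃ X : Set V, ∀ u v : V, K.Adj u v ↔ (u ≠ v ∧ (u ∈ X ↔ v ∈ X))

namespace FT
open Classical
variable {n : ℕ}

/-- pair count -/
noncomputable def pc (P : Sym2 (Fin n) → Prop) : ℕ := (univ.filter P).card

lemma pc_congr {P Q : Sym2 (Fin n) → Prop} (h : ∀ e, P e ↔ Q e) : pc P = pc Q := by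
  unfold pc
  congr 1
  exact Finset.filter_congr (fun e _ => h e)

lemma pc_split (P Q R : Sym2 (Fin n) → Prop) (h : ∀ e, P e ↔ Q e ∨ R e)
    (hd : ∀ e, ¬(Q e ∧ R e)) : pc P = pc Q + pc R := by
  unfold pc
  rw [Finset.filter_congr (fun e _ => h e), filter_or,
    card_union_of_disjoint (disjoint_filter.2 (fun e _ hQ hR => hd e ⟨hQ, hR⟩))]

lemma pc_le {P Q : Sym2 (Fin n) → Prop} (h : ∀ e, P e → Q e) : pc P ≤ pc Q := by
  unfold pc
  exact card_le_card (fun e he => by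
    simp only [mem_filter, mem_univ, true_and] at he ⊢; exact h e he)

lemma pc_eq {P : Sym2 (Fin n) → Prop} {s : Finset (Sym2 (Fin n))} (h : ∀ e, P e ↔ e ∈ s) :
    pc P = s.card := by
  unfold pc; congr 1; ext e; simp [h e]

/-- edges of H inside finset s -/
noncomputable def kc (H : SimpleGraph (Fin n)) (s : Finset (Fin n)) : ℕ :=
  pc (fun e => e ∈ H.edgeSet ∧ ∀ x ∈ e, x ∈ s)

lemma kc_triple (H : SimpleGraph (Fin n)) {u v w : Fin n} (huv : u ≠ v) (huw : u ≠ w)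
    (hvw : v ≠ w) :
    kc H {u, v, w} = (if H.Adj u v then 1 else 0) + (if H.Adj u w then 1 else 0) +
      (if H.Adj v w then 1 else 0) := by
  classical
  have h1 : ∀ e : Sym2 (Fin n), (e ∈ H.edgeSet ∧ ∀ x ∈ e, x ∈ ({u, v, w} : Finset (Fin n))) ↔
      e ∈ ({s(u,v), s(u,w), s(v,w)} : Finset (Sym2 (Fin n))).filter (fun e => e ∈ H.edgeSet) := by
    intro e
    induction e with
    | _ a b =>
      simp only [mem_filter, mem_insert, mem_singleton,
        SimpleGraph.mem_edgeSet, Sym2.mem_iff, Sym2.eq_iff]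
      constructor
      · rintro ⟨hadj, hmem⟩
        have ha := hmem a (Or.inl rfl)
        have hb := hmem b (Or.inr rfl)
        have hab : a ≠ b := H.ne_of_adj hadj
        refine ⟨?_, hadj⟩
        rcases ha with rfl | rfl | rfl <;> rcases hb with rfl | rfl | rfl <;> tauto
      · rintro ⟨he, hadj⟩
        refine ⟨hadj, ?_⟩
        intro x hx
        rcases he with h | h | h <;> rcases h with ⟨rfl, rfl⟩ | ⟨rfl, rfl⟩ <;>
          rcases hx with rfl | rfl <;> tauto
  rw [kc, pc_eq h1, card_filter]
  have d1 : s(u,v) ≠ s(u,w) := by simp [Sym2.eq_iff]; tauto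
  have d2 : s(u,v) ≠ s(v,w) := by simp [Sym2.eq_iff]; tauto
  have d3 : s(u,w) ≠ s(v,w) := by simp [Sym2.eq_iff]; tauto
  rw [sum_insert (by simp [d1, d2]), sum_insert (by simp [d3]), sum_singleton]
  simp only [SimpleGraph.mem_edgeSet]
  exact (add_assoc _ _ _).symm


/-- edge count -/
noncomputable def ec (H : SimpleGraph (Fin n)) : ℕ := pc (fun e => e ∈ H.edgeSet)

/-- the set of all 3-element subsets -/
noncomputable def T3 (n : ℕ) : Finset (Finset (Fin n)) := (univ : Finset (Fin n)).powersetCard 3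

lemma card_T3 : (T3 n).card = Nat.choose n 3 := by
  simp [T3, card_powersetCard]

/-- # triples with odd edge count -/
noncomputable def gc (H : SimpleGraph (Fin n)) : ℕ := ((T3 n).filter (fun s => Odd (kc H s))).card

lemma count_supersets {a b : Fin n} (hab : a ≠ b) :
    ((T3 n).filter (fun s => a ∈ s ∧ b ∈ s)).card = n - 2 := by
  classical
  have hcard : (((univ : Finset (Fin n)).erase a).erase b).card = n - 2 := by
    rw [card_erase_of_mem (by simp [hab.symm]), card_erase_of_mem (by simp)]
    simp only [Finset.card_univ, Fintype.card_fin]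
    omega
  rw [← hcard]
  apply Eq.symm
  apply Finset.card_bij (fun w _ => ({a, b, w} : Finset (Fin n)))
  · intro w hw
    simp only [mem_erase, mem_univ, and_true] at hw
    simp only [mem_filter, T3, mem_powersetCard_univ]
    refine ⟨?_, by simp, by simp⟩
    rw [card_insert_of_notMem (by simp [hab, hw.1]; tauto),
      card_insert_of_notMem (by simp [hw.2]; tauto), card_singleton]
  · intro w1 h1 w2 h2 heq
    simp only [mem_erase, mem_univ, and_true] at h1 h2
    have : w1 ∈ ({a, b, w2} : Finset (Fin n)) := heq ▸ (by simp)
    simp only [mem_insert, mem_singleton] at this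
    tauto
  · intro s hs
    simp only [mem_filter, T3, mem_powersetCard_univ] at hs
    obtain ⟨h3, ha, hb⟩ := hs
    have hsub : ({a, b} : Finset (Fin n)) ⊆ s := by
      intro x hx; simp only [mem_insert, mem_singleton] at hx; rcases hx with rfl | rfl <;> assumption
    have hc2 : ({a, b} : Finset (Fin n)).card = 2 := by
      rw [card_insert_of_notMem (by simp [hab]), card_singleton]
    have : (s \ {a, b}).card = 1 := by
      rw [card_sdiff_of_subset hsub, h3, hc2]
    obtain ⟨w, hw⟩ := Finset.card_eq_one.mp this
    have hwmem : w ∈ s \ ({a,b} : Finset (Fin n)) := hw ▸ mem_singleton_self w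
    simp only [mem_sdiff, mem_insert, mem_singleton] at hwmem
    refine ⟨w, ?_, ?_⟩
    · simp only [mem_erase, mem_univ, and_true]
      exact ⟨fun h => hwmem.2 (Or.inr h), fun h => hwmem.2 (Or.inl h)⟩
    · have : ({a, b} : Finset (Fin n)) ∪ (s \ {a, b}) = s := Finset.union_sdiff_of_subset hsub
      rw [hw] at this
      rw [← this]
      ext x; simp only [mem_insert, mem_singleton, mem_union]; tauto

lemma kc_as_sum (H : SimpleGraph (Fin n)) (s : Finset (Fin n)) :
    kc H s = ∑ e ∈ (univ : Finset (Sym2 (Fin n))),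
      (if e ∈ H.edgeSet ∧ ∀ x ∈ e, x ∈ s then 1 else 0) := by
  classical
  rw [kc, pc, card_filter]
  refine Finset.sum_congr rfl fun e _ => ?_
  congr

lemma sum_kc (H : SimpleGraph (Fin n)) :
    ∑ s ∈ T3 n, kc H s = ec H * (n - 2) := by
  classical
  have h1 : ∑ s ∈ T3 n, kc H s = ∑ e ∈ (univ : Finset (Sym2 (Fin n))), ∑ s ∈ T3 n,
      (if e ∈ H.edgeSet ∧ ∀ x ∈ e, x ∈ s then 1 else 0) := by
    rw [← Finset.sum_comm]
    exact Finset.sum_congr rfl (fun s _ => kc_as_sum H s)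
  rw [h1]
  have h2 : ∀ e ∈ (univ : Finset (Sym2 (Fin n))),
      (∑ s ∈ T3 n, (if e ∈ H.edgeSet ∧ ∀ x ∈ e, x ∈ s then 1 else 0) : ℕ)
        = if e ∈ H.edgeSet then n - 2 else 0 := by
    intro e _
    by_cases he : e ∈ H.edgeSet
    · simp only [he, if_true, true_and]
      induction e with
      | _ a b =>
        have hab : a ≠ b := fun h => H.not_isDiag_of_mem_edgeSet he (by simp [h])
        rw [← count_supersets hab, card_filter]
        apply Finset.sum_congr rfl
        intro s _
        congr 1
        simp only [Sym2.mem_iff, eq_iff_iff]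
        constructor
        · intro h; exact ⟨h a (Or.inl rfl), h b (Or.inr rfl)⟩
        · rintro ⟨ha, hb⟩ x hx; rcases hx with rfl | rfl <;> assumption
    · simp [he]
  rw [Finset.sum_congr rfl h2]
  simp [Finset.sum_ite, Finset.sum_const, ec, pc, mul_comm]
  exact Or.inl (by congr)


lemma kc_le_three (H : SimpleGraph (Fin n)) {s : Finset (Fin n)} (hs : s ∈ T3 n) :
    kc H s ≤ 3 := by
  classical
  rw [T3, mem_powersetCard_univ] at hs
  obtain ⟨u, v, w, huv, huw, hvw, rfl⟩ := Finset.card_eq_three.mp hs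
  rw [kc_triple H huv huw hvw]
  split_ifs <;> norm_num

lemma triple_eq_of_two {e f : Sym2 (Fin n)} {s : Finset (Fin n)}
    (he : ¬e.IsDiag) (hf : ¬f.IsDiag) (hef : e ≠ f)
    (hes : ∀ x ∈ e, x ∈ s) (hfs : ∀ x ∈ f, x ∈ s) (h3 : s.card = 3) :
    s = univ.filter (fun x => x ∈ e ∨ x ∈ f) := by
  classical
  apply Eq.symm
  apply Finset.eq_of_subset_of_card_le
  · intro x hx
    simp only [mem_filter, mem_univ, true_and] at hx
    rcases hx with hx | hx
    · exact hes x hx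
    · exact hfs x hx
  · rw [h3]
    induction e with
    | _ a b =>
      induction f with
      | _ c d =>
        have hab : a ≠ b := by simpa using he
        have hcd : c ≠ d := by simpa using hf
        have hx : ∃ x, (x = c ∨ x = d) ∧ x ≠ a ∧ x ≠ b := by
          by_contra hcon
          push_neg at hcon
          have h1 := hcon c (Or.inl rfl)
          have h2 := hcon d (Or.inr rfl)
          apply hef
          rw [Sym2.eq_iff]
          have h1' : c = a ∨ c = b := by tauto
          have h2' : d = a ∨ d = b := by tauto
          rcases h1' with rfl | rfl <;> rcases h2' with rfl | rfl
          · exact absurd rfl hcd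
          · tauto
          · tauto
          · exact absurd rfl hcd
        obtain ⟨x, hx1, hx2, hx3⟩ := hx
        have hsub : insert x ({a, b} : Finset (Fin n)) ⊆
            univ.filter (fun y => y ∈ s(a,b) ∨ y ∈ s(c,d)) := by
          intro y hy
          simp only [mem_insert, mem_singleton] at hy
          simp only [mem_filter, mem_univ, true_and, Sym2.mem_iff]
          rcases hy with rfl | rfl | rfl <;> tauto
        calc 3 = (insert x ({a, b} : Finset (Fin n))).card := by
              rw [card_insert_of_notMem (by simp [hx2, hx3]),
                card_insert_of_notMem (by simp [hab]), card_singleton]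
          _ ≤ _ := card_le_card hsub

lemma sum_choose_le (H : SimpleGraph (Fin n)) :
    ∑ s ∈ T3 n, Nat.choose (kc H s) 2 ≤ Nat.choose (ec H) 2 := by
  classical
  set Es : Finset (Fin n) → Finset (Sym2 (Fin n)) :=
    fun s => univ.filter (fun e => e ∈ H.edgeSet ∧ ∀ x ∈ e, x ∈ s) with hEs
  have hkc : ∀ s, kc H s = (Es s).card := fun s => pc_eq (fun e => by simp [hEs])
  have hdisj : ∀ s ∈ T3 n, ∀ s' ∈ T3 n, s ≠ s' →
      Disjoint ((Es s).powersetCard 2) ((Es s').powersetCard 2) := by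
    intro s hs s' hs' hne
    rw [Finset.disjoint_left]
    intro p hp hp'
    rw [Finset.mem_powersetCard] at hp hp'
    obtain ⟨hsub, hc2⟩ := hp
    obtain ⟨hsub', _⟩ := hp'
    obtain ⟨e, f, hef, rfl⟩ := Finset.card_eq_two.mp hc2
    have hes : e ∈ Es s := hsub (by simp)
    have hfs : f ∈ Es s := hsub (by simp)
    have hes' : e ∈ Es s' := hsub' (by simp)
    have hfs' : f ∈ Es s' := hsub' (by simp)
    simp only [hEs, mem_filter, mem_univ, true_and] at hes hfs hes' hfs'
    rw [T3, mem_powersetCard_univ] at hs hs'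
    apply hne
    rw [triple_eq_of_two (H.not_isDiag_of_mem_edgeSet hes.1)
      (H.not_isDiag_of_mem_edgeSet hfs.1) hef hes.2 hfs.2 hs,
      triple_eq_of_two (H.not_isDiag_of_mem_edgeSet hes'.1)
      (H.not_isDiag_of_mem_edgeSet hfs'.1) hef hes'.2 hfs'.2 hs']
  calc ∑ s ∈ T3 n, Nat.choose (kc H s) 2
      = ∑ s ∈ T3 n, ((Es s).powersetCard 2).card := by
        refine Finset.sum_congr rfl fun s _ => ?_
        rw [card_powersetCard, hkc]
    _ = ((T3 n).biUnion (fun s => (Es s).powersetCard 2)).card :=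
        (Finset.card_biUnion hdisj).symm
    _ ≤ ((univ.filter (fun e => e ∈ H.edgeSet)).powersetCard 2).card := by
        apply card_le_card
        intro p hp
        rw [Finset.mem_biUnion] at hp
        obtain ⟨s, _, hp⟩ := hp
        rw [Finset.mem_powersetCard] at hp ⊢
        refine ⟨fun e he => ?_, hp.2⟩
        have := hp.1 he
        simp only [hEs, mem_filter, mem_univ, true_and] at this
        simp only [mem_filter, mem_univ, true_and]
        exact this.1
    _ = Nat.choose (ec H) 2 := by
        rw [card_powersetCard, show ec H = (univ.filter (fun e => e ∈ H.edgeSet)).card from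
          pc_eq (fun e => by simp)]

lemma aux_j (j : ℕ) (hj : j ≤ 3) : j ≤ (if Odd j then 1 else 0) + 2 * Nat.choose j 2 := by
  interval_cases j <;> decide

lemma gc_le (H : SimpleGraph (Fin n)) : gc H ≤ ec H * (n - 2) := by
  classical
  rw [← sum_kc, gc, card_filter]
  apply Finset.sum_le_sum
  intro s hs
  split_ifs with h
  · exact h.pos
  · exact Nat.zero_le _

lemma gc_ge (H : SimpleGraph (Fin n)) :
    ec H * (n - 2) ≤ gc H + 2 * Nat.choose (ec H) 2 := by
  classical
  rw [← sum_kc, gc, card_filter]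
  calc ∑ s ∈ T3 n, kc H s
      ≤ ∑ s ∈ T3 n, ((if Odd (kc H s) then 1 else 0) + 2 * Nat.choose (kc H s) 2) :=
        Finset.sum_le_sum (fun s hs => aux_j _ (kc_le_three H hs))
    _ = (∑ s ∈ T3 n, (if Odd (kc H s) then 1 else 0)) + 2 * ∑ s ∈ T3 n, Nat.choose (kc H s) 2 := by
        rw [Finset.sum_add_distrib, Finset.mul_sum]
    _ ≤ _ := by
        gcongr
        exact sum_choose_le H


/-- two-clique graph from a finset -/
def ksg (X : Finset (Fin n)) : SimpleGraph (Fin n) where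
  Adj u v := u ≠ v ∧ ((u ∈ X) ↔ (v ∈ X))
  symm := ⟨by intro u v h; exact ⟨fun hc => h.1 hc.symm, h.2.symm⟩⟩
  loopless := ⟨by intro u h; exact h.1 rfl⟩

/-- the flip (xor) graph -/
def hsg (G : SimpleGraph (Fin n)) (X : Finset (Fin n)) : SimpleGraph (Fin n) where
  Adj u v := ¬(G.Adj u v ↔ (ksg X).Adj u v)
  symm := ⟨by
    intro u v h
    simp only [G.adj_comm u v, (ksg X).adj_comm u v] at h
    exact h⟩
  loopless := ⟨by
    intro u h
    exact h (iff_of_false G.irrefl (ksg X).irrefl)⟩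

lemma ksg_isTwoCliques (X : Finset (Fin n)) : IsTwoCliques (ksg X) :=
  ⟨(X : Set (Fin n)), fun u v => by simp [ksg]⟩

lemma hsg_edgeSet (G : SimpleGraph (Fin n)) (X : Finset (Fin n)) :
    symmDiff G.edgeSet (ksg X).edgeSet = (hsg G X).edgeSet := by
  ext e
  induction e with
  | _ a b =>
    simp only [Set.mem_symmDiff, SimpleGraph.mem_edgeSet]
    show _ ↔ ¬(G.Adj a b ↔ (ksg X).Adj a b)
    tauto

lemma ncard_symmDiff (G : SimpleGraph (Fin n)) (X : Finset (Fin n)) :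
    (symmDiff G.edgeSet (ksg X).edgeSet).ncard = ec (hsg G X) := by
  classical
  rw [hsg_edgeSet]
  rw [show (hsg G X).edgeSet = ↑(univ.filter (fun e => e ∈ (hsg G X).edgeSet)) by ext e; simp,
    Set.ncard_coe_finset]
  exact (pc_eq fun e => by simp).symm

set_option maxHeartbeats 1000000 in
lemma odd_kc_iff (G : SimpleGraph (Fin n)) (X : Finset (Fin n)) {u v w : Fin n}
    (huv : u ≠ v) (huw : u ≠ w) (hvw : v ≠ w) :
    Odd (kc G {u, v, w}) ↔ ¬ Odd (kc (hsg G X) {u, v, w}) := by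
  rw [kc_triple G huv huw hvw, kc_triple (hsg G X) huv huw hvw]
  have e1 : (hsg G X).Adj u v ↔ ¬(G.Adj u v ↔ (u ≠ v ∧ ((u ∈ X) ↔ (v ∈ X)))) := Iff.rfl
  have e2 : (hsg G X).Adj u w ↔ ¬(G.Adj u w ↔ (u ≠ w ∧ ((u ∈ X) ↔ (w ∈ X)))) := Iff.rfl
  have e3 : (hsg G X).Adj v w ↔ ¬(G.Adj v w ↔ (v ≠ w ∧ ((v ∈ X) ↔ (w ∈ X)))) := Iff.rfl
  rw [e1, e2, e3]
  by_cases h1 : G.Adj u v <;> by_cases h2 : G.Adj u w <;> by_cases h3 : G.Adj v w <;>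
    by_cases x1 : u ∈ X <;> by_cases x2 : v ∈ X <;> by_cases x3 : w ∈ X <;>
      simp [h1, h2, h3, x1, x2, x3, huv, huw, hvw, Nat.odd_iff]

lemma frustrated_iff (G : SimpleGraph (Fin n)) {u v w : Fin n}
    (huv : u ≠ v) (huw : u ≠ w) (hvw : v ≠ w) :
    frustrated G u v w ↔ Odd (kc G {u, v, w}) := by
  rw [kc_triple G huv huw hvw, frustrated]

lemma fCount_eq_s4 (G : SimpleGraph (Fin n)) :
    fCount G = ((T3 n).filter (fun s => Odd (kc G s))).card := by
  classical
  unfold fCount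
  rw [T3]
  congr 1
  convert Finset.filter_congr ?_
  intro s hs
  rw [mem_powersetCard_univ] at hs
  constructor
  · rintro ⟨u, v, w, huv, huw, hvw, rfl, hf⟩
    exact (frustrated_iff G huv huw hvw).mp hf
  · intro h
    obtain ⟨u, v, w, huv, huw, hvw, rfl⟩ := Finset.card_eq_three.mp hs
    exact ⟨u, v, w, huv, huw, hvw, rfl, (frustrated_iff G huv huw hvw).mpr h⟩

lemma fCount_split (G : SimpleGraph (Fin n)) (X : Finset (Fin n)) :
    fCount G + gc (hsg G X) = Nat.choose n 3 := by
  classical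
  rw [fCount_eq_s4, gc, ← card_T3 (n := n)]
  rw [show (T3 n).filter (fun s => Odd (kc (hsg G X) s)) =
      (T3 n).filter (fun s => ¬ Odd (kc G s)) from Finset.filter_congr ?_]
  · exact Finset.card_filter_add_card_filter_not _
  · intro s hs
    have h3 : s.card = 3 := by rwa [T3, mem_powersetCard_univ] at hs
    obtain ⟨u, v, w, huv, huw, hvw, rfl⟩ := Finset.card_eq_three.mp h3
    have := odd_kc_iff G X huv huw hvw
    tauto


/-- split pairs -/
def sp (A B : Finset (Fin n)) (e : Sym2 (Fin n)) : Prop := ∃ a ∈ A, ∃ b ∈ B, e = s(a, b)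

lemma sp_iff {A B : Finset (Fin n)} {a b : Fin n} :
    sp A B s(a, b) ↔ (a ∈ A ∧ b ∈ B) ∨ (b ∈ A ∧ a ∈ B) := by
  constructor
  · rintro ⟨x, hx, y, hy, hxy⟩
    rw [Sym2.eq_iff] at hxy
    rcases hxy with ⟨rfl, rfl⟩ | ⟨rfl, rfl⟩ <;> tauto
  · rintro (⟨h1, h2⟩ | ⟨h1, h2⟩)
    · exact ⟨a, h1, b, h2, rfl⟩
    · exact ⟨b, h1, a, h2, Sym2.eq_swap.symm⟩

lemma pair_forall {P : Fin n → Prop} {a b : Fin n} :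
    (∀ x ∈ s(a, b), P x) ↔ P a ∧ P b := by
  constructor
  · intro h; exact ⟨h a (by simp), h b (by simp)⟩
  · rintro ⟨h1, h2⟩ x hx
    rcases Sym2.mem_iff.mp hx with rfl | rfl <;> assumption

lemma sp_card {A B : Finset (Fin n)} (hd : ∀ x, ¬(x ∈ A ∧ x ∈ B)) :
    pc (sp A B) = A.card * B.card := by
  classical
  rw [pc, ← Finset.card_product]
  apply Eq.symm
  apply Finset.card_bij (fun (p : Fin n × Fin n) _ => s(p.1, p.2))
  · intro p hp
    rw [Finset.mem_product] at hp
    simp only [mem_filter, mem_univ, true_and]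
    exact ⟨p.1, hp.1, p.2, hp.2, rfl⟩
  · intro p hp q hq heq
    rw [Finset.mem_product] at hp hq
    rw [Sym2.eq_iff] at heq
    rcases heq with ⟨h1, h2⟩ | ⟨h1, h2⟩
    · exact Prod.ext h1 h2
    · exfalso
      apply hd q.2
      exact ⟨h1 ▸ hp.1, hq.2⟩
  · intro e he
    simp only [mem_filter, mem_univ, true_and] at he
    obtain ⟨a, ha, b, hb, rfl⟩ := he
    exact ⟨(a, b), Finset.mem_product.mpr ⟨ha, hb⟩, rfl⟩

lemma supp_inj {e f : Sym2 (Fin n)} (he : ¬e.IsDiag) (_hf : ¬f.IsDiag)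
    (h : (univ.filter (· ∈ e)) = (univ.filter (· ∈ f))) : e = f := by
  classical
  induction e with
  | _ a b =>
    induction f with
    | _ c d =>
      have hab : a ≠ b := by simpa using he
      have key : ∀ x : Fin n, x ∈ s(a,b) ↔ x ∈ s(c,d) := by
        intro x
        have := Finset.ext_iff.mp h x
        simpa using this
      have ha := (key a).mp (by simp)
      have hb := (key b).mp (by simp)
      rw [Sym2.mem_iff] at ha hb
      rw [Sym2.eq_iff]
      rcases ha with rfl | rfl <;> rcases hb with rfl | rfl
      · exact absurd rfl hab
      · tauto
      · tauto
      · exact absurd rfl hab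


lemma suppF_pair {a b : Fin n} :
    ((univ : Finset (Fin n)).filter (· ∈ s(a, b))) = {a, b} := by
  ext x; simp [Sym2.mem_iff]

lemma gv_as_pairs (H : SimpleGraph (Fin n)) (v : Fin n) :
    ((T3 n).filter (fun s => Odd (kc H s) ∧ v ∈ s)).card =
    pc (fun e : Sym2 (Fin n) => (∀ x ∈ e, ¬ x = v) ∧ ¬e.IsDiag ∧
      Odd (kc H (insert v (univ.filter (· ∈ e))))) := by
  classical
  rw [pc]
  refine Eq.symm (Finset.card_bij (fun e _ => insert v (univ.filter (· ∈ e))) ?_ ?_ ?_)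
  · intro e he
    simp only [mem_filter, mem_univ, true_and] at he
    obtain ⟨hnv, hnd, hodd⟩ := he
    have hvs : v ∉ (univ.filter (· ∈ e)) := by
      simp only [mem_filter, mem_univ, true_and]
      intro hv; exact hnv v hv rfl
    rw [mem_filter]
    refine ⟨?_, hodd, by simp⟩
    rw [T3, mem_powersetCard_univ, card_insert_of_notMem hvs]
    induction e with
    | _ a b =>
      have hab : a ≠ b := by simpa using hnd
      rw [suppF_pair, card_insert_of_notMem (by simp [hab]), card_singleton]
  · intro e1 h1 e2 h2 heq
    simp only [mem_filter, mem_univ, true_and] at h1 h2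
    have hv1 : v ∉ (univ.filter (· ∈ e1)) := by
      simp only [mem_filter, mem_univ, true_and]; intro hv; exact h1.1 v hv rfl
    have hv2 : v ∉ (univ.filter (· ∈ e2)) := by
      simp only [mem_filter, mem_univ, true_and]; intro hv; exact h2.1 v hv rfl
    have := congrArg (fun s => Finset.erase s v) heq
    simp only [Finset.erase_insert hv1, Finset.erase_insert hv2] at this
    exact supp_inj h1.2.1 h2.2.1 this
  · intro s hs
    simp only [mem_filter] at hs
    obtain ⟨hT3, hodd, hvs⟩ := hs
    have h3 : s.card = 3 := by rwa [T3, mem_powersetCard_univ] at hT3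
    have h2 : (s.erase v).card = 2 := by rw [card_erase_of_mem hvs, h3]
    obtain ⟨a, b, hab, habs⟩ := Finset.card_eq_two.mp h2
    have hins : insert v (univ.filter (· ∈ s(a, b))) = s := by
      rw [suppF_pair, ← habs, Finset.insert_erase hvs]
    refine ⟨s(a, b), ?_, hins⟩
    simp only [mem_filter, mem_univ, true_and]
    refine ⟨?_, by simpa using hab, by rwa [hins]⟩
    have hmem : ∀ y ∈ ({a, b} : Finset (Fin n)), ¬ y = v := by
      intro y hy
      rw [← habs] at hy
      exact (Finset.mem_erase.mp hy).1
    intro x hx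
    rcases Sym2.mem_iff.mp hx with rfl | rfl
    · exact hmem _ (by simp)
    · exact hmem _ (by simp)


set_option maxHeartbeats 1600000 in
lemma gv_ge (G : SimpleGraph (Fin n)) (X : Finset (Fin n))
    (hmin : ∀ Y : Finset (Fin n), ec (hsg G X) ≤ ec (hsg G Y)) (v : Fin n) :
    ec (hsg G X) ≤ ((T3 n).filter (fun s => Odd (kc (hsg G X) s) ∧ v ∈ s)).card := by
  classical
  set H := hsg G X with hHdef
  set N : Finset (Fin n) := H.neighborFinset v with hNdef
  set M : Finset (Fin n) := (univ.erase v) \ N with hMdef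
  set d : ℕ := N.card with hddef
  -- basic vertex facts
  have hAdjN : ∀ x, x ∈ N ↔ H.Adj v x := fun x => SimpleGraph.mem_neighborFinset H v x
  have hNv : v ∉ N := by rw [hAdjN]; exact H.irrefl
  have hMv : v ∉ M := by simp [hMdef]
  have hNM : ∀ x, ¬(x ∈ N ∧ x ∈ M) := by
    intro x ⟨h1, h2⟩
    rw [hMdef, mem_sdiff] at h2
    exact h2.2 h1
  have hcov : ∀ x : Fin n, x = v ∨ x ∈ N ∨ x ∈ M := by
    intro x
    by_cases hxv : x = v
    · exact Or.inl hxv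
    by_cases hxN : x ∈ N
    · exact Or.inr (Or.inl hxN)
    · exact Or.inr (Or.inr (by rw [hMdef, mem_sdiff, mem_erase]; exact ⟨⟨hxv, mem_univ x⟩, hxN⟩))
  have hdn : d ≤ n - 1 := by
    have : N ⊆ univ.erase v := fun x hx => by
      rw [mem_erase]
      exact ⟨fun h => hNv (h ▸ hx), mem_univ x⟩
    calc d ≤ (univ.erase v).card := card_le_card this
      _ = n - 1 := by rw [card_erase_of_mem (mem_univ v), card_univ, Fintype.card_fin]
  have hMcard : M.card = n - 1 - d := by
    rw [hMdef, card_sdiff_of_subset (fun x hx => by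
      rw [mem_erase]; exact ⟨fun h => hNv (h ▸ hx), mem_univ x⟩)]
    rw [card_erase_of_mem (mem_univ v), card_univ, Fintype.card_fin, hddef]
  -- incidence count
  have hinc : pc (fun e => e ∈ H.edgeSet ∧ v ∈ e) = d := by
    rw [pc_eq (s := H.incidenceFinset v) (fun e => by
      rw [SimpleGraph.mem_incidenceFinset]; exact Iff.rfl)]
    rw [SimpleGraph.card_incidenceFinset_eq_degree]
    rfl
  -- edge decomposition: m = eN + eM + eNM + d
  have hs1 : ec H = pc (fun e => e ∈ H.edgeSet ∧ v ∈ e) +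
      pc (fun e => e ∈ H.edgeSet ∧ v ∉ e) :=
    pc_split _ _ _ (fun e => by tauto) (fun e => by tauto)
  have hs2 : pc (fun e => e ∈ H.edgeSet ∧ v ∉ e) =
      kc H N + pc (fun e => (e ∈ H.edgeSet ∧ v ∉ e) ∧ ¬∀ x ∈ e, x ∈ N) := by
    apply pc_split
    · intro e
      induction e with
      | _ a b =>
        constructor
        · intro ⟨h1, h2⟩
          by_cases hin : ∀ x ∈ s(a,b), x ∈ N
          · exact Or.inl ⟨h1, hin⟩
          · exact Or.inr ⟨⟨h1, h2⟩, hin⟩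
        · rintro (⟨h1, h2⟩ | ⟨⟨h1, h2⟩, _⟩)
          · refine ⟨h1, fun hv => hNv (h2 v hv)⟩
          · exact ⟨h1, h2⟩
    · intro e ⟨⟨_, h1⟩, ⟨_, h2⟩⟩
      exact h2 h1
  have hnotmem : ∀ {x y : Fin n}, ¬v = x → ¬v = y → v ∉ s(x, y) :=
    fun hx hy hm => (Sym2.mem_iff.mp hm).elim hx hy
  have hs3 : pc (fun e => (e ∈ H.edgeSet ∧ v ∉ e) ∧ ¬∀ x ∈ e, x ∈ N) =
      kc H M + pc (fun e => e ∈ H.edgeSet ∧ sp N M e) := by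
    apply pc_split
    · intro e
      induction e with
      | _ a b =>
        simp only [pair_forall, SimpleGraph.mem_edgeSet, sp_iff]
        constructor
        · rintro ⟨⟨hadj, hv⟩, hnN⟩
          have hva : ¬ v = a := fun h => hv (Sym2.mem_iff.mpr (Or.inl h))
          have hvb : ¬ v = b := fun h => hv (Sym2.mem_iff.mpr (Or.inr h))
          rcases hcov a with h | h | h
          · exact absurd h.symm hva
          · rcases hcov b with h' | h' | h'
            · exact absurd h'.symm hvb
            · exact absurd ⟨h, h'⟩ hnN
            · exact Or.inr ⟨hadj, Or.inl ⟨h, h'⟩⟩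
          · rcases hcov b with h' | h' | h'
            · exact absurd h'.symm hvb
            · exact Or.inr ⟨hadj, Or.inr ⟨h', h⟩⟩
            · exact Or.inl ⟨hadj, h, h'⟩
        · rintro (⟨hadj, ha, hb⟩ | ⟨hadj, hsp⟩)
          · refine ⟨⟨hadj, hnotmem (fun h => hMv (h ▸ ha)) (fun h => hMv (h ▸ hb))⟩,
              fun ⟨h1, _⟩ => hNM a ⟨h1, ha⟩⟩
          · rcases hsp with ⟨ha, hb⟩ | ⟨hb, ha⟩
            · exact ⟨⟨hadj, hnotmem (fun h => hNv (h ▸ ha)) (fun h => hMv (h ▸ hb))⟩,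
                fun ⟨h1, h2⟩ => hNM b ⟨h2, hb⟩⟩
            · exact ⟨⟨hadj, hnotmem (fun h => hMv (h ▸ ha)) (fun h => hNv (h ▸ hb))⟩,
                fun ⟨h1, h2⟩ => hNM a ⟨h1, ha⟩⟩
    · intro e ⟨⟨_, hM⟩, ⟨_, hsp⟩⟩
      obtain ⟨a, haN, b, hbM, rfl⟩ := hsp
      exact hNM a ⟨haN, hM a (by simp)⟩
  -- the triple count at v
  have hgv : ((T3 n).filter (fun s => Odd (kc H s) ∧ v ∈ s)).card =
      kc H N + (kc H M + pc (fun e => sp N M e ∧ e ∉ H.edgeSet)) := by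
    rw [gv_as_pairs H v]
    rw [pc_split _ (fun e => e ∈ H.edgeSet ∧ ∀ x ∈ e, x ∈ N)
      (fun e => (e ∈ H.edgeSet ∧ ∀ x ∈ e, x ∈ M) ∨ (sp N M e ∧ e ∉ H.edgeSet)) ?_ ?_]
    · rw [pc_split _ (fun e => e ∈ H.edgeSet ∧ ∀ x ∈ e, x ∈ M)
        (fun e => sp N M e ∧ e ∉ H.edgeSet) (fun e => Iff.rfl) ?_]
      · rfl
      · intro e ⟨⟨hadj, hM⟩, ⟨hsp, _⟩⟩
        obtain ⟨a, haN, b, hbM, rfl⟩ := hsp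
        exact hNM a ⟨haN, hM a (by simp)⟩
    · intro e
      induction e with
      | _ a b =>
        simp only [pair_forall, SimpleGraph.mem_edgeSet, sp_iff, Sym2.isDiag_iff_proj_eq]
        constructor
        · rintro ⟨⟨hna, hnb⟩, hnd, hodd⟩
          have hva : v ≠ a := fun h => hna h.symm
          have hvb : v ≠ b := fun h => hnb h.symm
          rw [show (insert v (univ.filter (· ∈ s(a, b)))) = {v, a, b} by
            rw [suppF_pair], kc_triple H hva hvb hnd] at hodd
          rcases hcov a with h | h | h
          · exact absurd h hna
          all_goals rcases hcov b with h' | h' | h'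
          · exact absurd h' hnb
          · -- a ∈ N, b ∈ N
            have e1 : H.Adj v a := (hAdjN a).mp h
            have e2 : H.Adj v b := (hAdjN b).mp h'
            rw [if_pos e1, if_pos e2] at hodd
            by_cases hadj : H.Adj a b
            · exact Or.inl ⟨hadj, h, h'⟩
            · rw [if_neg hadj] at hodd; simp [Nat.odd_iff] at hodd
          · -- a ∈ N, b ∈ M
            have e1 : H.Adj v a := (hAdjN a).mp h
            have e2 : ¬ H.Adj v b := fun hc => hNM b ⟨(hAdjN b).mpr hc, h'⟩
            rw [if_pos e1, if_neg e2] at hodd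
            by_cases hadj : H.Adj a b
            · rw [if_pos hadj] at hodd; simp [Nat.odd_iff] at hodd
            · exact Or.inr (Or.inr ⟨Or.inl ⟨h, h'⟩, hadj⟩)
          · exact absurd h' hnb
          · -- a ∈ M, b ∈ N
            have e1 : ¬ H.Adj v a := fun hc => hNM a ⟨(hAdjN a).mpr hc, h⟩
            have e2 : H.Adj v b := (hAdjN b).mp h'
            rw [if_neg e1, if_pos e2] at hodd
            by_cases hadj : H.Adj a b
            · rw [if_pos hadj] at hodd; simp [Nat.odd_iff] at hodd
            · exact Or.inr (Or.inr ⟨Or.inr ⟨h', h⟩, hadj⟩)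
          · -- a ∈ M, b ∈ M
            have e1 : ¬ H.Adj v a := fun hc => hNM a ⟨(hAdjN a).mpr hc, h⟩
            have e2 : ¬ H.Adj v b := fun hc => hNM b ⟨(hAdjN b).mpr hc, h'⟩
            rw [if_neg e1, if_neg e2] at hodd
            by_cases hadj : H.Adj a b
            · exact Or.inr (Or.inl ⟨hadj, h, h'⟩)
            · rw [if_neg hadj] at hodd; simp [Nat.odd_iff] at hodd
        · intro hcase
          have hdata : (¬ a = v ∧ ¬ b = v) ∧ ¬ a = b ∧
              ((H.Adj v a ↔ True) ∧ (H.Adj v b ↔ True) ∧ (H.Adj a b ↔ True) ∨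
               (H.Adj v a ↔ True) ∧ (H.Adj v b ↔ False) ∧ (H.Adj a b ↔ False) ∨
               (H.Adj v a ↔ False) ∧ (H.Adj v b ↔ True) ∧ (H.Adj a b ↔ False) ∨
               (H.Adj v a ↔ False) ∧ (H.Adj v b ↔ False) ∧ (H.Adj a b ↔ True)) := by
            rcases hcase with ⟨hadj, ha, hb⟩ | ⟨hadj, ha, hb⟩ | ⟨hsp, hnadj⟩
            · refine ⟨⟨fun h => hNv (h ▸ ha), fun h => hNv (h ▸ hb)⟩, H.ne_of_adj hadj, ?_⟩
              exact Or.inl ⟨iff_of_true ((hAdjN a).mp ha) trivial,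
                iff_of_true ((hAdjN b).mp hb) trivial, iff_of_true hadj trivial⟩
            · refine ⟨⟨fun h => hMv (h ▸ ha), fun h => hMv (h ▸ hb)⟩, H.ne_of_adj hadj, ?_⟩
              refine Or.inr (Or.inr (Or.inr ⟨?_, ?_, iff_of_true hadj trivial⟩))
              · exact iff_of_false (fun hc => hNM a ⟨(hAdjN a).mpr hc, ha⟩) not_false
              · exact iff_of_false (fun hc => hNM b ⟨(hAdjN b).mpr hc, hb⟩) not_false
            · rcases hsp with ⟨ha, hb⟩ | ⟨hb, ha⟩
              · refine ⟨⟨fun h => hNv (h ▸ ha), fun h => hMv (h ▸ hb)⟩,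
                  fun h => hNM a ⟨ha, h ▸ hb⟩, ?_⟩
                refine Or.inr (Or.inl ⟨iff_of_true ((hAdjN a).mp ha) trivial, ?_,
                  iff_of_false hnadj not_false⟩)
                exact iff_of_false (fun hc => hNM b ⟨(hAdjN b).mpr hc, hb⟩) not_false
              · refine ⟨⟨fun h => hMv (h ▸ ha), fun h => hNv (h ▸ hb)⟩,
                  fun h => hNM b ⟨hb, h ▸ ha⟩, ?_⟩
                refine Or.inr (Or.inr (Or.inl ⟨?_, iff_of_true ((hAdjN b).mp hb) trivial,
                  iff_of_false hnadj not_false⟩))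
                exact iff_of_false (fun hc => hNM a ⟨(hAdjN a).mpr hc, ha⟩) not_false
          obtain ⟨⟨hna, hnb⟩, hnd, hodds⟩ := hdata
          have hva : v ≠ a := fun h => hna h.symm
          have hvb : v ≠ b := fun h => hnb h.symm
          refine ⟨⟨hna, hnb⟩, hnd, ?_⟩
          rw [show (insert v (univ.filter (· ∈ s(a, b)))) = {v, a, b} by
            rw [suppF_pair], kc_triple H hva hvb hnd]
          rcases hodds with ⟨i1, i2, i3⟩ | ⟨i1, i2, i3⟩ | ⟨i1, i2, i3⟩ | ⟨i1, i2, i3⟩ <;>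
            simp [i1, i2, i3] <;> decide
    · intro e ⟨⟨_, hN⟩, hrest⟩
      rcases hrest with ⟨_, hM⟩ | ⟨hsp, hne⟩
      · induction e with
        | _ a b => exact hNM a ⟨hN a (by simp), hM a (by simp)⟩
      · obtain ⟨a, haN, b, hbM, rfl⟩ := hsp
        exact hNM b ⟨hN b (by simp), hbM⟩
  -- the split-pair counts
  have hpNM : pc (sp N M) = d * (n - 1 - d) := by
    rw [sp_card hNM, hMcard]
  have hpNMsplit : pc (sp N M) = pc (fun e => e ∈ H.edgeSet ∧ sp N M e) +
      pc (fun e => sp N M e ∧ e ∉ H.edgeSet) :=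
    pc_split _ _ _ (fun e => by tauto) (fun e => by tauto)
  -- minimality: consider switching at N
  have hswitch : 2 * (pc (fun e => e ∈ H.edgeSet ∧ sp N M e) + d) ≤ d * (n - d) := by
    set Y : Finset (Fin n) := symmDiff X N with hYdef
    have hadj' : ∀ a b : Fin n, a ≠ b →
        ((hsg G Y).Adj a b ↔ ¬(H.Adj a b ↔ ¬((a ∈ N) ↔ (b ∈ N)))) := by
      intro a b hab
      have e1 : (hsg G Y).Adj a b ↔ ¬(G.Adj a b ↔ (a ≠ b ∧ ((a ∈ Y) ↔ (b ∈ Y)))) := Iff.rfl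
      have e2 : H.Adj a b ↔ ¬(G.Adj a b ↔ (a ≠ b ∧ ((a ∈ X) ↔ (b ∈ X)))) := Iff.rfl
      have ma : a ∈ Y ↔ (a ∈ X ∧ a ∉ N) ∨ (a ∈ N ∧ a ∉ X) := Finset.mem_symmDiff
      have mb : b ∈ Y ↔ (b ∈ X ∧ b ∉ N) ∨ (b ∈ N ∧ b ∉ X) := Finset.mem_symmDiff
      rw [e1, e2, ma, mb]
      have : (a ≠ b) ↔ True := iff_of_true hab trivial
      rw [this]
      by_cases h1 : G.Adj a b <;> by_cases h2 : a ∈ X <;> by_cases h3 : b ∈ X <;>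
        by_cases h4 : a ∈ N <;> by_cases h5 : b ∈ N <;> simp [h1, h2, h3, h4, h5]
    have hm' := hmin Y
    -- decompose ec H and ec (hsg G Y) along split pairs at N
    have dm : ec H = pc (fun e => e ∈ H.edgeSet ∧ sp N (univ \ N) e) +
        pc (fun e => e ∈ H.edgeSet ∧ ¬ sp N (univ \ N) e) :=
      pc_split _ _ _ (fun e => by tauto) (fun e => by tauto)
    have dm' : ec (hsg G Y) = pc (fun e => e ∈ (hsg G Y).edgeSet ∧ sp N (univ \ N) e) +
        pc (fun e => e ∈ (hsg G Y).edgeSet ∧ ¬ sp N (univ \ N) e) :=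
      pc_split _ _ _ (fun e => by tauto) (fun e => by tauto)
    have dsame : pc (fun e => e ∈ (hsg G Y).edgeSet ∧ ¬ sp N (univ \ N) e) =
        pc (fun e => e ∈ H.edgeSet ∧ ¬ sp N (univ \ N) e) := by
      apply pc_congr
      intro e
      induction e with
      | _ a b =>
        by_cases hab : a = b
        · subst hab
          simp [SimpleGraph.irrefl]
        · simp only [SimpleGraph.mem_edgeSet, sp_iff, mem_sdiff, mem_univ, true_and]
          rw [hadj' a b hab]
          constructor
          · rintro ⟨h1, h2⟩
            have hiff : (a ∈ N ↔ b ∈ N) := by tauto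
            rw [iff_of_true hiff trivial] at h1
            simp only [not_true, iff_false, not_not] at h1
            exact ⟨h1, h2⟩
          · rintro ⟨h1, h2⟩
            have hiff : (a ∈ N ↔ b ∈ N) := by tauto
            refine ⟨?_, h2⟩
            rw [iff_of_true hiff trivial]
            simp only [not_true, iff_false, not_not]
            exact h1
    have dflip : pc (fun e => sp N (univ \ N) e) =
        pc (fun e => e ∈ H.edgeSet ∧ sp N (univ \ N) e) +
        pc (fun e => e ∈ (hsg G Y).edgeSet ∧ sp N (univ \ N) e) := by
      apply pc_split
      · intro e
        induction e with
        | _ a b =>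
          constructor
          · intro hsp
            obtain ⟨x, hx, y, hy, heq⟩ := hsp
            rw [mem_sdiff] at hy
            have hxy : x ≠ y := fun h => hy.2 (h ▸ hx)
            by_cases hH : s(a, b) ∈ H.edgeSet
            · exact Or.inl ⟨hH, x, hx, y, mem_sdiff.mpr hy, heq⟩
            · refine Or.inr ⟨?_, x, hx, y, mem_sdiff.mpr hy, heq⟩
              rw [heq, SimpleGraph.mem_edgeSet, hadj' x y hxy]
              rw [heq, SimpleGraph.mem_edgeSet] at hH
              have : ¬ (x ∈ N ↔ y ∈ N) := by tauto
              tauto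
          · rintro (⟨_, h⟩ | ⟨_, h⟩) <;> exact h
      · rintro e ⟨⟨h1, hsp⟩, ⟨h2, _⟩⟩
        obtain ⟨x, hx, y, hy, rfl⟩ := hsp
        rw [mem_sdiff] at hy
        have hxy : x ≠ y := fun h => hy.2 (h ▸ hx)
        rw [SimpleGraph.mem_edgeSet] at h1 h2
        rw [hadj' x y hxy] at h2
        have : ¬ (x ∈ N ↔ y ∈ N) := by tauto
        tauto
    have dall : pc (fun e => sp N (univ \ N) e) = d * (n - d) := by
      rw [sp_card (fun x ⟨h1, h2⟩ => (mem_sdiff.mp h2).2 h1), card_sdiff_of_subset (subset_univ N),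
        card_univ, Fintype.card_fin]
    have dinc : pc (fun e => e ∈ H.edgeSet ∧ sp N (univ \ N) e) =
        pc (fun e => e ∈ H.edgeSet ∧ sp N M e) + pc (fun e => e ∈ H.edgeSet ∧ v ∈ e) := by
      apply pc_split
      · intro e
        induction e with
        | _ a b =>
          constructor
          · rintro ⟨hadj, hsp⟩
            obtain ⟨x, hx, y, hy, heq⟩ := hsp
            rw [mem_sdiff] at hy
            rcases hcov y with rfl | h | h
            · exact Or.inr ⟨hadj, by rw [heq]; simp⟩
            · exact absurd h hy.2
            · exact Or.inl ⟨hadj, x, hx, y, h, heq⟩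
          · rintro (⟨hadj, hsp⟩ | ⟨hadj, hv⟩)
            · obtain ⟨x, hx, y, hy, heq⟩ := hsp
              exact ⟨hadj, x, hx, y, mem_sdiff.mpr ⟨mem_univ y, fun hc => hNM y ⟨hc, hy⟩⟩, heq⟩
            · refine ⟨hadj, ?_⟩
              rw [SimpleGraph.mem_edgeSet] at hadj
              rcases Sym2.mem_iff.mp hv with h | h
              · refine ⟨b, (hAdjN b).mpr (by rw [h]; exact hadj), v,
                  mem_sdiff.mpr ⟨mem_univ v, hNv⟩, ?_⟩
                rw [Sym2.eq_iff]
                exact Or.inr ⟨h.symm, rfl⟩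
              · refine ⟨a, (hAdjN a).mpr (by rw [h]; exact hadj.symm), v,
                  mem_sdiff.mpr ⟨mem_univ v, hNv⟩, ?_⟩
                rw [Sym2.eq_iff]
                exact Or.inl ⟨rfl, h.symm⟩
      · rintro e ⟨⟨_, hsp⟩, ⟨_, hv⟩⟩
        obtain ⟨x, hx, y, hy, rfl⟩ := hsp
        rcases Sym2.mem_iff.mp hv with rfl | rfl
        · exact hNv hx
        · exact hMv hy
    rw [hinc] at dinc
    obtain ⟨C, hC⟩ : ∃ C, d * (n - d) = C := ⟨_, rfl⟩
    rw [hC] at dall ⊢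
    omega
  -- final assembly
  have hmAll : ec H = kc H N + kc H M +
      pc (fun e => e ∈ H.edgeSet ∧ sp N M e) + d := by
    rw [hs1, hs2, hs3, hinc]
    ring
  have hnpos : 1 ≤ n := Fin.pos v
  have hprod : d * (n - d) = d * (n - 1 - d) + d := by
    have h1 : n - d = (n - 1 - d) + 1 := by omega
    rw [h1, Nat.mul_add, mul_one]
  rw [hgv, hmAll]
  rw [hprod] at hswitch
  obtain ⟨B, hB⟩ : ∃ B, d * (n - 1 - d) = B := ⟨_, rfl⟩
  rw [hB] at hswitch hpNM
  omega


lemma sum_gv (H : SimpleGraph (Fin n)) :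
    ∑ v : Fin n, ((T3 n).filter (fun s => Odd (kc H s) ∧ v ∈ s)).card = 3 * gc H := by
  classical
  have h1 : ∀ v : Fin n, ((T3 n).filter (fun s => Odd (kc H s) ∧ v ∈ s)).card
      = ∑ s ∈ T3 n, (if Odd (kc H s) ∧ v ∈ s then 1 else 0) := fun v => card_filter _ _
  rw [Finset.sum_congr rfl (fun v _ => h1 v), Finset.sum_comm]
  have h2 : ∀ s ∈ T3 n, (∑ v : Fin n, if Odd (kc H s) ∧ v ∈ s then 1 else 0)
      = (if Odd (kc H s) then 3 else 0 : ℕ) := by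
    intro s hs
    have h3 : s.card = 3 := by rwa [T3, mem_powersetCard_univ] at hs
    by_cases hOdd : Odd (kc H s)
    · rw [if_pos hOdd]
      calc (∑ v : Fin n, if Odd (kc H s) ∧ v ∈ s then 1 else 0)
          = ∑ v : Fin n, (if v ∈ s then 1 else 0) := by
            refine Finset.sum_congr rfl fun v _ => ?_
            by_cases hv : v ∈ s <;> simp [hv, hOdd]
        _ = (univ.filter (· ∈ s)).card := (card_filter _ _).symm
        _ = s.card := by rw [Finset.filter_univ_mem]
        _ = 3 := h3
    · rw [if_neg hOdd]
      refine Finset.sum_eq_zero fun v _ => ?_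
      simp [hOdd]
  rw [Finset.sum_congr rfl h2, gc, card_filter, Finset.mul_sum]
  refine Finset.sum_congr rfl fun s _ => ?_
  by_cases hOdd : Odd (kc H s) <;> simp [hOdd]

lemma nm_le (G : SimpleGraph (Fin n)) (X : Finset (Fin n))
    (hmin : ∀ Y : Finset (Fin n), ec (hsg G X) ≤ ec (hsg G Y)) :
    n * ec (hsg G X) ≤ 3 * gc (hsg G X) := by
  classical
  calc n * ec (hsg G X) = ∑ _v : Fin n, ec (hsg G X) := by
        rw [Finset.sum_const, card_univ, Fintype.card_fin, smul_eq_mul]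
    _ ≤ ∑ v : Fin n, ((T3 n).filter (fun s => Odd (kc (hsg G X) s) ∧ v ∈ s)).card :=
        Finset.sum_le_sum (fun v _ => gv_ge G X hmin v)
    _ = 3 * gc (hsg G X) := sum_gv _

lemma two_choose (m : ℕ) : 2 * Nat.choose m 2 = m * (m - 1) := by
  rcases m with _ | k
  · simp
  · rw [Nat.choose_two_right, Nat.succ_sub_one]
    apply Nat.mul_div_cancel'
    rcases Nat.even_or_odd k with h | h
    · exact Dvd.dvd.mul_left h.two_dvd _
    · exact Dvd.dvd.mul_right (h.add_one).two_dvd _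

lemma cast_mul_pred (m : ℕ) : ((m * (m - 1) : ℕ) : ℤ) = (m : ℤ) * ((m : ℤ) - 1) := by
  rcases m with _ | k
  · simp
  · push_cast [Nat.succ_sub_one]
    ring

lemma edgeSet_two_cliques (K : SimpleGraph (Fin n)) (hK : IsTwoCliques K) :
    ∃ X : Finset (Fin n), K.edgeSet = (ksg X).edgeSet := by
  classical
  obtain ⟨Xs, hXs⟩ := hK
  refine ⟨univ.filter (· ∈ Xs), ?_⟩
  ext e
  induction e with
  | _ a b =>
    rw [SimpleGraph.mem_edgeSet, SimpleGraph.mem_edgeSet, hXs]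
    show _ ↔ (a ≠ b ∧ _)
    simp

end FT

set_option maxHeartbeats 3200000 in
theorem frustrated_triangles_upper_interval_iff_flip_two_cliques
    (n : ℕ) (hn : 3 ≤ n) (G : SimpleGraph (Fin n)) (tmax : ℕ)
    (htm : tmax * (tmax + 1) < n - 2)
    (htmax : ∀ t : ℕ, t * (t + 1) < n - 2 → t ≤ tmax)
    (t : ℕ) (ht : t ≤ tmax) :
    ((Nat.choose n 3 : ℤ) - t * ((n : ℤ) - 2) ≤ (fCount G : ℤ) ∧
      (fCount G : ℤ) ≤ (Nat.choose n 3 : ℤ) - t * ((n : ℤ) - t - 1)) ↔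
      ∃ K : SimpleGraph (Fin n), IsTwoCliques K ∧
        (symmDiff G.edgeSet K.edgeSet).ncard = t := by
  classical
  have hcast2 : ((n - 2 : ℕ) : ℤ) = (n : ℤ) - 2 := by
    exact Nat.cast_sub (by omega)
  have htmZ : (tmax : ℤ) * ((tmax : ℤ) + 1) < (n : ℤ) - 2 := by
    have h' : ((tmax * (tmax + 1) : ℕ) : ℤ) < ((n - 2 : ℕ) : ℤ) := by exact_mod_cast htm
    rw [hcast2] at h'
    push_cast at h'
    linarith
  have htZ : (t : ℤ) ≤ (tmax : ℤ) := by exact_mod_cast ht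
  have hnZ : (3 : ℤ) ≤ (n : ℤ) := by exact_mod_cast hn
  have ht0 : (0 : ℤ) ≤ (t : ℤ) := Int.natCast_nonneg t
  have hS0 : (0 : ℤ) ≤ (tmax : ℤ) := Int.natCast_nonneg tmax
  constructor
  · rintro ⟨h1, h2⟩
    obtain ⟨X₀, -, hX₀⟩ := Finset.exists_min_image (univ : Finset (Finset (Fin n)))
      (fun Y => FT.ec (FT.hsg G Y)) ⟨∅, Finset.mem_univ ∅⟩
    have hmin : ∀ Y, FT.ec (FT.hsg G X₀) ≤ FT.ec (FT.hsg G Y) :=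
      fun Y => hX₀ Y (Finset.mem_univ Y)
    set m := FT.ec (FT.hsg G X₀) with hm
    set g := FT.gc (FT.hsg G X₀) with hg
    have hm0 : (0 : ℤ) ≤ (m : ℤ) := Int.natCast_nonneg m
    have hg0 : (0 : ℤ) ≤ (g : ℤ) := Int.natCast_nonneg g
    have hsplit := FT.fCount_split G X₀
    have hfc : (fCount G : ℤ) = (Nat.choose n 3 : ℤ) - (g : ℤ) := by
      have hc := congrArg (Nat.cast : ℕ → ℤ) hsplit
      push_cast at hc
      linarith
    have hub : (g : ℤ) ≤ (m : ℤ) * ((n : ℤ) - 2) := by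
      have h' : (g : ℤ) ≤ (m : ℤ) * ((n - 2 : ℕ) : ℤ) := by
        exact_mod_cast FT.gc_le (FT.hsg G X₀)
      rwa [hcast2] at h'
    have hlb : (m : ℤ) * ((n : ℤ) - 2) ≤ (g : ℤ) + (m : ℤ) * ((m : ℤ) - 1) := by
      have h0 := FT.gc_ge (FT.hsg G X₀)
      rw [FT.two_choose] at h0
      have h' : (m : ℤ) * ((n - 2 : ℕ) : ℤ) ≤ (g : ℤ) + ((m * (m - 1) : ℕ) : ℤ) := by
        exact_mod_cast h0
      rwa [hcast2, FT.cast_mul_pred] at h'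
    have hnm : (n : ℤ) * (m : ℤ) ≤ 3 * (g : ℤ) := by exact_mod_cast FT.nm_le G X₀ hmin
    have hg1 : (g : ℤ) ≤ (t : ℤ) * ((n : ℤ) - 2) := by rw [hfc] at h1; linarith
    have hg2 : (t : ℤ) * ((n : ℤ) - (t : ℤ) - 1) ≤ (g : ℤ) := by rw [hfc] at h2; linarith
    have hmlb : (m : ℤ) * ((n : ℤ) - 1 - (m : ℤ)) ≤ (g : ℤ) := by nlinarith [hlb]
    have hmle : (m : ℤ) ≤ (tmax : ℤ) := by
      by_contra hcon
      push_neg at hcon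
      have hcon' : (tmax : ℤ) + 1 ≤ (m : ℤ) := Int.add_one_le_iff.mpr hcon
      rcases le_or_gt (m : ℤ) ((n : ℤ) - 2 - (tmax : ℤ)) with hc | hc
      · have k1 : (0 : ℤ) ≤ ((m : ℤ) - (tmax : ℤ) - 1) * ((n : ℤ) - 2 - (tmax : ℤ) - (m : ℤ)) :=
          mul_nonneg (by linarith) (by linarith)
        have k2 : (0 : ℤ) ≤ ((tmax : ℤ) - (t : ℤ)) * ((n : ℤ) - 2) :=
          mul_nonneg (by linarith) (by linarith)
        nlinarith [hmlb, hg1, htmZ, k1, k2]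
      · have k3 : (n : ℤ) * ((n : ℤ) - 1 - (tmax : ℤ)) ≤ (n : ℤ) * (m : ℤ) :=
          mul_le_mul_of_nonneg_left (by linarith) (by linarith)
        have k4 : (0 : ℤ) ≤ ((tmax : ℤ) - (t : ℤ)) * ((n : ℤ) - 2) :=
          mul_nonneg (by linarith) (by linarith)
        have e1 : (n : ℤ) ≥ 4 * (tmax : ℤ) + 1 := by
          rcases le_or_gt (tmax : ℤ) 1 with hS | hS
          · nlinarith [htmZ, mul_nonneg (by linarith : (0:ℤ) ≤ 1 - (tmax:ℤ))
              (by linarith : (0:ℤ) ≤ 2 - (tmax:ℤ))]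
          · have hS' : (2 : ℤ) ≤ (tmax : ℤ) := Int.add_one_le_iff.mpr hS
            nlinarith [htmZ, mul_nonneg (by linarith : (0:ℤ) ≤ (tmax:ℤ) - 1)
              (by linarith : (0:ℤ) ≤ (tmax:ℤ) - 2)]
        have e2 : (0 : ℤ) ≤ (n : ℤ) * ((n : ℤ) - 4 * (tmax : ℤ) - 1) :=
          mul_nonneg (by linarith) (by linarith)
        nlinarith [k3, k4, hnm, hg1, e2, mul_nonneg (by linarith : (0:ℤ) ≤ (n:ℤ) - 1)
          (by linarith : (0:ℤ) ≤ (n:ℤ) - 3)]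
    have hmt : (m : ℤ) = (t : ℤ) := by
      rcases lt_trichotomy (m : ℤ) (t : ℤ) with hlt | heq | hgt
      · exfalso
        have hm1 : (m : ℤ) + 1 ≤ (t : ℤ) := Int.add_one_le_iff.mpr hlt
        have f2 : (0 : ℤ) ≤ (n : ℤ) - 2 - (t : ℤ) - (m : ℤ) := by
          nlinarith [htmZ, sq_nonneg (2 * (tmax : ℤ) - 1)]
        have k1 : (0 : ℤ) ≤ ((t : ℤ) - (m : ℤ) - 1) * ((n : ℤ) - 2 - (t : ℤ) - (m : ℤ)) :=
          mul_nonneg (by linarith) f2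
        nlinarith [hg2, hub, k1, htmZ,
          mul_nonneg (by linarith : (0:ℤ) ≤ (tmax:ℤ) + (m:ℤ))
            (by linarith : (0:ℤ) ≤ (tmax:ℤ) - (m:ℤ) - 1)]
      · exact heq
      · exfalso
        have ht1 : (t : ℤ) + 1 ≤ (m : ℤ) := Int.add_one_le_iff.mpr hgt
        have f2 : (0 : ℤ) ≤ (n : ℤ) - 2 - (t : ℤ) - (m : ℤ) := by
          nlinarith [htmZ, sq_nonneg (2 * (tmax : ℤ) - 1)]
        have k1 : (0 : ℤ) ≤ ((m : ℤ) - (t : ℤ) - 1) * ((n : ℤ) - 2 - (t : ℤ) - (m : ℤ)) :=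
          mul_nonneg (by linarith) f2
        nlinarith [hg1, hmlb, k1, htmZ,
          mul_nonneg (by linarith : (0:ℤ) ≤ (tmax:ℤ) + (t:ℤ))
            (by linarith : (0:ℤ) ≤ (tmax:ℤ) - (t:ℤ))]
    refine ⟨FT.ksg X₀, FT.ksg_isTwoCliques X₀, ?_⟩
    rw [FT.ncard_symmDiff]
    exact_mod_cast hmt
  · rintro ⟨K, hK, hcard⟩
    obtain ⟨X, hX⟩ := FT.edgeSet_two_cliques K hK
    rw [hX, FT.ncard_symmDiff G X] at hcard
    have hsplit := FT.fCount_split G X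
    set g := FT.gc (FT.hsg G X) with hg
    have hfc : (fCount G : ℤ) = (Nat.choose n 3 : ℤ) - (g : ℤ) := by
      have hc := congrArg (Nat.cast : ℕ → ℤ) hsplit
      push_cast at hc
      linarith
    have hub : (g : ℤ) ≤ (t : ℤ) * ((n : ℤ) - 2) := by
      have h' : (g : ℤ) ≤ (t : ℤ) * ((n - 2 : ℕ) : ℤ) := by
        rw [← hcard]
        exact_mod_cast FT.gc_le (FT.hsg G X)
      rwa [hcast2] at h'
    have hlb : (t : ℤ) * ((n : ℤ) - 2) ≤ (g : ℤ) + (t : ℤ) * ((t : ℤ) - 1) := by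
      have h0 := FT.gc_ge (FT.hsg G X)
      rw [FT.two_choose, hcard] at h0
      have h' : (t : ℤ) * ((n - 2 : ℕ) : ℤ) ≤ (g : ℤ) + ((t * (t - 1) : ℕ) : ℤ) := by
        exact_mod_cast h0
      rwa [hcast2, FT.cast_mul_pred] at h'
    have hid : (t : ℤ) * ((n : ℤ) - (t : ℤ) - 1) =
        (t : ℤ) * ((n : ℤ) - 2) - (t : ℤ) * ((t : ℤ) - 1) := by ring
    constructor
    · rw [hfc]; linarith
    · rw [hfc]; linarith
end

section
/- Let n ≥ 6 be even and let s be the largest natural number t such that t·(n−2) + 2 < (t+1)·(n−t−2) (such t exists since 0·(n−2)+2 = 2 < n−2). Then s·(n−2) + 2 is an even number and there is no simple graph G on n vertices with f(G) = s·(n−2) + 2. -/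
open Finset

section Aux

open Classical

variable {V : Type*} [Fintype V] [DecidableEq V]

/-- indicator congruence, robust to decidability instances -/
lemma FT.ind_congr {P Q : Prop} [Decidable P] [Decidable Q] (h : P ↔ Q) :
    (if P then (1:ℕ) else 0) = if Q then 1 else 0 := by
  by_cases hp : P
  · rw [if_pos hp, if_pos (h.mp hp)]
  · rw [if_neg hp, if_neg (fun hq => hp (h.mpr hq))]

/-- The finset of frustrated triples of `G`. -/
noncomputable def FT (G : SimpleGraph V) : Finset (Finset V) := by
  classical
  exact ((Finset.univ.powersetCard 3).filter
    (fun s : Finset V => ∃ u v w : V, u ≠ v ∧ u ≠ w ∧ v ≠ w ∧ s = {u, v, w} ∧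
      frustrated G u v w))

lemma fCount_eq_FT (G : SimpleGraph V) : fCount G = (FT G).card := by
  unfold fCount FT
  rfl

/-- a 2-subset predicate: being an edge -/
def EdgeP (G : SimpleGraph V) (p : Finset V) : Prop :=
  ∃ a b : V, a ≠ b ∧ p = {a, b} ∧ G.Adj a b

lemma edgeP_pair {G : SimpleGraph V} {x y : V} (hxy : x ≠ y) :
    EdgeP G {x, y} ↔ G.Adj x y := by
  constructor
  · rintro ⟨a, b, hab, hp, hadj⟩
    have hx : x ∈ ({a, b} : Finset V) := by rw [← hp]; simp
    have hy : y ∈ ({a, b} : Finset V) := by rw [← hp]; simp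
    simp only [mem_insert, mem_singleton] at hx hy
    rcases hx with rfl | rfl <;> rcases hy with rfl | rfl
    · exact absurd rfl hxy
    · exact hadj
    · exact hadj.symm
    · exact absurd rfl hxy
  · exact fun h => ⟨x, y, hxy, rfl, h⟩

/-- the edges of `G` as a finset of 2-subsets -/
noncomputable def GE (G : SimpleGraph V) : Finset (Finset V) :=
  (Finset.univ.powersetCard 2).filter (EdgeP G)

lemma mem_GE {G : SimpleGraph V} {x y : V} (hxy : x ≠ y) :
    ({x, y} : Finset V) ∈ GE G ↔ G.Adj x y := by
  unfold GE
  rw [mem_filter, Finset.mem_powersetCard, edgeP_pair hxy]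
  simp [Finset.card_pair hxy]

lemma GE_two {G : SimpleGraph V} : ∀ e ∈ GE G, e.card = 2 := by
  intro e he
  unfold GE at he
  rw [mem_filter, Finset.mem_powersetCard] at he
  exact he.1.2

/-- number of members of E inside t -/
noncomputable def cnt (E : Finset (Finset V)) (t : Finset V) : ℕ :=
  (E.filter (· ⊆ t)).card

lemma two_subset_three {u v w : V} {e : Finset V} (he : e.card = 2)
    (hsub : e ⊆ ({u, v, w} : Finset V)) :
    e = {u, v} ∨ e = {u, w} ∨ e = {v, w} := by
  obtain ⟨a, b, hab, rfl⟩ := Finset.card_eq_two.mp he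
  have ha : a ∈ ({u, v, w} : Finset V) := hsub (by simp)
  have hb : b ∈ ({u, v, w} : Finset V) := hsub (by simp)
  simp only [mem_insert, mem_singleton] at ha hb
  rcases ha with rfl | rfl | rfl <;> rcases hb with rfl | rfl | rfl
  · exact absurd rfl hab
  · exact Or.inl rfl
  · exact Or.inr (Or.inl rfl)
  · exact Or.inl (Finset.pair_comm a b)
  · exact absurd rfl hab
  · exact Or.inr (Or.inr rfl)
  · exact Or.inr (Or.inl (Finset.pair_comm a b))
  · exact Or.inr (Or.inr (Finset.pair_comm a b))
  · exact absurd rfl hab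

lemma pair_ne_left {u v w : V} (huv : u ≠ v) (hvw : v ≠ w) :
    ({u, v} : Finset V) ≠ {u, w} := by
  intro h
  have : v ∈ ({u, w} : Finset V) := h ▸ (by simp)
  simp only [mem_insert, mem_singleton] at this
  rcases this with rfl | rfl
  · exact huv rfl
  · exact hvw rfl

lemma pair_ne_mid {u v w : V} (huv : u ≠ v) (huw : u ≠ w) :
    ({u, v} : Finset V) ≠ {v, w} := by
  intro h
  have : u ∈ ({v, w} : Finset V) := h ▸ (by simp)
  simp only [mem_insert, mem_singleton] at this
  rcases this with rfl | rfl
  · exact huv rfl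
  · exact huw rfl

lemma pair_ne_right {u v w : V} (huv : u ≠ v) (huw : u ≠ w) :
    ({u, w} : Finset V) ≠ {v, w} := by
  intro h
  have : u ∈ ({v, w} : Finset V) := h ▸ (by simp)
  simp only [mem_insert, mem_singleton] at this
  rcases this with rfl | rfl
  · exact huv rfl
  · exact huw rfl

lemma card_filter_mem_triple (E : Finset (Finset V)) (p q r : Finset V)
    (hpq : p ≠ q) (hpr : p ≠ r) (hqr : q ≠ r) :
    (({p, q, r} : Finset (Finset V)).filter (· ∈ E)).card =
      (if p ∈ E then 1 else 0) + (if q ∈ E then 1 else 0) + (if r ∈ E then 1 else 0) := by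
  rw [Finset.card_filter]
  rw [show ({p, q, r} : Finset (Finset V)) = insert p (insert q {r}) from rfl]
  rw [Finset.sum_insert (by simp [hpq, hpr]), Finset.sum_insert (by simp [hqr]),
    Finset.sum_singleton]
  ring

lemma filter_subset_triple (E : Finset (Finset V)) (hE : ∀ e ∈ E, e.card = 2)
    (u v w : V) :
    E.filter (· ⊆ ({u, v, w} : Finset V)) =
      ({({u, v} : Finset V), {u, w}, {v, w}} : Finset (Finset V)).filter (· ∈ E) := by
  ext e
  simp only [mem_filter, mem_insert, mem_singleton]
  constructor
  · rintro ⟨heE, hsub⟩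
    exact ⟨two_subset_three (hE e heE) hsub, heE⟩
  · rintro ⟨h3, heE⟩
    refine ⟨heE, ?_⟩
    rcases h3 with rfl | rfl | rfl <;> intro x hx <;> simp only [mem_insert, mem_singleton] at hx <;>
      rcases hx with rfl | rfl <;> simp

lemma cnt_triple (E : Finset (Finset V)) (hE : ∀ e ∈ E, e.card = 2)
    {u v w : V} (huv : u ≠ v) (huw : u ≠ w) (hvw : v ≠ w) :
    cnt E {u, v, w} =
      (if ({u, v} : Finset V) ∈ E then 1 else 0) +
      (if ({u, w} : Finset V) ∈ E then 1 else 0) +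
      (if ({v, w} : Finset V) ∈ E then 1 else 0) := by
  unfold cnt
  rw [filter_subset_triple E hE u v w,
    card_filter_mem_triple E _ _ _ (pair_ne_left huv hvw) (pair_ne_mid huv huw)
      (pair_ne_right huv huw)]

lemma frustrated_iff_odd {G : SimpleGraph V} {u v w : V}
    (huv : u ≠ v) (huw : u ≠ w) (hvw : v ≠ w) :
    frustrated G u v w ↔ Odd (cnt (GE G) {u, v, w}) := by
  rw [cnt_triple (GE G) GE_two huv huw hvw,
    FT.ind_congr (mem_GE huv), FT.ind_congr (mem_GE huw), FT.ind_congr (mem_GE hvw)]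
  unfold frustrated
  exact Iff.rfl

lemma mem_FT_iff {G : SimpleGraph V} {t : Finset V} :
    t ∈ FT G ↔ t.card = 3 ∧ Odd (cnt (GE G) t) := by
  unfold FT
  rw [mem_filter, Finset.mem_powersetCard]
  constructor
  · rintro ⟨⟨-, h3⟩, u, v, w, huv, huw, hvw, rfl, hf⟩
    exact ⟨h3, (frustrated_iff_odd huv huw hvw).mp hf⟩
  · rintro ⟨h3, hodd⟩
    obtain ⟨u, v, w, huv, huw, hvw, rfl⟩ := Finset.card_eq_three.mp h3
    exact ⟨⟨Finset.subset_univ _, h3⟩,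
      u, v, w, huv, huw, hvw, rfl, (frustrated_iff_odd huv huw hvw).mpr hodd⟩

lemma mem_FT_triple {G : SimpleGraph V} {a b c : V}
    (hab : a ≠ b) (hac : a ≠ c) (hbc : b ≠ c) :
    ({a, b, c} : Finset V) ∈ FT G ↔ frustrated G a b c := by
  rw [mem_FT_iff, ← frustrated_iff_odd hab hac hbc]
  have h3 : ({a, b, c} : Finset V).card = 3 :=
    Finset.card_eq_three.mpr ⟨a, b, c, hab, hac, hbc, rfl⟩
  simp [h3]

lemma card_FT_three {G : SimpleGraph V} {t : Finset V} (ht : t ∈ FT G) : t.card = 3 :=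
  (mem_FT_iff.mp ht).1

lemma frustrated_rotate (G : SimpleGraph V) (a b c : V) :
    frustrated G a b c ↔ frustrated G b c a := by
  unfold frustrated
  rw [G.adj_comm b a, G.adj_comm c a]
  generalize (if G.Adj a b then (1:ℕ) else 0) = x
  generalize (if G.Adj a c then (1:ℕ) else 0) = y
  generalize (if G.Adj b c then (1:ℕ) else 0) = z
  rw [Nat.odd_iff, Nat.odd_iff]
  omega

lemma odd_ind (x y u : ℕ) [Decidable (Odd x)] [Decidable (Odd y)] [Decidable (Odd u)] :
    Odd (((if Odd x then 1 else 0) + (if Odd y then 1 else 0) +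
      (if Odd u then 1 else 0) : ℕ)) ↔ Odd (x + y + u) := by
  rcases Nat.even_or_odd x with hx | hx <;> rcases Nat.even_or_odd y with hy | hy <;>
    rcases Nat.even_or_odd u with hu | hu <;>
      simp_all [Nat.even_iff, Nat.odd_iff] <;> omega

lemma frustrated_of_z (G : SimpleGraph V) (u v w z : V)
    [Decidable (frustrated G u v z)] [Decidable (frustrated G u w z)]
    [Decidable (frustrated G v w z)] :
    Odd (((if frustrated G u v z then 1 else 0) + (if frustrated G u w z then 1 else 0) +
      (if frustrated G v w z then 1 else 0) : ℕ)) ↔ frustrated G u v w := by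
  unfold frustrated
  refine Iff.trans (@odd_ind _ _ _ ‹Decidable (frustrated G u v z)› ‹Decidable (frustrated G u w z)›
    ‹Decidable (frustrated G v w z)›) ?_
  generalize (if G.Adj u v then (1:ℕ) else 0) = a
  generalize (if G.Adj u w then (1:ℕ) else 0) = b
  generalize (if G.Adj v w then (1:ℕ) else 0) = c
  generalize (if G.Adj u z then (1:ℕ) else 0) = p
  generalize (if G.Adj v z then (1:ℕ) else 0) = q
  generalize (if G.Adj w z then (1:ℕ) else 0) = r
  rw [Nat.odd_iff, Nat.odd_iff]
  omega

end Aux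
section Aux2

open Classical

set_option linter.unusedSectionVars false

variable {V : Type*} [Fintype V] [DecidableEq V]

/-- the link of `z`: pairs forming a frustrated triple with `z` -/
noncomputable def EZ (G : SimpleGraph V) (z : V) : Finset (Finset V) := by
  classical
  exact ((Finset.univ.erase z).powersetCard 2).filter (fun p => insert z p ∈ FT G)

lemma EZ_two {G : SimpleGraph V} {z : V} : ∀ e ∈ EZ G z, e.card = 2 := by
  intro e he
  unfold EZ at he
  rw [mem_filter, Finset.mem_powersetCard] at he
  exact he.1.2

lemma EZ_sub {G : SimpleGraph V} {z : V} : ∀ e ∈ EZ G z, e ⊆ Finset.univ.erase z := by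
  intro e he
  unfold EZ at he
  rw [mem_filter, Finset.mem_powersetCard] at he
  exact he.1.1

lemma mem_EZ_pair {G : SimpleGraph V} {z x y : V} (hxy : x ≠ y) (hxz : x ≠ z) (hyz : y ≠ z) :
    ({x, y} : Finset V) ∈ EZ G z ↔ frustrated G x y z := by
  unfold EZ
  rw [mem_filter, Finset.mem_powersetCard]
  have h1 : insert z ({x, y} : Finset V) = ({z, x, y} : Finset V) := rfl
  rw [h1, mem_FT_triple (Ne.symm hxz) (Ne.symm hyz) hxy]
  have hmem : ({x, y} : Finset V) ⊆ Finset.univ.erase z := by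
    intro a ha
    simp only [mem_insert, mem_singleton] at ha
    rcases ha with rfl | rfl <;> simp [hxz, hyz]
  rw [frustrated_rotate G z x y]
  simp [hmem, Finset.card_pair hxy]

lemma card_EZ {G : SimpleGraph V} {z : V} :
    ((FT G).filter (fun t => z ∈ t)).card = (EZ G z).card := by
  apply Finset.card_bij (fun t _ => t.erase z)
  · intro t ht
    rw [mem_filter] at ht
    obtain ⟨htF, hzt⟩ := ht
    unfold EZ
    rw [mem_filter, Finset.mem_powersetCard]
    refine ⟨⟨Finset.erase_subset_erase z (Finset.subset_univ t), ?_⟩, ?_⟩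
    · rw [Finset.card_erase_of_mem hzt, card_FT_three htF]
    · rw [Finset.insert_erase hzt]; exact htF
  · intro t1 h1 t2 h2 h
    rw [mem_filter] at h1 h2
    rw [← Finset.insert_erase h1.2, ← Finset.insert_erase h2.2, h]
  · intro e he
    have hz : z ∉ e := fun hc => (Finset.notMem_erase z Finset.univ) (EZ_sub e he hc)
    refine ⟨insert z e, ?_, ?_⟩
    · rw [mem_filter]
      constructor
      · unfold EZ at he
        rw [mem_filter] at he
        exact he.2
      · exact Finset.mem_insert_self z e
    · rw [Finset.erase_insert hz]

/-- characterization of frustrated triples avoiding `z` via the link of `z` -/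
lemma mem_FT_iff_cnt_EZ {G : SimpleGraph V} {z : V} {t : Finset V}
    (ht : t ∈ (Finset.univ.erase z).powersetCard 3) :
    t ∈ FT G ↔ Odd (cnt (EZ G z) t) := by
  rw [Finset.mem_powersetCard] at ht
  obtain ⟨hsub, h3⟩ := ht
  obtain ⟨u, v, w, huv, huw, hvw, rfl⟩ := Finset.card_eq_three.mp h3
  have hu : u ≠ z := (Finset.mem_erase.mp (hsub (by simp))).1
  have hv : v ≠ z := (Finset.mem_erase.mp (hsub (by simp : v ∈ ({u,v,w} : Finset V)))).1
  have hw : w ≠ z := (Finset.mem_erase.mp (hsub (by simp : w ∈ ({u,v,w} : Finset V)))).1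
  rw [mem_FT_triple huv huw hvw,
    cnt_triple (EZ G z) EZ_two huv huw hvw,
    FT.ind_congr (mem_EZ_pair huv hu hv), FT.ind_congr (mem_EZ_pair huw hu hw),
    FT.ind_congr (mem_EZ_pair hvw hv hw), frustrated_of_z G u v w z]

end Aux2
section Aux3

open Classical

set_option linter.unusedSectionVars false

variable {V : Type*} [Fintype V] [DecidableEq V]

lemma sum_card_mem (G : SimpleGraph V) :
    ∑ z : V, ((FT G).filter (fun t => z ∈ t)).card = 3 * (FT G).card := by
  have h1 : ∀ z : V, ((FT G).filter (fun t => z ∈ t)).card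
      = ∑ t ∈ FT G, (if z ∈ t then 1 else 0) := fun z => Finset.card_filter _ _
  calc ∑ z : V, ((FT G).filter (fun t => z ∈ t)).card
      = ∑ z : V, ∑ t ∈ FT G, (if z ∈ t then 1 else 0) := by
        exact Finset.sum_congr rfl (fun z _ => h1 z)
    _ = ∑ t ∈ FT G, ∑ z : V, (if z ∈ t then 1 else 0) := Finset.sum_comm
    _ = ∑ t ∈ FT G, (Finset.univ.filter (fun z => z ∈ t)).card := by
        exact Finset.sum_congr rfl (fun t _ => (Finset.card_filter _ _).symm)
    _ = ∑ t ∈ FT G, t.card := by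
        refine Finset.sum_congr rfl (fun t _ => ?_)
        congr 1
        ext a; simp
    _ = ∑ t ∈ FT G, 3 := Finset.sum_congr rfl (fun t ht => card_FT_three ht)
    _ = 3 * (FT G).card := by rw [Finset.sum_const, smul_eq_mul, mul_comm]

lemma card_triples_containing (W : Finset V) (e : Finset V) (he2 : e.card = 2) (heW : e ⊆ W) :
    ((W.powersetCard 3).filter (fun t => e ⊆ t)).card = W.card - 2 := by
  have : (W \ e).card = ((W.powersetCard 3).filter (fun t => e ⊆ t)).card := by
    apply Finset.card_bij (fun x _ => insert x e)
    · intro x hx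
      rw [Finset.mem_sdiff] at hx
      rw [mem_filter, Finset.mem_powersetCard]
      refine ⟨⟨Finset.insert_subset hx.1 heW, ?_⟩, Finset.subset_insert x e⟩
      rw [Finset.card_insert_of_notMem hx.2, he2]
    · intro x hx y hy h
      rw [Finset.mem_sdiff] at hx hy
      have : x ∈ insert y e := h ▸ Finset.mem_insert_self x e
      rcases Finset.mem_insert.mp this with rfl | hc
      · rfl
      · exact absurd hc hx.2
    · intro t ht
      rw [mem_filter, Finset.mem_powersetCard] at ht
      obtain ⟨⟨htW, ht3⟩, het⟩ := ht
      have hcard : (t \ e).card = 1 := by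
        rw [Finset.card_sdiff_of_subset het, ht3, he2]
      obtain ⟨x, hx⟩ := Finset.card_eq_one.mp hcard
      have hxmem : x ∈ t \ e := hx ▸ Finset.mem_singleton_self x
      rw [Finset.mem_sdiff] at hxmem
      refine ⟨x, ?_, ?_⟩
      · rw [Finset.mem_sdiff]
        exact ⟨htW hxmem.1, hxmem.2⟩
      · apply Finset.eq_of_subset_of_card_le
        · exact Finset.insert_subset hxmem.1 het
        · rw [ht3, Finset.card_insert_of_notMem hxmem.2, he2]
  rw [← this, Finset.card_sdiff_of_subset heW, he2]

lemma sum_cnt (W : Finset V) (E : Finset (Finset V))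
    (hE2 : ∀ e ∈ E, e.card = 2) (hEW : ∀ e ∈ E, e ⊆ W) :
    ∑ t ∈ W.powersetCard 3, cnt E t = E.card * (W.card - 2) := by
  unfold cnt
  calc ∑ t ∈ W.powersetCard 3, (E.filter (· ⊆ t)).card
      = ∑ t ∈ W.powersetCard 3, ∑ e ∈ E, (if e ⊆ t then 1 else 0) := by
        exact Finset.sum_congr rfl (fun t _ => Finset.card_filter _ _)
    _ = ∑ e ∈ E, ∑ t ∈ W.powersetCard 3, (if e ⊆ t then 1 else 0) := Finset.sum_comm
    _ = ∑ e ∈ E, ((W.powersetCard 3).filter (fun t => e ⊆ t)).card := by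
        exact Finset.sum_congr rfl (fun e _ => (Finset.card_filter _ _).symm)
    _ = ∑ e ∈ E, (W.card - 2) := by
        exact Finset.sum_congr rfl (fun e he =>
          card_triples_containing W e (hE2 e he) (hEW e he))
    _ = E.card * (W.card - 2) := by rw [Finset.sum_const, smul_eq_mul]

lemma sum_cnt_choose (W : Finset V) (E : Finset (Finset V))
    (hE2 : ∀ e ∈ E, e.card = 2) :
    ∑ t ∈ W.powersetCard 3, (cnt E t).choose 2 ≤ E.card.choose 2 := by
  have hrw : ∀ t, (cnt E t).choose 2 = ((E.filter (· ⊆ t)).powersetCard 2).card := by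
    intro t
    rw [Finset.card_powersetCard]
    rfl
  calc ∑ t ∈ W.powersetCard 3, (cnt E t).choose 2
      = ∑ t ∈ W.powersetCard 3, ((E.filter (· ⊆ t)).powersetCard 2).card := by
        exact Finset.sum_congr rfl (fun t _ => hrw t)
    _ = ((W.powersetCard 3).sigma (fun t => (E.filter (· ⊆ t)).powersetCard 2)).card := by
        rw [Finset.card_sigma]
    _ ≤ (E.powersetCard 2).card := ?_
    _ = E.card.choose 2 := Finset.card_powersetCard 2 E
  apply Finset.card_le_card_of_injOn (fun p => p.2)
  · rintro ⟨t, p⟩ hp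
    rw [Finset.mem_coe, Finset.mem_sigma] at hp
    obtain ⟨-, hp⟩ := hp
    rw [Finset.mem_powersetCard] at hp
    rw [Finset.mem_coe, Finset.mem_powersetCard]
    exact ⟨hp.1.trans (Finset.filter_subset _ _), hp.2⟩
  · rintro ⟨t, p⟩ hp ⟨t', p'⟩ hp' (h : p = p')
    subst h
    simp only [Finset.mem_coe, Finset.mem_sigma, Finset.mem_powersetCard] at hp hp'
    obtain ⟨⟨htW, ht3⟩, hpsub, hp2⟩ := hp
    obtain ⟨⟨htW', ht3'⟩, hpsub', hp2'⟩ := hp'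
    obtain ⟨e1, e2, he12, rfl⟩ := Finset.card_eq_two.mp hp2
    have h1 : e1 ∈ E.filter (· ⊆ t) := hpsub (by simp)
    have h2 : e2 ∈ E.filter (· ⊆ t) := hpsub (by simp)
    have h1' : e1 ∈ E.filter (· ⊆ t') := hpsub' (by simp)
    have h2' : e2 ∈ E.filter (· ⊆ t') := hpsub' (by simp)
    rw [mem_filter] at h1 h2 h1' h2'
    have key : ∀ s : Finset V, s.card = 3 → e1 ⊆ s → e2 ⊆ s → s = e1 ∪ e2 := by
      intro s hs3 hs1 hs2
      have hsub : e1 ∪ e2 ⊆ s := Finset.union_subset hs1 hs2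
      have hne : ¬ e2 ⊆ e1 := by
        intro hsub21
        exact he12 (Finset.eq_of_subset_of_card_le hsub21
          (by rw [hE2 e1 h1.1, hE2 e2 h2.1])).symm
      obtain ⟨x, hx2, hx1⟩ := Finset.not_subset.mp hne
      have hins : insert x e1 ⊆ e1 ∪ e2 := by
        intro a ha
        rcases Finset.mem_insert.mp ha with rfl | ha
        · exact Finset.mem_union_right _ hx2
        · exact Finset.mem_union_left _ ha
      have hge : 3 ≤ (e1 ∪ e2).card := by
        have := Finset.card_le_card hins
        rwa [Finset.card_insert_of_notMem hx1, hE2 e1 h1.1] at this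
      exact (Finset.eq_of_subset_of_card_le hsub (by rw [hs3]; exact hge)).symm
    have kt : t = e1 ∪ e2 := key t ht3 h1.2 h2.2
    have kt' : t' = e1 ∪ e2 := key t' ht3' h1'.2 h2'.2
    have : t = t' := kt.trans kt'.symm
    subst this
    rfl

lemma two_mul_choose_two (k : ℕ) : 2 * k.choose 2 = k * (k - 1) := by
  induction k with
  | zero => rfl
  | succ k ih =>
    rw [Nat.choose_succ_succ, Nat.mul_add, ih, Nat.choose_one_right, Nat.succ_sub_one]
    cases k with
    | zero => rfl
    | succ j =>
      simp only [Nat.succ_sub_one]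
      ring

lemma le_ind_add (c : ℕ) : c ≤ (if Odd c then 1 else 0) + c * (c - 1) := by
  match c with
  | 0 => simp
  | 1 => simp
  | (j+2) =>
    have : (j+2) * (j+2-1) = (j+2) * (j+1) := rfl
    have h2 : (j+2) * 1 ≤ (j+2) * (j+1) := Nat.mul_le_mul_left _ (by omega)
    omega

end Aux3
section Main

open Classical

set_option linter.unusedSectionVars false

variable {V : Type*} [Fintype V] [DecidableEq V]

lemma FT_avoid_eq (G : SimpleGraph V) (z : V) :
    (FT G).filter (fun t => z ∉ t) =
      ((Finset.univ.erase z).powersetCard 3).filter (fun t => Odd (cnt (EZ G z) t)) := by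
  ext t
  simp only [mem_filter]
  constructor
  · rintro ⟨htF, hzt⟩
    have htA : t ∈ (Finset.univ.erase z).powersetCard 3 := by
      rw [Finset.mem_powersetCard]
      refine ⟨fun a ha => Finset.mem_erase.mpr ⟨fun h => hzt (h ▸ ha), Finset.mem_univ a⟩,
        card_FT_three htF⟩
    exact ⟨htA, (mem_FT_iff_cnt_EZ htA).mp htF⟩
  · rintro ⟨htA, hodd⟩
    refine ⟨(mem_FT_iff_cnt_EZ htA).mpr hodd, fun hzt => ?_⟩
    rw [Finset.mem_powersetCard] at htA
    exact Finset.notMem_erase z Finset.univ (htA.1 hzt)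

lemma upper_bound (G : SimpleGraph V) (z : V) :
    ((FT G).filter (fun t => z ∉ t)).card ≤ (EZ G z).card * (Fintype.card V - 3) := by
  rw [FT_avoid_eq G z]
  set W := Finset.univ.erase z with hW
  have hWcard : W.card = Fintype.card V - 1 := by
    rw [hW, Finset.card_erase_of_mem (Finset.mem_univ z), Finset.card_univ]
  have h1 : ((W.powersetCard 3).filter (fun t => Odd (cnt (EZ G z) t))).card
      = ∑ t ∈ W.powersetCard 3, (if Odd (cnt (EZ G z) t) then 1 else 0) :=
    Finset.card_filter _ _
  have h2 : ∑ t ∈ W.powersetCard 3, (if Odd (cnt (EZ G z) t) then 1 else 0)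
      ≤ ∑ t ∈ W.powersetCard 3, cnt (EZ G z) t := by
    apply Finset.sum_le_sum
    intro t _
    by_cases h : Odd (cnt (EZ G z) t)
    · rw [if_pos h]; exact h.pos
    · rw [if_neg h]; exact Nat.zero_le _
  have h3 : ∑ t ∈ W.powersetCard 3, cnt (EZ G z) t = (EZ G z).card * (W.card - 2) :=
    sum_cnt W (EZ G z) EZ_two EZ_sub
  have h4 : W.card - 2 = Fintype.card V - 3 := by omega
  rw [h4] at h3
  omega

lemma lower_bound (G : SimpleGraph V) (z : V) :
    (EZ G z).card * (Fintype.card V - 3) ≤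
      ((FT G).filter (fun t => z ∉ t)).card + (EZ G z).card * ((EZ G z).card - 1) := by
  rw [FT_avoid_eq G z]
  set W := Finset.univ.erase z with hW
  set E := EZ G z with hEdef
  have hWcard : W.card = Fintype.card V - 1 := by
    rw [hW, Finset.card_erase_of_mem (Finset.mem_univ z), Finset.card_univ]
  have h3 : ∑ t ∈ W.powersetCard 3, cnt E t = E.card * (W.card - 2) :=
    sum_cnt W E EZ_two EZ_sub
  have h5 : ∑ t ∈ W.powersetCard 3, cnt E t ≤
      ∑ t ∈ W.powersetCard 3, ((if Odd (cnt E t) then 1 else 0) + 2 * (cnt E t).choose 2) := by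
    apply Finset.sum_le_sum
    intro t _
    rw [two_mul_choose_two]
    exact le_ind_add _
  have h6 : ∑ t ∈ W.powersetCard 3, ((if Odd (cnt E t) then 1 else 0) + 2 * (cnt E t).choose 2)
      = ((W.powersetCard 3).filter (fun t => Odd (cnt E t))).card
        + 2 * ∑ t ∈ W.powersetCard 3, (cnt E t).choose 2 := by
    rw [Finset.sum_add_distrib, Finset.mul_sum]
    congr 1
    exact (Finset.card_filter _ _).symm
  have h7 : ∑ t ∈ W.powersetCard 3, (cnt E t).choose 2 ≤ E.card.choose 2 :=
    sum_cnt_choose W E EZ_two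
  have h8 : 2 * E.card.choose 2 = E.card * (E.card - 1) := two_mul_choose_two _
  have h4 : W.card - 2 = Fintype.card V - 3 := by omega
  rw [h4] at h3
  omega

end Main

theorem even_case_gap_value_not_realisable
    (n : ℕ) (hn : 6 ≤ n) (hne : Even n) (s : ℕ)
    (hs : (s : ℤ) * ((n : ℤ) - 2) + 2 < ((s : ℤ) + 1) * ((n : ℤ) - s - 2))
    (hmax : ∀ t : ℕ, (t : ℤ) * ((n : ℤ) - 2) + 2 < ((t : ℤ) + 1) * ((n : ℤ) - t - 2) → t ≤ s) :
    Even (s * (n - 2) + 2) ∧ ∀ G : SimpleGraph (Fin n), fCount G ≠ s * (n - 2) + 2 := by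
  constructor
  · have h2 : Even (n - 2) := (Nat.even_sub (by omega)).mpr (by simp [hne])
    exact (h2.mul_left s).add (by norm_num)
  · intro G hG
    classical
    -- choose z with n * d z ≤ 3 * f
    have hsum := sum_card_mem G
    obtain ⟨z, hz⟩ : ∃ z : Fin n, n * ((FT G).filter (fun t => z ∈ t)).card
        ≤ 3 * (FT G).card := by
      by_contra hcon
      push_neg at hcon
      have hle : ∑ _z : Fin n, (3 * (FT G).card + 1) ≤
          ∑ z : Fin n, n * ((FT G).filter (fun t => z ∈ t)).card :=
        Finset.sum_le_sum (fun z _ => hcon z)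
      rw [Finset.sum_const, Finset.card_univ, Fintype.card_fin, smul_eq_mul,
        ← Finset.mul_sum, hsum] at hle
      nlinarith [hle]
    obtain ⟨m, hmdef⟩ : ∃ k, (EZ G z).card = k := ⟨_, rfl⟩
    obtain ⟨D, hDdef⟩ : ∃ k, ((FT G).filter (fun t => z ∉ t)).card = k := ⟨_, rfl⟩
    have hdz : ((FT G).filter (fun t => z ∈ t)).card = m := card_EZ.trans hmdef
    have hsplit : m + D = (FT G).card := by
      rw [← hdz, ← hDdef]
      exact Finset.card_filter_add_card_filter_not _
    have hU : D ≤ m * (n - 3) := by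
      have h := upper_bound G z
      rwa [Fintype.card_fin, hmdef, hDdef] at h
    have hL : m * (n - 3) ≤ D + m * (m - 1) := by
      have h := lower_bound G z
      rwa [Fintype.card_fin, hmdef, hDdef] at h
    have hf : (FT G).card = s * (n - 2) + 2 := by
      rw [← fCount_eq_FT]; exact hG
    rw [hdz] at hz
    rw [hf] at hz hsplit
    clear hdz hmdef hDdef hsum hG hmax hne
    -- pass to integers
    have hzint : (n : ℤ) * m ≤ 3 * ((s : ℤ) * ((n : ℤ) - 2) + 2) := by
      have h1 := hz
      have h2n : (2 : ℕ) ≤ n := by omega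
      have h1' : ((n * m : ℕ) : ℤ) ≤ ((3 * (s * (n - 2) + 2) : ℕ) : ℤ) := Nat.cast_le.mpr h1
      push_cast [Nat.cast_sub h2n] at h1'
      linarith
    have hFint : ((s : ℤ) * ((n : ℤ) - 2) + 2) = (m : ℤ) + (D : ℤ) := by
      have h2n : (2 : ℕ) ≤ n := by omega
      have heq : ((s * (n - 2) + 2 : ℕ) : ℤ) = (m : ℤ) + (D : ℤ) := by
        rw [← hsplit]; push_cast; ring
      rw [← heq]; push_cast [Nat.cast_sub h2n]; ring
    have hUint : (D : ℤ) ≤ (m : ℤ) * ((n : ℤ) - 3) := by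
      have h3n : (3 : ℕ) ≤ n := by omega
      calc (D : ℤ) ≤ ((m * (n - 3) : ℕ) : ℤ) := Nat.cast_le.mpr hU
        _ = (m : ℤ) * ((n : ℤ) - 3) := by push_cast [Nat.cast_sub h3n]; ring
    have hmm : ((m * (m - 1) : ℕ) : ℤ) = (m : ℤ) * ((m : ℤ) - 1) := by
      cases m with
      | zero => simp
      | succ k => push_cast [Nat.succ_sub_one]; ring
    have hLint : (m : ℤ) * ((n : ℤ) - 3) ≤ (D : ℤ) + (m : ℤ) * ((m : ℤ) - 1) := by
      have h3n : (3 : ℕ) ≤ n := by omega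
      calc (m : ℤ) * ((n : ℤ) - 3) = ((m * (n - 3) : ℕ) : ℤ) := by
            push_cast [Nat.cast_sub h3n]; ring
        _ ≤ ((D + m * (m - 1) : ℕ) : ℤ) := Nat.cast_le.mpr hL
        _ = (D : ℤ) + (m : ℤ) * ((m : ℤ) - 1) := by rw [Nat.cast_add, hmm]
    -- final arithmetic
    have hN6 : (6 : ℤ) ≤ (n : ℤ) := by exact_mod_cast hn
    have hS0 : (0 : ℤ) ≤ (s : ℤ) := Int.natCast_nonneg s
    have hM0 : (0 : ℤ) ≤ (m : ℤ) := Int.natCast_nonneg m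
    have hD0 : (0 : ℤ) ≤ (D : ℤ) := Int.natCast_nonneg D
    -- hs gives n ≥ s^2 + s + 5
    have hnlb : (s : ℤ) * s + s + 5 ≤ (n : ℤ) := by
      have h4 : (s:ℤ) * s + s + 4 < (n:ℤ) := by linarith [hs]
      have h5 := Int.lt_iff_add_one_le.mp h4
      linarith
    -- m ≥ s + 1
    have hMlb : (s : ℤ) + 1 ≤ (m : ℤ) := by
      by_contra hcon
      push_neg at hcon
      have hMS : (m : ℤ) ≤ (s : ℤ) := by linarith
      have e2 : (m:ℤ) * ((n:ℤ) - 2) ≤ (s:ℤ) * ((n:ℤ) - 2) :=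
        mul_le_mul_of_nonneg_right hMS (by linarith : (0:ℤ) ≤ (n:ℤ) - 2)
      linarith [hFint, hUint, e2, hD0]
    -- 3F ≤ n (n - s - 2)
    have h3F : 3 * ((s:ℤ) * ((n:ℤ) - 2) + 2) ≤ (n:ℤ) * ((n:ℤ) - s - 2) := by
      have p1 : (0:ℤ) ≤ (s:ℤ) * s - 3 * s + 3 := by
        have := sq_nonneg ((s:ℤ) - 1)
        have := sq_nonneg ((s:ℤ) - 2)
        linarith [sq_nonneg ((s:ℤ) - 1), sq_nonneg ((s:ℤ) - 2)]
      have q1 : (n:ℤ) * ((s:ℤ) * s + s + 5) ≤ (n:ℤ) * n :=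
        mul_le_mul_of_nonneg_left hnlb (by linarith : (0:ℤ) ≤ (n:ℤ))
      have q2 : 6 * ((s:ℤ) * s - 3 * s + 3) ≤ (n:ℤ) * ((s:ℤ) * s - 3 * s + 3) :=
        mul_le_mul_of_nonneg_right hN6 p1
      have q3 := sq_nonneg ((s:ℤ) - 1)
      linarith [q1, q2, q3]
    have hMub : (m : ℤ) ≤ (n:ℤ) - s - 2 := by
      have hle : (n:ℤ) * m ≤ (n:ℤ) * ((n:ℤ) - s - 2) := le_trans hzint h3F
      have hNpos : (0 : ℤ) < (n:ℤ) := by linarith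
      exact le_of_mul_le_mul_left hle hNpos
    have hkey : (0 : ℤ) ≤ ((m:ℤ) - s - 1) * ((n:ℤ) - s - 2 - (m:ℤ)) :=
      mul_nonneg (by linarith) (by linarith)
    linarith [hFint, hLint, hs, hkey, hD0]
end
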